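/- arXiv:2206.11214 — 7 statements merged into one kernel-verified Lean document; each statement's English description precedes it below -/
import Mathlib

section
/- Let α = sqrt(M / (2·(log(2/δ)/n + 2Aη))) for δ ∈ (0,1). Then the contaminated soft-truncation estimator μ̂_η = (α/n)·Σ_{i=1}^n ψ(X̃_i/α) satisfies |μ̂_η − μ| ≤ sqrt(2M·(log(2/δ)/n + 2Aη)) with probability at least 1 − δ. -/
open MeasureTheory Finset

lemma catoni_aux {Ω : Type*} {m0 : MeasurableSpace Ω} (P : Measure Ω) [IsProbabilityMeasure P]
    (ℱ : Filtration ℕ m0) (g : ℝ → ℝ) (hgm : Measurable g) (A : ℝ)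
    (hgA : ∀ x, |g x| ≤ A) (hg : ∀ x, Real.exp (g x) ≤ 1 + x + x ^ 2 / 2)
    (K : ℝ) (hK : 0 ≤ K) :
    ∀ (n : ℕ) (Y : ℕ → Ω → ℝ) (ν : ℕ → ℝ),
      (∀ t, StronglyMeasurable[ℱ t] (Y t)) →
      (∀ t ∈ Finset.Icc 1 n, Integrable (Y t) P) →
      (∀ t ∈ Finset.Icc 1 n, Integrable (fun ω => (Y t ω) ^ 2) P) →
      (∀ t ∈ Finset.Icc 1 n, P[Y t|ℱ (t - 1)] =ᵐ[P] fun _ => ν t) →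
      (∀ t ∈ Finset.Icc 1 n, ∀ᵐ ω ∂P, (P[fun ω => (Y t ω) ^ 2|ℱ (t - 1)]) ω ≤ K) →
      ∫ ω, Real.exp (∑ t ∈ Finset.Icc 1 n, (g (Y t ω) - ν t - K / 2)) ∂P ≤ 1 := by
  have hA : 0 ≤ A := le_trans (abs_nonneg _) (hgA 0)
  intro n
  induction n with
  | zero =>
      intro Y ν _ _ _ _ _
      simp
  | succ n ih =>
      intro Y ν hYm hYi hYi2 hc1 hc2
      have hsub : Finset.Icc 1 n ⊆ Finset.Icc 1 (n + 1) :=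
        Finset.Icc_subset_Icc le_rfl (Nat.le_succ n)
      have ihn : ∫ ω, Real.exp (∑ t ∈ Finset.Icc 1 n, (g (Y t ω) - ν t - K / 2)) ∂P ≤ 1 :=
        ih Y ν hYm (fun t ht => hYi t (hsub ht)) (fun t ht => hYi2 t (hsub ht))
          (fun t ht => hc1 t (hsub ht)) (fun t ht => hc2 t (hsub ht))
      have hmem : n + 1 ∈ Finset.Icc 1 (n + 1) := by simp
      set f : Ω → ℝ := fun ω => Real.exp (∑ t ∈ Finset.Icc 1 n, (g (Y t ω) - ν t - K / 2))
        with hf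
      set c : ℝ := ν (n + 1) + K / 2 with hc
      set h : Ω → ℝ := fun ω => Real.exp (g (Y (n + 1) ω) - c) with hh
      have hYmeas : ∀ t, Measurable (Y t) := fun t => ((hYm t).measurable).mono (ℱ.le t) le_rfl
      -- measurability of f wrt ℱ n
      have hfm : StronglyMeasurable[ℱ n] f := by
        apply (Measurable.stronglyMeasurable ?_)
        apply Measurable.exp
        apply Finset.measurable_sum
        intro t ht
        have h1 : Measurable[ℱ n] (Y t) :=
          ((hYm t).measurable).mono (ℱ.mono (Finset.mem_Icc.mp ht).2) le_rfl
        exact (((hgm.comp h1).sub measurable_const).sub measurable_const)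
      -- bounds
      have hfb : ∀ ω, ‖f ω‖ ≤ Real.exp (∑ t ∈ Finset.Icc 1 n, (A + |ν t| + K / 2)) := by
        intro ω
        rw [Real.norm_eq_abs, abs_of_pos (Real.exp_pos _), Real.exp_le_exp]
        apply Finset.sum_le_sum
        intro t _
        have := hgA (Y t ω)
        have h1 : g (Y t ω) ≤ A := (abs_le.mp this).2
        nlinarith [abs_nonneg (ν t), neg_abs_le (ν t)]
      have hfpos : ∀ ω, 0 ≤ f ω := fun ω => (Real.exp_pos _).le
      have hhb : ∀ ω, ‖h ω‖ ≤ Real.exp (A + |c|) := by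
        intro ω
        rw [Real.norm_eq_abs, abs_of_pos (Real.exp_pos _), Real.exp_le_exp]
        have := hgA (Y (n + 1) ω)
        have h2 : -c ≤ |c| := neg_le_abs _
        linarith [(abs_le.mp this).2]
      have hhm : Measurable h := by
        apply Measurable.exp
        exact (hgm.comp (hYmeas (n + 1))).sub measurable_const
      have hhi : Integrable h P :=
        Integrable.mono' (integrable_const (Real.exp (A + |c|)))
          hhm.aestronglyMeasurable (Filter.Eventually.of_forall hhb)
      have hfi : Integrable f P :=
        Integrable.mono' (integrable_const _)
          (hfm.mono (ℱ.le n)).aestronglyMeasurable (Filter.Eventually.of_forall hfb)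
      -- conditional expectation of h is ≤ 1 a.e.
      have key : P[h|ℱ n] ≤ᵐ[P] fun _ => (1 : ℝ) := by
        -- h = exp (-c) • e  where e ω = exp (g (Y (n+1) ω))
        set e : Ω → ℝ := fun ω => Real.exp (g (Y (n + 1) ω)) with he
        have hem : Measurable e := (hgm.comp (hYmeas (n + 1))).exp
        have heb : ∀ ω, ‖e ω‖ ≤ Real.exp A := by
          intro ω
          rw [Real.norm_eq_abs, abs_of_pos (Real.exp_pos _), Real.exp_le_exp]
          exact (abs_le.mp (hgA _)).2
        have hei : Integrable e P :=
          Integrable.mono' (integrable_const _) hem.aestronglyMeasurable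
            (Filter.Eventually.of_forall heb)
        have hq : Integrable (fun ω => 1 + Y (n + 1) ω + (Y (n + 1) ω) ^ 2 / 2) P := by
          apply Integrable.add
          · exact (integrable_const 1).add (hYi (n + 1) hmem)
          · exact (hYi2 (n + 1) hmem).div_const 2
        have hmono : P[e|ℱ n] ≤ᵐ[P]
            P[fun ω => 1 + Y (n + 1) ω + (Y (n + 1) ω) ^ 2 / 2|ℱ n] := by
          refine condExp_mono hei hq (Filter.Eventually.of_forall fun ω => ?_)
          exact hg (Y (n + 1) ω)
        have hsplit : P[fun ω => 1 + Y (n + 1) ω + (Y (n + 1) ω) ^ 2 / 2|ℱ n] ≤ᵐ[P]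
            fun _ => Real.exp c := by
          have h1 : P[fun ω => 1 + Y (n + 1) ω + (Y (n + 1) ω) ^ 2 / 2|ℱ n] =ᵐ[P]
              P[fun ω => 1 + Y (n + 1) ω|ℱ n] + P[fun ω => (Y (n + 1) ω) ^ 2 / 2|ℱ n] :=
            condExp_add ((integrable_const 1).add (hYi (n + 1) hmem))
              ((hYi2 (n + 1) hmem).div_const 2) (ℱ n)
          have h2 : P[fun ω => 1 + Y (n + 1) ω|ℱ n] =ᵐ[P]
              P[fun _ => (1 : ℝ)|ℱ n] + P[Y (n + 1)|ℱ n] :=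
            condExp_add (integrable_const 1) (hYi (n + 1) hmem) (ℱ n)
          have h3 : P[fun _ => (1 : ℝ)|ℱ n] =ᵐ[P] fun _ => (1 : ℝ) := by
            rw [condExp_const (ℱ.le n)]
          have h4 : P[Y (n + 1)|ℱ n] =ᵐ[P] fun _ => ν (n + 1) := by
            have := hc1 (n + 1) hmem
            simpa using this
          have h5 : P[fun ω => (Y (n + 1) ω) ^ 2 / 2|ℱ n] =ᵐ[P]
              fun ω => (P[fun ω => (Y (n + 1) ω) ^ 2|ℱ n]) ω / 2 := by
            have : (fun ω => (Y (n + 1) ω) ^ 2 / 2)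
                = (2 : ℝ)⁻¹ • fun ω => (Y (n + 1) ω) ^ 2 := by
              funext ω; simp [div_eq_inv_mul]
            rw [this]
            filter_upwards [condExp_smul (μ := P) (m := ℱ n) ((2 : ℝ)⁻¹)
              (fun ω => (Y (n + 1) ω) ^ 2)] with ω hω
            simp only [Pi.smul_apply, smul_eq_mul] at hω
            rw [hω]; ring
          have h6 := hc2 (n + 1) hmem
          have h6' : ∀ᵐ ω ∂P, (P[fun ω => (Y (n + 1) ω) ^ 2|ℱ n]) ω ≤ K := by simpa using h6
          filter_upwards [h1, h2, h3, h4, h5, h6'] with ω e1 e2 e3 e4 e5 e6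
          rw [e1]
          simp only [Pi.add_apply] at e1 e2 ⊢
          rw [e2, e3, e4, e5]
          have : 1 + ν (n + 1) + K / 2 ≤ Real.exp c := by
            rw [hc]
            have := Real.add_one_le_exp (ν (n + 1) + K / 2)
            linarith
          linarith
        -- now combine
        have hrw : h = Real.exp (-c) • e := by
          funext ω
          simp only [hh, he, Pi.smul_apply, smul_eq_mul, ← Real.exp_add]
          ring_nf
        have hsm : P[h|ℱ n] =ᵐ[P] Real.exp (-c) • P[e|ℱ n] := by
          rw [hrw]; exact condExp_smul _ _ _
        filter_upwards [hsm, hmono, hsplit] with ω e1 e2 e3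
        rw [e1]
        simp only [Pi.smul_apply, smul_eq_mul]
        calc Real.exp (-c) * (P[e|ℱ n]) ω ≤ Real.exp (-c) * Real.exp c := by
              apply mul_le_mul_of_nonneg_left _ (Real.exp_pos _).le
              exact le_trans e2 e3
          _ = 1 := by rw [← Real.exp_add]; simp
      -- pull-out property
      have hpull : P[fun ω => f ω * h ω|ℱ n] =ᵐ[P] fun ω => f ω * (P[h|ℱ n]) ω := by
        have := condExp_stronglyMeasurable_mul_of_bound (ℱ.le n) hfm hhi
          (Real.exp (∑ t ∈ Finset.Icc 1 n, (A + |ν t| + K / 2)))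
          (Filter.Eventually.of_forall hfb)
        filter_upwards [this] with ω hω
        exact hω
      -- integrability of f * P[h|ℱ n]
      have hfhi : Integrable (fun ω => f ω * h ω) P := by
        apply Integrable.mono' (integrable_const
          (Real.exp (∑ t ∈ Finset.Icc 1 n, (A + |ν t| + K / 2)) * Real.exp (A + |c|)))
          ((hfm.mono (ℱ.le n)).aestronglyMeasurable.mul hhm.aestronglyMeasurable)
        apply Filter.Eventually.of_forall
        intro ω
        show ‖f ω * h ω‖ ≤ _
        rw [norm_mul]
        exact mul_le_mul (hfb ω) (hhb ω) (norm_nonneg _) (Real.exp_pos _).le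
      have hgoal : (fun ω => Real.exp (∑ t ∈ Finset.Icc 1 (n + 1), (g (Y t ω) - ν t - K / 2)))
          = fun ω => f ω * h ω := by
        funext ω
        rw [Finset.sum_Icc_succ_top (Nat.one_le_iff_ne_zero.mpr (Nat.succ_ne_zero n))]
        rw [Real.exp_add]
        simp [hf, hh, hc]
        ring_nf
      rw [hgoal]
      calc ∫ ω, f ω * h ω ∂P
          = ∫ ω, (P[fun ω => f ω * h ω|ℱ n]) ω ∂P := (integral_condExp (ℱ.le n)).symm
        _ = ∫ ω, f ω * (P[h|ℱ n]) ω ∂P := integral_congr_ae hpull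
        _ ≤ ∫ ω, f ω ∂P := by
            apply integral_mono_ae _ hfi
            · filter_upwards [key] with ω hω
              calc f ω * (P[h|ℱ n]) ω ≤ f ω * 1 :=
                    mul_le_mul_of_nonneg_left hω (hfpos ω)
                _ = f ω := mul_one _
            · exact integrable_condExp.congr hpull
        _ ≤ 1 := ihn

lemma catoni_markov {Ω : Type*} {m0 : MeasurableSpace Ω} (P : Measure Ω)
    [IsProbabilityMeasure P] (F : Ω → ℝ)
    (hFi : Integrable (fun ω => Real.exp (F ω)) P)
    (hle : ∫ ω, Real.exp (F ω) ∂P ≤ 1) (L : ℝ) :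
    P {ω | L ≤ F ω} ≤ ENNReal.ofReal (Real.exp (-L)) := by
  have h := mul_meas_ge_le_integral_of_nonneg (μ := P)
    (Filter.Eventually.of_forall fun ω => (Real.exp_pos (F ω)).le) hFi (Real.exp L)
  have hset : {x | Real.exp L ≤ Real.exp (F x)} = {ω | L ≤ F ω} := by
    ext ω; simp [Real.exp_le_exp]
  rw [hset] at h
  have hfin : P {ω | L ≤ F ω} ≠ ⊤ := measure_ne_top _ _
  have htoReal : (P {ω | L ≤ F ω}).toReal ≤ Real.exp (-L) := by
    have h1 : Real.exp L * (P {ω | L ≤ F ω}).toReal ≤ 1 := le_trans h hle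
    have h2 : Real.exp L * Real.exp (-L) = 1 := by rw [← Real.exp_add]; simp
    nlinarith [Real.exp_pos L, ENNReal.toReal_nonneg (a := P {ω | L ≤ F ω})]
  calc P {ω | L ≤ F ω} = ENNReal.ofReal (P {ω | L ≤ F ω}).toReal :=
        (ENNReal.ofReal_toReal hfin).symm
    _ ≤ _ := ENNReal.ofReal_le_ofReal htoReal


/-- **Theorem 1 (deviation bound for the contaminated soft-truncation estimator).**
Under C1, C2, with `ψ` a bounded Catoni-type influence function, contamination affecting
at most `η n` of the indices, and
`α = sqrt(M / (2 (log(2/δ)/n + 2 A η)))`, the estimator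
`μ̂_η = (α/n) ∑ ψ(X̃_i / α)` satisfies
`|μ̂_η − μ| ≤ sqrt(2 M (log(2/δ)/n + 2 A η))` with probability at least `1 − δ`. -/
theorem catoni_contaminated_deviation_bound
    {Ω : Type*} {m0 : MeasurableSpace Ω} (P : Measure Ω) [IsProbabilityMeasure P]
    (ℱ : Filtration ℕ m0) (n : ℕ) (hn : 0 < n)
    (X Xt : ℕ → Ω → ℝ) (μt : ℕ → ℝ) (M : ℝ) (hM : 0 < M)
    (hAdapted : ∀ t, StronglyMeasurable[ℱ t] (X t))
    (hInt : ∀ t ∈ Finset.Icc 1 n, Integrable (X t) P)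
    (hInt2 : ∀ t ∈ Finset.Icc 1 n, Integrable (fun ω => (X t ω) ^ 2) P)
    -- C1 : conditional mean
    (hC1 : ∀ t ∈ Finset.Icc 1 n, P[X t|ℱ (t - 1)] =ᵐ[P] fun _ => μt t)
    -- C2 : conditional second moment bound
    (hC2 : ∀ t ∈ Finset.Icc 1 n,
      ∀ᵐ ω ∂P, (P[fun ω => (X t ω) ^ 2|ℱ (t - 1)]) ω ≤ M)
    -- influence function
    (ψ : ℝ → ℝ) (hψmono : Monotone ψ)
    (hψlb : ∀ x : ℝ, -Real.log (1 - x + x ^ 2 / 2) ≤ ψ x)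
    (hψub : ∀ x : ℝ, ψ x ≤ Real.log (1 + x + x ^ 2 / 2))
    (A : ℝ) (hA : 0 < A) (hψA : ∀ x : ℝ, |ψ x| ≤ A)
    -- contamination : at most η n indices are corrupted
    (η : ℝ) (hη : η ∈ Set.Ioo (0 : ℝ) 1)
    (hcontam : ∀ ω : Ω,
      (((Finset.Icc 1 n).filter (fun t => Xt t ω ≠ X t ω)).card : ℝ) ≤ η * n)
    -- confidence level and scale parameter
    (δ : ℝ) (hδ : δ ∈ Set.Ioo (0 : ℝ) 1)
    (α : ℝ)
    (hα : α = Real.sqrt (M / (2 * (Real.log (2 / δ) / n + 2 * A * η))))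
    (μbar : ℝ) (hμbar : μbar = (1 / n) * ∑ t ∈ Finset.Icc 1 n, μt t) :
    ENNReal.ofReal (1 - δ) ≤
      P {ω | |(α / n) * ∑ i ∈ Finset.Icc 1 n, ψ (Xt i ω / α) - μbar| ≤
        Real.sqrt (2 * M * (Real.log (2 / δ) / n + 2 * A * η))} := by
  obtain ⟨hδ0, hδ1⟩ := hδ
  obtain ⟨hη0, hη1⟩ := hη
  have hn' : (0 : ℝ) < n := Nat.cast_pos.mpr hn
  set L : ℝ := Real.log (2 / δ) with hLdef
  have hL : 0 < L := Real.log_pos (by rw [lt_div_iff₀ hδ0]; linarith)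
  set B : ℝ := L / n + 2 * A * η with hBdef
  have hB : 0 < B := by
    have h1 : 0 < L / n := div_pos hL hn'
    have h2 : 0 < 2 * A * η := by positivity
    rw [hBdef]; exact add_pos h1 h2
  have hαpos : 0 < α := by
    rw [hα]; exact Real.sqrt_pos.mpr (by positivity)
  have hα2 : α ^ 2 = M / (2 * B) := by
    rw [hα, Real.sq_sqrt (by positivity)]
  set K : ℝ := (α⁻¹) ^ 2 * M with hKdef
  have hK0 : 0 ≤ K := by positivity
  have hK2B : K = 2 * B := by
    have h1 : α ^ 2 * (2 * B) = M := by rw [hα2]; field_simp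
    rw [hKdef]
    field_simp
    linarith [h1]
  -- conditional moment helpers
  have hsmul : ∀ (r : ℝ), ∀ t ∈ Finset.Icc 1 n,
      P[(fun ω => r * X t ω)|ℱ (t - 1)] =ᵐ[P] fun _ => r * μt t := by
    intro r t ht
    have h0 : (fun ω => r * X t ω) = r • X t := by funext ω; simp
    rw [h0]
    filter_upwards [condExp_smul (μ := P) (m := ℱ (t - 1)) r (X t), hC1 t ht] with ω h1 h2
    rw [h1]
    simp [h2]
  have hsq : ∀ (r : ℝ), ∀ t ∈ Finset.Icc 1 n,
      ∀ᵐ ω ∂P, (P[fun ω => (r * X t ω) ^ 2|ℱ (t - 1)]) ω ≤ r ^ 2 * M := by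
    intro r t ht
    have h0 : (fun ω => (r * X t ω) ^ 2) = (r ^ 2) • fun ω => (X t ω) ^ 2 := by
      funext ω; simp [mul_pow]
    rw [h0]
    filter_upwards [condExp_smul (μ := P) (m := ℱ (t - 1)) (r ^ 2)
      (fun ω => (X t ω) ^ 2), hC2 t ht] with ω h1 h2
    rw [h1]
    simp only [Pi.smul_apply, smul_eq_mul]
    exact mul_le_mul_of_nonneg_left h2 (sq_nonneg r)
  -- the two supermartingale bounds
  have hq : ∀ x : ℝ, (0 : ℝ) < 1 + x + x ^ 2 / 2 := by
    intro x; nlinarith [sq_nonneg (x + 1)]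
  have hg1 : ∀ x : ℝ, Real.exp (ψ x) ≤ 1 + x + x ^ 2 / 2 := by
    intro x
    calc Real.exp (ψ x) ≤ Real.exp (Real.log (1 + x + x ^ 2 / 2)) :=
          Real.exp_le_exp.mpr (hψub x)
      _ = 1 + x + x ^ 2 / 2 := Real.exp_log (hq x)
  set g2 : ℝ → ℝ := fun x => -ψ (-x) with hg2def
  have hg2 : ∀ x : ℝ, Real.exp (g2 x) ≤ 1 + x + x ^ 2 / 2 := by
    intro x
    have h1 := hψlb (-x)
    have h2 : -ψ (-x) ≤ Real.log (1 + x + x ^ 2 / 2) := by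
      have : (1 : ℝ) - (-x) + (-x) ^ 2 / 2 = 1 + x + x ^ 2 / 2 := by ring
      rw [this] at h1; linarith
    calc Real.exp (g2 x) ≤ Real.exp (Real.log (1 + x + x ^ 2 / 2)) :=
          Real.exp_le_exp.mpr h2
      _ = 1 + x + x ^ 2 / 2 := Real.exp_log (hq x)
  have hg2A : ∀ x, |g2 x| ≤ A := by intro x; rw [hg2def]; simpa using hψA (-x)
  have hg2m : Measurable g2 := (hψmono.measurable.comp measurable_neg).neg
  -- apply aux to get integral bounds
  have hYm : ∀ (r : ℝ) t, StronglyMeasurable[ℱ t] (fun ω => r * X t ω) :=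
    fun r t => (hAdapted t).const_mul _
  have hYi : ∀ (r : ℝ), ∀ t ∈ Finset.Icc 1 n, Integrable (fun ω => r * X t ω) P :=
    fun r t ht => (hInt t ht).const_mul r
  have hYi2 : ∀ (r : ℝ), ∀ t ∈ Finset.Icc 1 n,
      Integrable (fun ω => (r * X t ω) ^ 2) P := by
    intro r t ht
    have h0 : (fun ω => (r * X t ω) ^ 2) = fun ω => r ^ 2 * (X t ω) ^ 2 := by
      funext ω; ring
    rw [h0]
    exact (hInt2 t ht).const_mul _
  have I1 : ∫ ω, Real.exp (∑ t ∈ Finset.Icc 1 n,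
      (ψ (α⁻¹ * X t ω) - α⁻¹ * μt t - K / 2)) ∂P ≤ 1 :=
    catoni_aux P ℱ ψ hψmono.measurable A hψA hg1 K hK0 n
      (fun t => fun ω => α⁻¹ * X t ω) (fun t => α⁻¹ * μt t)
      (fun t => hYm α⁻¹ t) (hYi α⁻¹) (hYi2 α⁻¹) (hsmul α⁻¹)
      (by
        intro t ht
        filter_upwards [hsq α⁻¹ t ht] with ω hω
        rwa [hKdef])
  have I2 : ∫ ω, Real.exp (∑ t ∈ Finset.Icc 1 n,
      (g2 ((-α⁻¹) * X t ω) - (-α⁻¹) * μt t - K / 2)) ∂P ≤ 1 :=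
    catoni_aux P ℱ g2 hg2m A hg2A hg2 K hK0 n
      (fun t => fun ω => (-α⁻¹) * X t ω) (fun t => (-α⁻¹) * μt t)
      (fun t => hYm (-α⁻¹) t) (hYi (-α⁻¹)) (hYi2 (-α⁻¹)) (hsmul (-α⁻¹))
      (by
        intro t ht
        filter_upwards [hsq (-α⁻¹) t ht] with ω hω
        rwa [hKdef, ← neg_sq])
  -- rewrite the second sum
  set S1 : Ω → ℝ := fun ω => ∑ t ∈ Finset.Icc 1 n,
    (ψ (α⁻¹ * X t ω) - α⁻¹ * μt t - K / 2) with hS1def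
  set S2 : Ω → ℝ := fun ω => ∑ t ∈ Finset.Icc 1 n,
    (-ψ (α⁻¹ * X t ω) + α⁻¹ * μt t - K / 2) with hS2def
  have hS2eq : (fun ω => Real.exp (∑ t ∈ Finset.Icc 1 n,
      (g2 ((-α⁻¹) * X t ω) - (-α⁻¹) * μt t - K / 2))) = fun ω => Real.exp (S2 ω) := by
    funext ω
    congr 1
    refine Finset.sum_congr rfl fun t ht => ?_
    rw [hg2def]
    simp only [neg_mul, neg_neg]
    ring
  rw [hS2eq] at I2
  -- integrability of the exponentials
  have hintexp : ∀ (F : Ω → ℝ) (C : ℝ), Measurable F → (∀ ω, F ω ≤ C) →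
      Integrable (fun ω => Real.exp (F ω)) P := by
    intro F C hFm hFC
    exact Integrable.mono' (integrable_const (Real.exp C))
      hFm.exp.aestronglyMeasurable
      (Filter.Eventually.of_forall fun ω => by
        rw [Real.norm_eq_abs, abs_of_pos (Real.exp_pos _)]
        exact Real.exp_le_exp.mpr (hFC ω))
  have hψmeas : Measurable ψ := hψmono.measurable
  have hXmeas : ∀ t, Measurable (X t) := fun t =>
    ((hAdapted t).measurable).mono (ℱ.le t) le_rfl
  have hS1m : Measurable S1 := by
    apply Finset.measurable_sum
    intro t _
    exact ((hψmeas.comp ((hXmeas t).const_mul _)).sub measurable_const).sub measurable_const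
  have hS2m : Measurable S2 := by
    apply Finset.measurable_sum
    intro t _
    exact (((hψmeas.comp ((hXmeas t).const_mul _)).neg.add measurable_const).sub
      measurable_const)
  set C0 : ℝ := ∑ t ∈ Finset.Icc 1 n, (A + |α⁻¹ * μt t| + K / 2) with hC0def
  have hS1b : ∀ ω, S1 ω ≤ C0 := by
    intro ω
    apply Finset.sum_le_sum
    intro t _
    have h1 := (abs_le.mp (hψA (α⁻¹ * X t ω))).2
    have h2 := neg_le_abs (α⁻¹ * μt t)
    linarith
  have hS2b : ∀ ω, S2 ω ≤ C0 := by
    intro ω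
    apply Finset.sum_le_sum
    intro t _
    have h1 := (abs_le.mp (hψA (α⁻¹ * X t ω))).1
    have h2 := le_abs_self (α⁻¹ * μt t)
    linarith
  -- Markov
  have hexp : Real.exp (-L) = δ / 2 := by
    rw [hLdef, Real.exp_neg, Real.exp_log (by positivity), inv_div]
  have hM1 : P {ω | L ≤ S1 ω} ≤ ENNReal.ofReal (δ / 2) := by
    rw [← hexp]; exact catoni_markov P S1 (hintexp S1 C0 hS1m hS1b) I1 L
  have hM2 : P {ω | L ≤ S2 ω} ≤ ENNReal.ofReal (δ / 2) := by
    rw [← hexp]; exact catoni_markov P S2 (hintexp S2 C0 hS2m hS2b) I2 L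
  -- union bound
  set E1 : Set Ω := {ω | L ≤ S1 ω} with hE1def
  set E2 : Set Ω := {ω | L ≤ S2 ω} with hE2def
  have hE1m : MeasurableSet E1 := measurableSet_le measurable_const hS1m
  have hE2m : MeasurableSet E2 := measurableSet_le measurable_const hS2m
  have hunion : P (E1 ∪ E2) ≤ ENNReal.ofReal δ := by
    calc P (E1 ∪ E2) ≤ P E1 + P E2 := measure_union_le _ _
      _ ≤ ENNReal.ofReal (δ / 2) + ENNReal.ofReal (δ / 2) := add_le_add hM1 hM2
      _ = ENNReal.ofReal δ := by
          rw [← ENNReal.ofReal_add (by positivity) (by positivity)]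
          norm_num
  have hcompl : ENNReal.ofReal (1 - δ) ≤ P ((E1 ∪ E2)ᶜ) := by
    rw [measure_compl (hE1m.union hE2m) (measure_ne_top _ _), measure_univ]
    rw [ENNReal.ofReal_sub _ hδ0.le, ENNReal.ofReal_one]
    exact tsub_le_tsub_left hunion 1
  refine le_trans hcompl (measure_mono ?_)
  -- deterministic inclusion
  intro ω hω
  simp only [Set.mem_compl_iff, Set.mem_union, hE1def, hE2def, Set.mem_setOf_eq,
    not_or, not_le] at hω
  obtain ⟨hω1, hω2⟩ := hω
  simp only [Set.mem_setOf_eq]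
  -- notation
  set T : ℝ := ∑ t ∈ Finset.Icc 1 n, ψ (α⁻¹ * X t ω) with hTdef
  set Tt : ℝ := ∑ t ∈ Finset.Icc 1 n, ψ (α⁻¹ * Xt t ω) with hTtdef
  set m : ℝ := ∑ t ∈ Finset.Icc 1 n, μt t with hmdef
  have hcard : ((Finset.Icc 1 n).card : ℝ) = n := by
    simp [Nat.card_Icc]
  have hS1ω : S1 ω = T - α⁻¹ * m - n * (K / 2) := by
    rw [hS1def]
    simp only
    rw [Finset.sum_sub_distrib, Finset.sum_sub_distrib, Finset.sum_const,
      ← Finset.mul_sum, nsmul_eq_mul]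
    rw [hcard]
  have hS2ω : S2 ω = -T + α⁻¹ * m - n * (K / 2) := by
    rw [hS2def]
    simp only
    rw [Finset.sum_sub_distrib, Finset.sum_add_distrib, Finset.sum_const,
      Finset.sum_neg_distrib, ← Finset.mul_sum, nsmul_eq_mul]
    rw [hcard]
  rw [hS1ω] at hω1
  rw [hS2ω] at hω2
  -- contamination bound
  have hdiff : |Tt - T| ≤ 2 * A * (η * n) := by
    have h1 : Tt - T = ∑ t ∈ Finset.Icc 1 n,
        (ψ (α⁻¹ * Xt t ω) - ψ (α⁻¹ * X t ω)) := by
      rw [Finset.sum_sub_distrib]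
    rw [h1]
    have hfilter : ∑ t ∈ Finset.Icc 1 n, |ψ (α⁻¹ * Xt t ω) - ψ (α⁻¹ * X t ω)|
        = ∑ t ∈ (Finset.Icc 1 n).filter (fun t => Xt t ω ≠ X t ω),
            |ψ (α⁻¹ * Xt t ω) - ψ (α⁻¹ * X t ω)| := by
      refine (Finset.sum_filter_of_ne ?_).symm
      intro t _ hne heq
      apply hne
      rw [heq]
      simp
    calc |∑ t ∈ Finset.Icc 1 n, (ψ (α⁻¹ * Xt t ω) - ψ (α⁻¹ * X t ω))|
        ≤ ∑ t ∈ Finset.Icc 1 n, |ψ (α⁻¹ * Xt t ω) - ψ (α⁻¹ * X t ω)| :=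
          Finset.abs_sum_le_sum_abs _ _
      _ = ∑ t ∈ (Finset.Icc 1 n).filter (fun t => Xt t ω ≠ X t ω),
            |ψ (α⁻¹ * Xt t ω) - ψ (α⁻¹ * X t ω)| := hfilter
      _ ≤ ((Finset.Icc 1 n).filter (fun t => Xt t ω ≠ X t ω)).card • (2 * A) := by
          apply Finset.sum_le_card_nsmul
          intro t _
          calc |ψ (α⁻¹ * Xt t ω) - ψ (α⁻¹ * X t ω)|
              ≤ |ψ (α⁻¹ * Xt t ω)| + |ψ (α⁻¹ * X t ω)| := abs_sub _ _
            _ ≤ A + A := add_le_add (hψA _) (hψA _)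
            _ = 2 * A := by ring
      _ = (((Finset.Icc 1 n).filter (fun t => Xt t ω ≠ X t ω)).card : ℝ) * (2 * A) := by
          rw [nsmul_eq_mul]
      _ ≤ (η * n) * (2 * A) :=
          mul_le_mul_of_nonneg_right (hcontam ω) (by positivity)
      _ = 2 * A * (η * n) := by ring
  -- combine
  have habs : |T - α⁻¹ * m| < L + n * (K / 2) := abs_lt.mpr ⟨by linarith, by linarith⟩
  have habs2 : |Tt - α⁻¹ * m| ≤ 2 * A * (η * n) + (L + n * (K / 2)) := by
    calc |Tt - α⁻¹ * m| = |(Tt - T) + (T - α⁻¹ * m)| := by ring_nf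
      _ ≤ |Tt - T| + |T - α⁻¹ * m| := abs_add_le _ _
      _ ≤ 2 * A * (η * n) + (L + n * (K / 2)) := add_le_add hdiff habs.le
  -- final algebra
  have hTtgoal : ∑ i ∈ Finset.Icc 1 n, ψ (Xt i ω / α) = Tt := by
    rw [hTtdef]
    refine Finset.sum_congr rfl fun t _ => ?_
    rw [div_eq_inv_mul]
  rw [hTtgoal]
  have hkey : (α / n) * Tt - μbar = (α / n) * (Tt - α⁻¹ * m) := by
    rw [hμbar]
    field_simp
  rw [hkey, abs_mul, abs_of_pos (by positivity : (0:ℝ) < α / n)]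
  have hbound : (α / n) * |Tt - α⁻¹ * m| ≤ (α / n) * (2 * A * (η * n) + (L + n * (K / 2))) :=
    mul_le_mul_of_nonneg_left habs2 (by positivity)
  have hRval : (α / n) * (2 * A * (η * n) + (L + n * (K / 2))) = 2 * α * B := by
    rw [hK2B, hBdef]
    field_simp
    ring
  have hsqrt : Real.sqrt (2 * M * B) = 2 * α * B := by
    have hM' : α ^ 2 * (2 * B) = M := by
      rw [hα2]; exact div_mul_cancel₀ M (ne_of_gt (by linarith : (0:ℝ) < 2 * B))
    have h1 : (2 * α * B) ^ 2 = 2 * M * B := by linear_combination (2 * B) * hM'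
    rw [← h1, Real.sqrt_sq (by positivity)]
  rw [hsqrt]
  linarith [hbound, hRval.le]
end

section
/- Suppose μ_t = μ for all t ∈ [n] and the uncontaminated variables have conditional variance bounded by V, i.e., E[(X_t − μ)² | F_{t−1}] ≤ V almost surely. Fix 0 < k < n and δ ∈ (0,1), and set ϑ_k := sqrt(2M·(log(4/δ)/k + 2Aη)). Define the two-stage estimator: (i) the shifting device μ̄_η := (ᾱ/k)·Σ_{i=1}^k ψ(X̃_i/ᾱ) with ᾱ = sqrt(M / (2·(log(4/δ)/k + 2Aη))); (ii) the shifted estimate μ'_η := (α'/(n−k))·Σ_{i=k+1}^n ψ((X̃_i − μ̄_η)/α') with α' = sqrt((V + ϑ_k²) / (2·(log(4/δ)/(n−k) + 2Aη))); (iii) μ̂_η := μ'_η + μ̄_η. Then |μ̂_η − μ| ≤ sqrt(2·(V + ϑ_k²)·(log(4/δ)/(n−k) + 2Aη)) with probability at least 1 − δ. -/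
open MeasureTheory Finset
open scoped ENNReal



lemma qpos' (u : ℝ) : (0:ℝ) < 1 - u + u ^ 2 / 2 := by nlinarith [sq_nonneg (u-1)]

lemma qpos (u : ℝ) : (0:ℝ) < 1 + u + u ^ 2 / 2 := by nlinarith [sq_nonneg (u+1)]

lemma shift_le (a : ℝ) {σ θ : ℝ} (h : σ ≤ θ) :
    σ + Real.log (1 + (a - σ) + (a - σ) ^ 2 / 2) ≤
      θ + Real.log (1 + (a - θ) + (a - θ) ^ 2 / 2) := by
  have key : ∀ x : ℝ, HasDerivAt (fun y : ℝ => y + Real.log (1 + (a - y) + (a - y) ^ 2 / 2))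
      (1 + (-1 - (a - x)) / (1 + (a - x) + (a - x) ^ 2 / 2)) x := by
    intro x
    have h1 : HasDerivAt (fun y : ℝ => a - y) (-1) x := by
      exact (hasDerivAt_id' x).const_sub a
    have h2 : HasDerivAt (fun y : ℝ => 1 + (a - y) + (a - y) ^ 2 / 2)
        (-1 - (a - x)) x := by
      have := ((hasDerivAt_const x (1:ℝ)).add h1).add ((h1.pow 2).div_const 2)
      convert this using 1
      · rfl
      · rfl
      · rfl
      · simp only [Nat.cast_ofNat, Nat.add_one_sub_one, pow_one]
        ring
    have h3 := (h2.log (ne_of_gt (qpos (a - x))))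
    exact (hasDerivAt_id' x).add h3
  have hmono : Monotone (fun y : ℝ => y + Real.log (1 + (a - y) + (a - y) ^ 2 / 2)) := by
    apply monotone_of_deriv_nonneg
    · exact fun x => (key x).differentiableAt
    · intro x
      rw [(key x).deriv]
      have hq := qpos (a - x)
      have : 1 + (-1 - (a - x)) / (1 + (a - x) + (a - x) ^ 2 / 2)
          = ((a - x) ^ 2 / 2) / (1 + (a - x) + (a - x) ^ 2 / 2) := by
        rw [eq_div_iff hq.ne', add_mul, one_mul, div_mul_cancel₀ _ hq.ne']
        ring
      rw [this]
      positivity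
  exact hmono h



lemma step_lemma {Ω : Type*} {m m0 : MeasurableSpace Ω} (hm : m ≤ m0)
    (P : Measure Ω) [IsProbabilityMeasure P]
    (Q : Ω → ℝ≥0∞) (hQ : Measurable[m] Q) (hQfin : ∀ ω, Q ω ≠ ⊤)
    (f : Ω → ℝ) (hfnn : ∀ ω, 0 ≤ f ω) (hfint : Integrable f P)
    (ρ : ℝ) (hρnn : 0 ≤ ρ) (hρ : P[f|m] ≤ᵐ[P] fun _ => ρ) :
    ∫⁻ ω, Q ω * ENNReal.ofReal (f ω) ∂P ≤ ENNReal.ofReal ρ * ∫⁻ ω, Q ω ∂P := by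
  have hQ0 : Measurable[m0] Q := hQ.mono hm le_rfl
  have hofReal : AEMeasurable (fun ω => ENNReal.ofReal (f ω)) P :=
    ENNReal.measurable_ofReal.comp_aemeasurable hfint.aemeasurable
  -- the per-truncation bound
  have main : ∀ N : ℕ, ∫⁻ ω, (Q ω ⊓ N) * ENNReal.ofReal (f ω) ∂P
      ≤ ENNReal.ofReal ρ * ∫⁻ ω, Q ω ∂P := by
    intro N
    set G : Ω → ℝ := fun ω => (Q ω ⊓ N).toReal with hG
    have hGfin : ∀ ω, Q ω ⊓ N ≠ ⊤ := fun ω =>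
      ne_top_of_le_ne_top (ENNReal.natCast_ne_top N) (min_le_right _ _)
    have hG_sm : StronglyMeasurable[m] G :=
      ((hQ.inf measurable_const).ennreal_toReal).stronglyMeasurable
    have hG_aesm : AEStronglyMeasurable G P :=
      (hG_sm.mono hm).aestronglyMeasurable
    have hGnn : ∀ ω, 0 ≤ G ω := fun ω => ENNReal.toReal_nonneg
    have hGbd : ∀ ω, ‖G ω‖ ≤ (N : ℝ) := by
      intro ω
      rw [Real.norm_of_nonneg (hGnn ω)]
      have : (Q ω ⊓ N) ≤ (N : ℝ≥0∞) := min_le_right _ _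
      simpa using ENNReal.toReal_mono (ENNReal.natCast_ne_top N) this
    have hGint : Integrable G P :=
      (integrable_const (N : ℝ)).mono' hG_aesm (Filter.Eventually.of_forall hGbd)
    have hGfint : Integrable (G * f) P :=
      hfint.bdd_mul hG_aesm (Filter.Eventually.of_forall hGbd)
    -- pointwise identity
    have hpt : ∀ ω, (Q ω ⊓ N) * ENNReal.ofReal (f ω) = ENNReal.ofReal ((G * f) ω) := by
      intro ω
      rw [Pi.mul_apply, ENNReal.ofReal_mul (hGnn ω), hG, ENNReal.ofReal_toReal (hGfin ω)]
    have h1 : ∫⁻ ω, (Q ω ⊓ N) * ENNReal.ofReal (f ω) ∂P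
        = ENNReal.ofReal (∫ ω, (G * f) ω ∂P) := by
      rw [ofReal_integral_eq_lintegral_ofReal hGfint
        (Filter.Eventually.of_forall fun ω => mul_nonneg (hGnn ω) (hfnn ω))]
      exact lintegral_congr hpt
    have h2 : ∫ ω, (G * f) ω ∂P = ∫ ω, (G * P[f|m]) ω ∂P := by
      calc ∫ ω, (G * f) ω ∂P = ∫ ω, (P[G * f|m]) ω ∂P := (integral_condExp hm).symm
        _ = ∫ ω, (G * P[f|m]) ω ∂P :=
            integral_congr_ae (condExp_mul_of_stronglyMeasurable_left hG_sm hGfint hfint)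
    have h3 : ∫ ω, (G * P[f|m]) ω ∂P ≤ ∫ ω, G ω * ρ ∂P := by
      apply integral_mono_ae
      · exact integrable_condExp.bdd_mul (f := G) (c := (N:ℝ)) hG_aesm
          (Filter.Eventually.of_forall hGbd)
      · exact hGint.mul_const ρ
      · filter_upwards [hρ] with ω hω
        exact mul_le_mul_of_nonneg_left hω (hGnn ω)
    have h4 : ∫ ω, G ω * ρ ∂P = ρ * ∫ ω, G ω ∂P := by
      rw [integral_mul_const]; ring
    have h5 : ENNReal.ofReal (∫ ω, G ω ∂P) ≤ ∫⁻ ω, Q ω ∂P := by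
      rw [ofReal_integral_eq_lintegral_ofReal hGint
        (Filter.Eventually.of_forall hGnn)]
      apply lintegral_mono
      intro ω
      show ENNReal.ofReal (G ω) ≤ Q ω
      rw [ENNReal.ofReal_toReal (hGfin ω)]
      exact min_le_left _ _
    calc ∫⁻ ω, (Q ω ⊓ N) * ENNReal.ofReal (f ω) ∂P
        = ENNReal.ofReal (∫ ω, (G * f) ω ∂P) := h1
      _ ≤ ENNReal.ofReal (ρ * ∫ ω, G ω ∂P) := by
          apply ENNReal.ofReal_le_ofReal
          rw [← h4]; rw [h2]; exact h3
      _ = ENNReal.ofReal ρ * ENNReal.ofReal (∫ ω, G ω ∂P) := by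
          rw [ENNReal.ofReal_mul hρnn]
      _ ≤ ENNReal.ofReal ρ * ∫⁻ ω, Q ω ∂P := by
          exact mul_le_mul_right h5 _
  -- monotone convergence
  have hsup : ∀ ω, (⨆ N : ℕ, (Q ω ⊓ N)) = Q ω := by
    intro ω
    apply le_antisymm (iSup_le fun N => min_le_left _ _)
    obtain ⟨N, hN⟩ := ENNReal.exists_nat_gt (hQfin ω)
    calc Q ω = Q ω ⊓ N := (min_eq_left hN.le).symm
      _ ≤ ⨆ N : ℕ, (Q ω ⊓ N) := le_iSup (fun N : ℕ => Q ω ⊓ N) N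
  have hmct : ∫⁻ ω, Q ω * ENNReal.ofReal (f ω) ∂P
      = ⨆ N : ℕ, ∫⁻ ω, (Q ω ⊓ N) * ENNReal.ofReal (f ω) ∂P := by
    rw [← lintegral_iSup']
    · apply lintegral_congr
      intro ω
      rw [← ENNReal.iSup_mul, hsup ω]
    · intro N
      exact ((hQ0.inf measurable_const).aemeasurable.mul hofReal)
    · apply Filter.Eventually.of_forall
      intro ω N M hNM
      exact mul_le_mul_left (inf_le_inf_left _ (by exact_mod_cast Nat.cast_le.2 hNM)) _
  rw [hmct]
  exact iSup_le main


lemma core_lemma {Ω : Type*} {m0 : MeasurableSpace Ω}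
    (P : Measure Ω) [IsProbabilityMeasure P] (ℱ : Filtration ℕ m0)
    (f : ℕ → Ω → ℝ) (a : ℕ) (ρ : ℝ) (hρnn : 0 ≤ ρ) (b : ℕ)
    (hf : ∀ t ∈ Finset.Icc (a+1) b, StronglyMeasurable[ℱ t] (f t))
    (hnn : ∀ t ∈ Finset.Icc (a+1) b, ∀ ω, 0 ≤ f t ω)
    (hint : ∀ t ∈ Finset.Icc (a+1) b, Integrable (f t) P)
    (hρ : ∀ t ∈ Finset.Icc (a+1) b, P[f t|ℱ (t-1)] ≤ᵐ[P] fun _ => ρ) :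
    ∫⁻ ω, ∏ t ∈ Finset.Icc (a+1) b, ENNReal.ofReal (f t ω) ∂P
      ≤ ENNReal.ofReal ρ ^ (b - a) := by
  induction b with
  | zero =>
      have he : Finset.Icc (a+1) 0 = ∅ := by
        apply Finset.Icc_eq_empty; omega
      simp [he]
  | succ b ih =>
      by_cases hab : b + 1 ≤ a
      · have he : Finset.Icc (a+1) (b+1) = ∅ := by
          apply Finset.Icc_eq_empty; omega
        rw [show b + 1 - a = 0 by omega]
        simp [he]
      · have hab' : a ≤ b := by omega
        have hsub : Finset.Icc (a+1) b ⊆ Finset.Icc (a+1) (b+1) :=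
          Finset.Icc_subset_Icc_right (by omega)
        have hins : Finset.Icc (a+1) (b+1) = insert (b+1) (Finset.Icc (a+1) b) := by
          ext x
          simp only [Finset.mem_Icc, Finset.mem_insert]
          omega
        have hnotmem : b + 1 ∉ Finset.Icc (a+1) b := by
          simp [Finset.mem_Icc]
        have hmem : b + 1 ∈ Finset.Icc (a+1) (b+1) := by
          simp [Finset.mem_Icc]; omega
        set Q : Ω → ℝ≥0∞ := fun ω => ∏ t ∈ Finset.Icc (a+1) b, ENNReal.ofReal (f t ω)
          with hQdef
        have hQ : Measurable[ℱ b] Q := by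
          apply Finset.measurable_prod
          intro t ht
          have h1 : StronglyMeasurable[ℱ b] (f t) :=
            (hf t (hsub ht)).mono (ℱ.mono (Finset.mem_Icc.1 ht).2)
          exact ENNReal.measurable_ofReal.comp h1.measurable
        have hQfin : ∀ ω, Q ω ≠ ⊤ := by
          intro ω
          exact (ENNReal.prod_lt_top (fun t _ => ENNReal.ofReal_lt_top)).ne
        have hstep := step_lemma (ℱ.le b) P Q hQ hQfin (f (b+1))
          (hnn (b+1) hmem) (hint (b+1) hmem) ρ hρnn
          (by simpa using hρ (b+1) hmem)
        have heq : ∫⁻ ω, ∏ t ∈ Finset.Icc (a+1) (b+1), ENNReal.ofReal (f t ω) ∂P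
            = ∫⁻ ω, Q ω * ENNReal.ofReal (f (b+1) ω) ∂P := by
          apply lintegral_congr
          intro ω
          rw [hins, Finset.prod_insert hnotmem, mul_comm]
        have hIH := ih (fun t ht => hf t (hsub ht)) (fun t ht => hnn t (hsub ht))
          (fun t ht => hint t (hsub ht)) (fun t ht => hρ t (hsub ht))
        calc ∫⁻ ω, ∏ t ∈ Finset.Icc (a+1) (b+1), ENNReal.ofReal (f t ω) ∂P
            = ∫⁻ ω, Q ω * ENNReal.ofReal (f (b+1) ω) ∂P := heq
          _ ≤ ENNReal.ofReal ρ * ∫⁻ ω, Q ω ∂P := hstep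
          _ ≤ ENNReal.ofReal ρ * ENNReal.ofReal ρ ^ (b - a) :=
              mul_le_mul_right hIH _
          _ = ENNReal.ofReal ρ ^ (b + 1 - a) := by
              rw [show b + 1 - a = (b - a) + 1 by omega, pow_succ, mul_comm]


lemma condexp_quad {Ω : Type*} {m m0 : MeasurableSpace Ω} (hm : m ≤ m0)
    (P : Measure Ω) [IsProbabilityMeasure P]
    (Y : Ω → ℝ) (hYint : Integrable Y P) (hY2int : Integrable (fun ω => Y ω ^ 2) P)
    (μK : ℝ) (hμ : P[Y|m] =ᵐ[P] fun _ => μK)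
    (K : ℝ) (hK : ∀ᵐ ω ∂P, (P[fun ω => Y ω ^ 2|m]) ω ≤ K)
    (c₀ c₁ c₂ : ℝ) (hc₂ : 0 ≤ c₂) :
    P[fun ω => c₀ + c₁ * Y ω + c₂ * Y ω ^ 2|m] ≤ᵐ[P] fun _ => c₀ + c₁ * μK + c₂ * K := by
  have e : (fun ω => c₀ + c₁ * Y ω + c₂ * Y ω ^ 2)
      = ((fun _ : Ω => c₀) + c₁ • Y) + c₂ • (fun ω => Y ω ^ 2) := by
    funext ω
    simp [Pi.add_apply, Pi.smul_apply, smul_eq_mul]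
  have hint1 : Integrable ((fun _ : Ω => c₀) + c₁ • Y) P := by
    apply (integrable_const c₀).add
    exact hYint.smul c₁
  have hint2 : Integrable (c₂ • fun ω => Y ω ^ 2) P := by
    exact hY2int.smul c₂
  have h1 : P[fun ω => c₀ + c₁ * Y ω + c₂ * Y ω ^ 2|m]
      =ᵐ[P] P[(fun _ : Ω => c₀) + c₁ • Y|m] + P[c₂ • fun ω => Y ω ^ 2|m] := by
    rw [e]
    exact condExp_add hint1 hint2 m
  have h2 : P[(fun _ : Ω => c₀) + c₁ • Y|m]
      =ᵐ[P] P[(fun _ : Ω => c₀)|m] + P[c₁ • Y|m] :=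
    condExp_add (integrable_const c₀) (hYint.smul c₁) m
  have h3 : P[(fun _ : Ω => c₀)|m] = fun _ => c₀ := condExp_const hm c₀
  have h4 : P[c₁ • Y|m] =ᵐ[P] c₁ • P[Y|m] := condExp_smul (μ := P) c₁ Y m
  have h5 : P[c₂ • fun ω => Y ω ^ 2|m] =ᵐ[P] c₂ • P[fun ω => Y ω ^ 2|m] :=
    condExp_smul (μ := P) c₂ _ m
  filter_upwards [h1, h2, h4, h5, hμ, hK] with ω e1 e2 e4 e5 e6 e7
  have : (P[fun ω => c₀ + c₁ * Y ω + c₂ * Y ω ^ 2|m]) ω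
      = c₀ + c₁ * μK + c₂ * (P[fun ω => Y ω ^ 2|m]) ω := by
    rw [e1, Pi.add_apply, e2, Pi.add_apply, congrFun h3 ω, e4, Pi.smul_apply, e6, e5, Pi.smul_apply]
    simp [smul_eq_mul]
  rw [this]
  have := mul_le_mul_of_nonneg_left e7 hc₂
  linarith


lemma condexp_sq_bound {Ω : Type*} {m m0 : MeasurableSpace Ω} (hm : m ≤ m0)
    (P : Measure Ω) [IsProbabilityMeasure P]
    (Y : Ω → ℝ) (hYint : Integrable Y P) (hY2int : Integrable (fun ω => Y ω ^ 2) P)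
    (μ V : ℝ) (hμ : P[Y|m] =ᵐ[P] fun _ => μ)
    (hVar : ∀ᵐ ω ∂P, (P[fun ω => (Y ω - μ) ^ 2|m]) ω ≤ V) :
    ∀ᵐ ω ∂P, (P[fun ω => Y ω ^ 2|m]) ω ≤ V + μ ^ 2 := by
  have hsq_int : Integrable (fun ω => (Y ω - μ) ^ 2) P := by
    have e0 : (fun ω => (Y ω - μ) ^ 2) = fun ω => Y ω ^ 2 - 2 * μ * Y ω + μ ^ 2 := by
      funext ω; ring
    rw [e0]
    exact (hY2int.sub (hYint.const_mul (2 * μ))).add (integrable_const _)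
  have e : (fun ω => Y ω ^ 2)
      = ((fun ω => (Y ω - μ) ^ 2) + (2 * μ) • Y) + (fun _ : Ω => -(μ ^ 2)) := by
    funext ω
    simp [Pi.add_apply, Pi.smul_apply, smul_eq_mul]
    ring
  have hint1 : Integrable ((fun ω => (Y ω - μ) ^ 2) + (2 * μ) • Y) P :=
    hsq_int.add (hYint.smul (2 * μ))
  have h1 : P[fun ω => Y ω ^ 2|m]
      =ᵐ[P] P[(fun ω => (Y ω - μ) ^ 2) + (2 * μ) • Y|m] + P[(fun _ : Ω => -(μ ^ 2))|m] := by
    rw [e]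
    exact condExp_add hint1 (integrable_const _) m
  have h2 : P[(fun ω => (Y ω - μ) ^ 2) + (2 * μ) • Y|m]
      =ᵐ[P] P[fun ω => (Y ω - μ) ^ 2|m] + P[(2 * μ) • Y|m] :=
    condExp_add hsq_int (hYint.smul (2 * μ)) m
  have h3 : P[(fun _ : Ω => -(μ ^ 2))|m] = fun _ => -(μ ^ 2) := condExp_const hm _
  have h4 : P[(2 * μ) • Y|m] =ᵐ[P] (2 * μ) • P[Y|m] := condExp_smul (μ := P) (2 * μ) Y m
  filter_upwards [h1, h2, h4, hμ, hVar] with ω e1 e2 e4 e6 e7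
  rw [e1, Pi.add_apply, e2, Pi.add_apply, congrFun h3 ω, e4, Pi.smul_apply, e6]
  simp only [smul_eq_mul]
  nlinarith


lemma bad_event_bound {Ω : Type*} {m0 : MeasurableSpace Ω}
    (P : Measure Ω) [IsProbabilityMeasure P] (ℱ : Filtration ℕ m0)
    (f : ℕ → Ω → ℝ) (a b : ℕ)
    (hf : ∀ t ∈ Finset.Icc (a+1) b, StronglyMeasurable[ℱ t] (f t))
    (hnn : ∀ t ∈ Finset.Icc (a+1) b, ∀ ω, 0 ≤ f t ω)
    (hint : ∀ t ∈ Finset.Icc (a+1) b, Integrable (f t) P)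
    (τ : ℝ)
    (hρ : ∀ t ∈ Finset.Icc (a+1) b, P[f t|ℱ (t-1)] ≤ᵐ[P] fun _ => 1 + τ)
    (δ4 : ℝ) (hδ4 : 0 < δ4) :
    P {ω | ENNReal.ofReal ((1/δ4) * Real.exp ((b - a : ℕ) * τ))
        ≤ ∏ t ∈ Finset.Icc (a+1) b, ENNReal.ofReal (f t ω)}
      ≤ ENNReal.ofReal δ4 := by
  set g : Ω → ℝ≥0∞ := fun ω => ∏ t ∈ Finset.Icc (a+1) b, ENNReal.ofReal (f t ω) with hg
  have hgmeas : Measurable g := by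
    apply Finset.measurable_prod
    intro t ht
    exact ENNReal.measurable_ofReal.comp
      (((hf t ht).mono (ℱ.le t)).measurable)
  have hcore : ∫⁻ ω, g ω ∂P ≤ ENNReal.ofReal (max (1 + τ) 0) ^ (b - a) :=
    core_lemma P ℱ f a (max (1 + τ) 0) (le_max_right _ _) b hf hnn hint
      (fun t ht => (hρ t ht).trans (Filter.Eventually.of_forall fun ω => le_max_left _ _))
  have hcore2 : ∫⁻ ω, g ω ∂P ≤ ENNReal.ofReal (Real.exp ((b - a : ℕ) * τ)) := by
    refine hcore.trans ?_
    have h1 : max (1 + τ) 0 ≤ Real.exp τ :=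
      max_le (by linarith [Real.add_one_le_exp τ]) (Real.exp_nonneg τ)
    calc ENNReal.ofReal (max (1 + τ) 0) ^ (b - a)
        ≤ ENNReal.ofReal (Real.exp τ) ^ (b - a) :=
          pow_le_pow_left' (ENNReal.ofReal_le_ofReal h1) _
      _ = ENNReal.ofReal (Real.exp τ ^ (b - a)) :=
          (ENNReal.ofReal_pow (Real.exp_nonneg τ) _).symm
      _ = ENNReal.ofReal (Real.exp ((b - a : ℕ) * τ)) := by
          rw [← Real.exp_nat_mul]
  set C : ℝ≥0∞ := ENNReal.ofReal ((1/δ4) * Real.exp ((b - a : ℕ) * τ)) with hC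
  have hCpos : C ≠ 0 := by
    rw [hC]
    simp only [ne_eq, ENNReal.ofReal_eq_zero, not_le]
    positivity
  have hCtop : C ≠ ⊤ := ENNReal.ofReal_ne_top
  have hmarkov := mul_meas_ge_le_lintegral₀ (μ := P) hgmeas.aemeasurable C
  have : P {ω | C ≤ g ω} ≤ ENNReal.ofReal (Real.exp ((b - a : ℕ) * τ)) / C := by
    rw [ENNReal.le_div_iff_mul_le (Or.inl hCpos) (Or.inl hCtop)]
    calc P {ω | C ≤ g ω} * C = C * P {ω | C ≤ g ω} := mul_comm _ _
      _ ≤ ∫⁻ ω, g ω ∂P := hmarkov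
      _ ≤ _ := hcore2
  refine this.trans ?_
  rw [hC, ← ENNReal.ofReal_div_of_pos (by positivity)]
  apply ENNReal.ofReal_le_ofReal
  have hexp : (0:ℝ) < Real.exp ((b - a : ℕ) * τ) := Real.exp_pos _
  rw [div_le_iff₀ (by positivity)]
  field_simp
  exact le_rfl


lemma log_extract {s : Finset ℕ} (f : ℕ → ℝ) (hpos : ∀ t ∈ s, 0 < f t) (D E : ℝ)
    (hD : 0 < D)
    (h : ∏ t ∈ s, ENNReal.ofReal (f t) < ENNReal.ofReal (D * Real.exp E)) :
    ∑ t ∈ s, Real.log (f t) ≤ Real.log D + E := by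
  have hprod_pos : 0 < ∏ t ∈ s, f t := Finset.prod_pos hpos
  have h2 : ∏ t ∈ s, f t < D * Real.exp E := by
    rw [← ENNReal.ofReal_prod_of_nonneg (fun i hi => (hpos i hi).le)] at h
    exact (ENNReal.ofReal_lt_ofReal_iff_of_nonneg hprod_pos.le).1 h
  calc ∑ t ∈ s, Real.log (f t) = Real.log (∏ t ∈ s, f t) :=
        (Real.log_prod (fun i hi => (hpos i hi).ne')).symm
    _ ≤ Real.log (D * Real.exp E) := Real.log_le_log hprod_pos h2.le
    _ = Real.log D + E := by
        rw [Real.log_mul hD.ne' (Real.exp_pos E).ne', Real.log_exp]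

lemma contam_sum {s : Finset ℕ} (p : ℕ → Prop) [DecidablePred p] (φu φv : ℕ → ℝ)
    (A B : ℝ) (hA : 0 ≤ A)
    (heq : ∀ t ∈ s, ¬ p t → φu t = φv t)
    (hbd : ∀ t ∈ s, φu t - φv t ≤ 2 * A)
    (hcard : ((s.filter p).card : ℝ) ≤ B) :
    ∑ t ∈ s, φu t ≤ (∑ t ∈ s, φv t) + 2 * A * B := by
  have h1 : ∑ t ∈ s, (φu t - φv t) ≤ ∑ t ∈ s, (if p t then 2 * A else 0) := by
    apply Finset.sum_le_sum
    intro t ht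
    by_cases hp : p t
    · simp only [hp, if_true]
      exact hbd t ht
    · simp [hp, heq t ht hp]
  have h2 : ∑ t ∈ s, (if p t then 2 * A else 0) = ((s.filter p).card : ℝ) * (2 * A) := by
    rw [← Finset.sum_filter, Finset.sum_const, nsmul_eq_mul]
  rw [Finset.sum_sub_distrib] at h1
  have h3 : ((s.filter p).card : ℝ) * (2 * A) ≤ B * (2 * A) :=
    mul_le_mul_of_nonneg_right hcard (by positivity)
  nlinarith

set_option maxHeartbeats 2000000 in
/-- **Theorem 2 (centered two-stage estimator).** With constant conditional mean `μ`, conditional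
variance bounded by `V`, `0 < k < n`, `ϑ_k = sqrt(2M(log(4/δ)/k + 2Aη))`, shifting device
`μ̄_η = (αbar/k) ∑_{i≤k} ψ(X̃_i/αbar)`, shifted estimate
`μ'_η = (α'/(n−k)) ∑_{i>k} ψ((X̃_i − μ̄_η)/α')` and `μ̂_η = μ'_η + μ̄_η`, one has
`|μ̂_η − μ| ≤ sqrt(2(V + ϑ_k²)(log(4/δ)/(n−k) + 2Aη))` with probability at least `1 − δ`. -/
theorem catoni_centered_two_stage_deviation_bound
    {Ω : Type*} {m0 : MeasurableSpace Ω} (P : Measure Ω) [IsProbabilityMeasure P]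
    (ℱ : Filtration ℕ m0) (n : ℕ) (hn : 0 < n)
    (X Xt : ℕ → Ω → ℝ) (μ : ℝ) (M : ℝ) (hM : 0 < M) (V : ℝ) (hV : 0 < V)
    (hAdapted : ∀ t, StronglyMeasurable[ℱ t] (X t))
    (hInt : ∀ t ∈ Finset.Icc 1 n, Integrable (X t) P)
    (hInt2 : ∀ t ∈ Finset.Icc 1 n, Integrable (fun ω => (X t ω) ^ 2) P)
    -- C1 with constant conditional mean μ
    (hC1 : ∀ t ∈ Finset.Icc 1 n, P[X t|ℱ (t - 1)] =ᵐ[P] fun _ => μ)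
    -- C2 : conditional second moment bound
    (hC2 : ∀ t ∈ Finset.Icc 1 n,
      ∀ᵐ ω ∂P, (P[fun ω => (X t ω) ^ 2|ℱ (t - 1)]) ω ≤ M)
    -- conditional variance bound
    (hVar : ∀ t ∈ Finset.Icc 1 n,
      ∀ᵐ ω ∂P, (P[fun ω => (X t ω - μ) ^ 2|ℱ (t - 1)]) ω ≤ V)
    -- influence function
    (ψ : ℝ → ℝ) (hψmono : Monotone ψ)
    (hψlb : ∀ x : ℝ, -Real.log (1 - x + x ^ 2 / 2) ≤ ψ x)
    (hψub : ∀ x : ℝ, ψ x ≤ Real.log (1 + x + x ^ 2 / 2))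
    (A : ℝ) (hA : 0 < A) (hψA : ∀ x : ℝ, |ψ x| ≤ A)
    -- contamination rate η : at most ηk corruptions among the first k indices
    -- and at most η(n−k) corruptions among the last n−k indices
    (η : ℝ) (hη : η ∈ Set.Ioo (0 : ℝ) 1)
    (k : ℕ) (hk : 0 < k) (hkn : k < n)
    (hcontam₁ : ∀ ω : Ω,
      (((Finset.Icc 1 k).filter (fun t => Xt t ω ≠ X t ω)).card : ℝ) ≤ η * k)
    (hcontam₂ : ∀ ω : Ω,
      (((Finset.Icc (k + 1) n).filter (fun t => Xt t ω ≠ X t ω)).card : ℝ)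
        ≤ η * (n - k : ℕ))
    -- confidence level, ϑ_k and the two scale parameters
    (δ : ℝ) (hδ : δ ∈ Set.Ioo (0 : ℝ) 1)
    (ϑ : ℝ) (hϑ : ϑ = Real.sqrt (2 * M * (Real.log (4 / δ) / k + 2 * A * η)))
    (αbar : ℝ) (hαbar : αbar = Real.sqrt (M / (2 * (Real.log (4 / δ) / k + 2 * A * η))))
    (α' : ℝ)
    (hα' : α' = Real.sqrt ((V + ϑ ^ 2) /
      (2 * (Real.log (4 / δ) / (n - k : ℕ) + 2 * A * η))))
    -- the two-stage estimator
    (μbarη : Ω → ℝ)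
    (hμbarη : ∀ ω, μbarη ω = (αbar / k) * ∑ i ∈ Finset.Icc 1 k, ψ (Xt i ω / αbar))
    (μ'η : Ω → ℝ)
    (hμ'η : ∀ ω, μ'η ω =
      (α' / (n - k : ℕ)) * ∑ i ∈ Finset.Icc (k + 1) n, ψ ((Xt i ω - μbarη ω) / α'))
    (μhatη : Ω → ℝ) (hμhatη : ∀ ω, μhatη ω = μ'η ω + μbarη ω) :
    ENNReal.ofReal (1 - δ) ≤
      P {ω | |μhatη ω - μ| ≤
        Real.sqrt (2 * (V + ϑ ^ 2) *
          (Real.log (4 / δ) / (n - k : ℕ) + 2 * A * η))} := by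
  obtain ⟨hη0, hη1⟩ := hη
  obtain ⟨hδ0, hδ1⟩ := hδ
  have hδ4 : (0:ℝ) < δ / 4 := by linarith
  set m : ℕ := n - k with hmdef
  have hm0 : 0 < m := by omega
  have hmR : (0:ℝ) < (m:ℝ) := by exact_mod_cast hm0
  have hkR : (0:ℝ) < (k:ℝ) := by exact_mod_cast hk
  have hL0 : 0 < Real.log (4 / δ) := Real.log_pos (by rw [lt_div_iff₀ hδ0]; linarith)
  set L := Real.log (4 / δ) with hLdef
  set ck := L / (k:ℝ) + 2 * A * η with hckdef
  set c' := L / (m:ℝ) + 2 * A * η with hc'def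
  have h2Aη : (0:ℝ) < 2 * A * η := by positivity
  have hck0 : 0 < ck := add_pos (div_pos hL0 hkR) h2Aη
  have hc'0 : 0 < c' := add_pos (div_pos hL0 hmR) h2Aη
  have hαbar0 : 0 < αbar := by
    rw [hαbar]; exact Real.sqrt_pos.2 (div_pos hM (by linarith))
  have hαbar2 : αbar ^ 2 = M / (2 * ck) := by
    rw [hαbar, Real.sq_sqrt (le_of_lt (div_pos hM (by linarith)))]
  have hϑ0 : 0 < ϑ := by
    rw [hϑ]; exact Real.sqrt_pos.2 (by positivity)
  have hϑ2 : ϑ ^ 2 = 2 * M * ck := by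
    rw [hϑ, Real.sq_sqrt (by positivity)]
  have hVϑ : 0 < V + ϑ ^ 2 := by positivity
  have hα'0 : 0 < α' := by
    rw [hα']; exact Real.sqrt_pos.2 (div_pos hVϑ (by linarith))
  have hα'2 : α' ^ 2 = (V + ϑ ^ 2) / (2 * c') := by
    rw [hα', Real.sq_sqrt (le_of_lt (div_pos hVϑ (by linarith)))]
  set θ := ϑ / α' with hθdef
  have hθ0 : 0 < θ := div_pos hϑ0 hα'0
  have hϑval : ϑ = M / αbar := by
    have h1 : (M / αbar) ^ 2 = 2 * M * ck := by
      rw [div_pow, hαbar2]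
      field_simp
    rw [hϑ, ← h1, Real.sqrt_sq (le_of_lt (div_pos hM hαbar0))]
  have hBval : Real.sqrt (2 * (V + ϑ ^ 2) * c') = 2 * α' * c' := by
    have h1 : (2 * α' * c') ^ 2 = 2 * (V + ϑ ^ 2) * c' := by
      rw [mul_pow, mul_pow, hα'2]
      field_simp
    rw [← h1, Real.sqrt_sq (by positivity)]
  -- the four auxiliary functions
  set f₁ : ℕ → Ω → ℝ := fun t ω => 1 + X t ω / αbar + (X t ω / αbar) ^ 2 / 2 with hf₁def
  set f₂ : ℕ → Ω → ℝ := fun t ω => 1 - X t ω / αbar + (X t ω / αbar) ^ 2 / 2 with hf₂def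
  set f₃ : ℕ → Ω → ℝ :=
    fun t ω => 1 + ((X t ω - μ) / α' - θ) + ((X t ω - μ) / α' - θ) ^ 2 / 2 with hf₃def
  set f₄ : ℕ → Ω → ℝ :=
    fun t ω => 1 + (-((X t ω - μ) / α') - θ) + (-((X t ω - μ) / α') - θ) ^ 2 / 2 with hf₄def
  set τ₁ := 1 / αbar * μ + 1 / (2 * αbar ^ 2) * M with hτ₁def
  set τ₂ := -(1 / αbar) * μ + 1 / (2 * αbar ^ 2) * M with hτ₂def
  set p3 := -(μ / α') - θ with hp3def
  set τ₃ := (1 + p3 + p3 ^ 2 / 2) + (1 + p3) / α' * μ + 1 / (2 * α' ^ 2) * (V + μ ^ 2) - 1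
    with hτ₃def
  set p4 := μ / α' - θ with hp4def
  set τ₄ := (1 + p4 + p4 ^ 2 / 2) + (-((1 + p4) / α')) * μ + 1 / (2 * α' ^ 2) * (V + μ ^ 2) - 1
    with hτ₄def
  clear_value L ck c' θ τ₁ τ₂ p3 τ₃ p4 τ₄ f₁ f₂ f₃ f₄
  have hα'ne : α' ≠ 0 := hα'0.ne'
  have hτ₃eq : τ₃ = c' - θ := by
    have h2 : ϑ = θ * α' := by rw [hθdef]; field_simp
    have h3 : 2 * c' * α' ^ 2 = V + ϑ ^ 2 := by
      rw [hα'2]; field_simp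
    rw [h2] at h3
    rw [hτ₃def, hp3def]
    field_simp
    linear_combination (-1) * h3
  have hτ₄eq : τ₄ = c' - θ := by
    have h2 : ϑ = θ * α' := by rw [hθdef]; field_simp
    have h3 : 2 * c' * α' ^ 2 = V + ϑ ^ 2 := by
      rw [hα'2]; field_simp
    rw [h2] at h3
    rw [hτ₄def, hp4def]
    field_simp
    linear_combination (-1) * h3
  have hαbarne : αbar ≠ 0 := hαbar0.ne'
  -- membership helpers
  have hsub1 : ∀ t ∈ Finset.Icc (0+1) k, t ∈ Finset.Icc 1 n := by
    intro t ht; simp only [Finset.mem_Icc] at *; omega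
  have hsub2 : ∀ t ∈ Finset.Icc (k+1) n, t ∈ Finset.Icc 1 n := by
    intro t ht; simp only [Finset.mem_Icc] at *; omega
  have hXm : ∀ t, Measurable[ℱ t] (X t) := fun t => (hAdapted t).measurable
  -- rewrite lemmas for the f's as quadratics in X
  have he₁ : ∀ t, f₁ t = fun ω => 1 + (1/αbar) * X t ω + (1/(2*αbar^2)) * X t ω ^ 2 := by
    intro t; funext ω; simp only [hf₁def]; field_simp
  have he₂ : ∀ t, f₂ t = fun ω => 1 + (-(1/αbar)) * X t ω + (1/(2*αbar^2)) * X t ω ^ 2 := by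
    intro t; funext ω; simp only [hf₂def]; field_simp; ring
  have he₃ : ∀ t, f₃ t
      = fun ω => (1 + p3 + p3^2/2) + ((1+p3)/α') * X t ω + (1/(2*α'^2)) * X t ω ^ 2 := by
    intro t; funext ω; simp only [hf₃def, hp3def]; field_simp; ring
  have he₄ : ∀ t, f₄ t
      = fun ω => (1 + p4 + p4^2/2) + (-((1+p4)/α')) * X t ω + (1/(2*α'^2)) * X t ω ^ 2 := by
    intro t; funext ω; simp only [hf₄def, hp4def]; field_simp; ring
  -- strong measurability
  have hf₁meas : ∀ t ∈ Finset.Icc (0+1) k, StronglyMeasurable[ℱ t] (f₁ t) := by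
    intro t _
    rw [he₁ t]
    exact ((measurable_const.add (measurable_const.mul (hXm t))).add
      (measurable_const.mul ((hXm t).pow_const 2))).stronglyMeasurable
  have hf₂meas : ∀ t ∈ Finset.Icc (0+1) k, StronglyMeasurable[ℱ t] (f₂ t) := by
    intro t _
    rw [he₂ t]
    exact ((measurable_const.add (measurable_const.mul (hXm t))).add
      (measurable_const.mul ((hXm t).pow_const 2))).stronglyMeasurable
  have hf₃meas : ∀ t ∈ Finset.Icc (k+1) n, StronglyMeasurable[ℱ t] (f₃ t) := by
    intro t _
    rw [he₃ t]
    exact ((measurable_const.add (measurable_const.mul (hXm t))).add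
      (measurable_const.mul ((hXm t).pow_const 2))).stronglyMeasurable
  have hf₄meas : ∀ t ∈ Finset.Icc (k+1) n, StronglyMeasurable[ℱ t] (f₄ t) := by
    intro t _
    rw [he₄ t]
    exact ((measurable_const.add (measurable_const.mul (hXm t))).add
      (measurable_const.mul ((hXm t).pow_const 2))).stronglyMeasurable
  -- nonnegativity
  have hf₁nn : ∀ t ∈ Finset.Icc (0+1) k, ∀ ω, 0 ≤ f₁ t ω := by
    intro t _ ω; simp only [hf₁def]; exact (qpos _).le
  have hf₂nn : ∀ t ∈ Finset.Icc (0+1) k, ∀ ω, 0 ≤ f₂ t ω := by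
    intro t _ ω; simp only [hf₂def]; exact (qpos' _).le
  have hf₃nn : ∀ t ∈ Finset.Icc (k+1) n, ∀ ω, 0 ≤ f₃ t ω := by
    intro t _ ω; simp only [hf₃def]; exact (qpos _).le
  have hf₄nn : ∀ t ∈ Finset.Icc (k+1) n, ∀ ω, 0 ≤ f₄ t ω := by
    intro t _ ω; simp only [hf₄def]; exact (qpos _).le
  -- integrability
  have hf₁int : ∀ t ∈ Finset.Icc (0+1) k, Integrable (f₁ t) P := by
    intro t ht
    rw [he₁ t]
    exact ((integrable_const (1:ℝ)).add ((hInt t (hsub1 t ht)).const_mul _)).add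
      ((hInt2 t (hsub1 t ht)).const_mul _)
  have hf₂int : ∀ t ∈ Finset.Icc (0+1) k, Integrable (f₂ t) P := by
    intro t ht
    rw [he₂ t]
    exact ((integrable_const (1:ℝ)).add ((hInt t (hsub1 t ht)).const_mul _)).add
      ((hInt2 t (hsub1 t ht)).const_mul _)
  have hf₃int : ∀ t ∈ Finset.Icc (k+1) n, Integrable (f₃ t) P := by
    intro t ht
    rw [he₃ t]
    exact ((integrable_const _).add ((hInt t (hsub2 t ht)).const_mul _)).add
      ((hInt2 t (hsub2 t ht)).const_mul _)
  have hf₄int : ∀ t ∈ Finset.Icc (k+1) n, Integrable (f₄ t) P := by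
    intro t ht
    rw [he₄ t]
    exact ((integrable_const _).add ((hInt t (hsub2 t ht)).const_mul _)).add
      ((hInt2 t (hsub2 t ht)).const_mul _)
  -- conditional expectation bounds
  have hρ₁ : ∀ t ∈ Finset.Icc (0+1) k, P[f₁ t|ℱ (t-1)] ≤ᵐ[P] fun _ => 1 + τ₁ := by
    intro t ht
    have htn := hsub1 t ht
    have h := condexp_quad (ℱ.le (t-1)) P (X t) (hInt t htn) (hInt2 t htn) μ (hC1 t htn)
      M (hC2 t htn) 1 (1/αbar) (1/(2*αbar^2)) (by positivity)
    rw [he₁ t]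
    have e2 : (fun _ : Ω => (1:ℝ) + 1/αbar * μ + 1/(2*αbar^2) * M) = fun _ : Ω => 1 + τ₁ := by
      funext _; rw [hτ₁def]; ring
    rw [← e2]
    exact h
  have hρ₂ : ∀ t ∈ Finset.Icc (0+1) k, P[f₂ t|ℱ (t-1)] ≤ᵐ[P] fun _ => 1 + τ₂ := by
    intro t ht
    have htn := hsub1 t ht
    have h := condexp_quad (ℱ.le (t-1)) P (X t) (hInt t htn) (hInt2 t htn) μ (hC1 t htn)
      M (hC2 t htn) 1 (-(1/αbar)) (1/(2*αbar^2)) (by positivity)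
    rw [he₂ t]
    have e2 : (fun _ : Ω => (1:ℝ) + -(1/αbar) * μ + 1/(2*αbar^2) * M) = fun _ : Ω => 1 + τ₂ := by
      funext _; rw [hτ₂def]; ring
    rw [← e2]
    exact h
  have hK2 : ∀ t ∈ Finset.Icc 1 n,
      ∀ᵐ ω ∂P, (P[fun ω => X t ω ^ 2|ℱ (t-1)]) ω ≤ V + μ^2 := by
    intro t ht
    exact condexp_sq_bound (ℱ.le (t-1)) P (X t) (hInt t ht) (hInt2 t ht)
      μ V (hC1 t ht) (hVar t ht)
  have hρ₃ : ∀ t ∈ Finset.Icc (k+1) n, P[f₃ t|ℱ (t-1)] ≤ᵐ[P] fun _ => 1 + τ₃ := by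
    intro t ht
    have htn := hsub2 t ht
    have h := condexp_quad (ℱ.le (t-1)) P (X t) (hInt t htn) (hInt2 t htn) μ (hC1 t htn)
      (V + μ^2) (hK2 t htn) (1 + p3 + p3^2/2) ((1+p3)/α') (1/(2*α'^2)) (by positivity)
    rw [he₃ t]
    have e2 : (fun _ : Ω => (1 + p3 + p3^2/2) + (1+p3)/α' * μ + 1/(2*α'^2) * (V + μ^2))
        = fun _ : Ω => 1 + τ₃ := by
      funext _; rw [hτ₃def]; ring
    rw [← e2]
    exact h
  have hρ₄ : ∀ t ∈ Finset.Icc (k+1) n, P[f₄ t|ℱ (t-1)] ≤ᵐ[P] fun _ => 1 + τ₄ := by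
    intro t ht
    have htn := hsub2 t ht
    have h := condexp_quad (ℱ.le (t-1)) P (X t) (hInt t htn) (hInt2 t htn) μ (hC1 t htn)
      (V + μ^2) (hK2 t htn) (1 + p4 + p4^2/2) (-((1+p4)/α')) (1/(2*α'^2)) (by positivity)
    rw [he₄ t]
    have e2 : (fun _ : Ω => (1 + p4 + p4^2/2) + -((1+p4)/α') * μ + 1/(2*α'^2) * (V + μ^2))
        = fun _ : Ω => 1 + τ₄ := by
      funext _; rw [hτ₄def]; ring
    rw [← e2]
    exact h
  -- the four bad events
  have hS1 := bad_event_bound P ℱ f₁ 0 k hf₁meas hf₁nn hf₁int τ₁ hρ₁ (δ/4) hδ4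
  have hS2 := bad_event_bound P ℱ f₂ 0 k hf₂meas hf₂nn hf₂int τ₂ hρ₂ (δ/4) hδ4
  have hS3 := bad_event_bound P ℱ f₃ k n hf₃meas hf₃nn hf₃int τ₃ hρ₃ (δ/4) hδ4
  have hS4 := bad_event_bound P ℱ f₄ k n hf₄meas hf₄nn hf₄int τ₄ hρ₄ (δ/4) hδ4
  -- name the bad events
  set S₁ : Set Ω := {ω | ENNReal.ofReal (1/(δ/4) * Real.exp (((k - 0 : ℕ) : ℝ) * τ₁))
      ≤ ∏ t ∈ Finset.Icc (0+1) k, ENNReal.ofReal (f₁ t ω)} with hS₁def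
  set S₂ : Set Ω := {ω | ENNReal.ofReal (1/(δ/4) * Real.exp (((k - 0 : ℕ) : ℝ) * τ₂))
      ≤ ∏ t ∈ Finset.Icc (0+1) k, ENNReal.ofReal (f₂ t ω)} with hS₂def
  set S₃ : Set Ω := {ω | ENNReal.ofReal (1/(δ/4) * Real.exp (((n - k : ℕ) : ℝ) * τ₃))
      ≤ ∏ t ∈ Finset.Icc (k+1) n, ENNReal.ofReal (f₃ t ω)} with hS₃def
  set S₄ : Set Ω := {ω | ENNReal.ofReal (1/(δ/4) * Real.exp (((n - k : ℕ) : ℝ) * τ₄))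
      ≤ ∏ t ∈ Finset.Icc (k+1) n, ENNReal.ofReal (f₄ t ω)} with hS₄def
  have hS1' : P S₁ ≤ ENNReal.ofReal (δ/4) := hS1
  have hS2' : P S₂ ≤ ENNReal.ofReal (δ/4) := hS2
  have hS3' : P S₃ ≤ ENNReal.ofReal (δ/4) := hS3
  have hS4' : P S₄ ≤ ENNReal.ofReal (δ/4) := hS4
  -- measurability of the bad events
  have hprodmeas₁ : Measurable fun ω => ∏ t ∈ Finset.Icc (0+1) k, ENNReal.ofReal (f₁ t ω) :=
    Finset.measurable_prod _ (fun t ht => ENNReal.measurable_ofReal.comp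
      (((hf₁meas t ht).mono (ℱ.le t)).measurable))
  have hprodmeas₂ : Measurable fun ω => ∏ t ∈ Finset.Icc (0+1) k, ENNReal.ofReal (f₂ t ω) :=
    Finset.measurable_prod _ (fun t ht => ENNReal.measurable_ofReal.comp
      (((hf₂meas t ht).mono (ℱ.le t)).measurable))
  have hprodmeas₃ : Measurable fun ω => ∏ t ∈ Finset.Icc (k+1) n, ENNReal.ofReal (f₃ t ω) :=
    Finset.measurable_prod _ (fun t ht => ENNReal.measurable_ofReal.comp
      (((hf₃meas t ht).mono (ℱ.le t)).measurable))
  have hprodmeas₄ : Measurable fun ω => ∏ t ∈ Finset.Icc (k+1) n, ENNReal.ofReal (f₄ t ω) :=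
    Finset.measurable_prod _ (fun t ht => ENNReal.measurable_ofReal.comp
      (((hf₄meas t ht).mono (ℱ.le t)).measurable))
  have hS₁m : MeasurableSet S₁ := by
    rw [hS₁def]; exact measurableSet_le measurable_const hprodmeas₁
  have hS₂m : MeasurableSet S₂ := by
    rw [hS₂def]; exact measurableSet_le measurable_const hprodmeas₂
  have hS₃m : MeasurableSet S₃ := by
    rw [hS₃def]; exact measurableSet_le measurable_const hprodmeas₃
  have hS₄m : MeasurableSet S₄ := by
    rw [hS₄def]; exact measurableSet_le measurable_const hprodmeas₄
  -- useful identities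
  have hlogD : Real.log (1/(δ/4)) = L := by rw [one_div_div]; exact hLdef.symm
  have hstage1 : ∀ s : ℝ, (αbar/(k:ℝ)) * (2*A*(η*(k:ℝ))
      + (L + (k:ℝ)*(1/αbar*s + 1/(2*αbar^2)*M))) = s + M/αbar := by
    intro s
    have hkne : (k:ℝ) ≠ 0 := hkR.ne'
    have hrel : αbar^2 * ck = M/2 := by rw [hαbar2]; field_simp
    rw [hckdef] at hrel
    have hrel3 : αbar^2 * (L + 2*A*η*(k:ℝ)) * 2 = M * (k:ℝ) := by
      field_simp at hrel
      linear_combination hrel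
    field_simp
    linear_combination hrel3
  have hstage2 : (α'/(m:ℝ)) * (2*A*(η*(m:ℝ)) + (L + (m:ℝ)*c')) = 2*α'*c' := by
    rw [hc'def]; field_simp; ring
  -- the pointwise inclusion
  have hincl : (S₁ ∪ S₂ ∪ S₃ ∪ S₄)ᶜ ⊆
      {ω | |μhatη ω - μ| ≤ Real.sqrt (2 * (V + ϑ ^ 2) * c')} := by
    intro ω hω
    simp only [Set.mem_compl_iff, Set.mem_union, not_or] at hω
    obtain ⟨⟨⟨hw1, hw2⟩, hw3⟩, hw4⟩ := hω
    rw [hS₁def] at hw1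
    rw [hS₂def] at hw2
    rw [hS₃def] at hw3
    rw [hS₄def] at hw4
    simp only [Set.mem_setOf_eq, not_le] at hw1 hw2 hw3 hw4
    -- log-sum bounds from the good events
    have hg1 : ∑ t ∈ Finset.Icc (0+1) k, Real.log (f₁ t ω)
        ≤ Real.log (1/(δ/4)) + ((k - 0 : ℕ) : ℝ) * τ₁ :=
      log_extract (fun t => f₁ t ω)
        (fun t ht => by simp only [hf₁def]; exact qpos _) _ _ (by positivity) hw1
    have hg2 : ∑ t ∈ Finset.Icc (0+1) k, Real.log (f₂ t ω)
        ≤ Real.log (1/(δ/4)) + ((k - 0 : ℕ) : ℝ) * τ₂ :=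
      log_extract (fun t => f₂ t ω)
        (fun t ht => by simp only [hf₂def]; exact qpos' _) _ _ (by positivity) hw2
    have hg3 : ∑ t ∈ Finset.Icc (k+1) n, Real.log (f₃ t ω)
        ≤ Real.log (1/(δ/4)) + ((n - k : ℕ) : ℝ) * τ₃ :=
      log_extract (fun t => f₃ t ω)
        (fun t ht => by simp only [hf₃def]; exact qpos _) _ _ (by positivity) hw3
    have hg4 : ∑ t ∈ Finset.Icc (k+1) n, Real.log (f₄ t ω)
        ≤ Real.log (1/(δ/4)) + ((n - k : ℕ) : ℝ) * τ₄ :=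
      log_extract (fun t => f₄ t ω)
        (fun t ht => by simp only [hf₄def]; exact qpos _) _ _ (by positivity) hw4
    simp only [show (0:ℕ)+1 = 1 from rfl, Nat.sub_zero, hlogD, ← hmdef] at hg1 hg2 hg3 hg4
    -- Stage 1, upper bound for μbar
    have hcontam1u : ∑ t ∈ Finset.Icc 1 k, ψ (Xt t ω / αbar)
        ≤ (∑ t ∈ Finset.Icc 1 k, ψ (X t ω / αbar)) + 2*A*(η*(k:ℝ)) :=
      contam_sum (fun t => Xt t ω ≠ X t ω) _ _ A (η*(k:ℝ)) hA.le
        (fun t _ h => by rw [not_not] at h; rw [h])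
        (fun t _ => by
          have h1 := abs_le.1 (hψA (Xt t ω / αbar))
          have h2 := abs_le.1 (hψA (X t ω / αbar))
          linarith)
        (hcontam₁ ω)
    have hψsum1 : ∑ t ∈ Finset.Icc 1 k, ψ (X t ω / αbar)
        ≤ ∑ t ∈ Finset.Icc 1 k, Real.log (f₁ t ω) :=
      Finset.sum_le_sum (fun t _ => by simp only [hf₁def]; exact hψub _)
    have hμbar_ub : μbarη ω ≤ μ + ϑ := by
      rw [hμbarη ω]
      have hsum : ∑ i ∈ Finset.Icc 1 k, ψ (Xt i ω / αbar)
          ≤ 2*A*(η*(k:ℝ)) + (L + (k:ℝ)*τ₁) := by linarith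
      calc (αbar / (k:ℝ)) * ∑ i ∈ Finset.Icc 1 k, ψ (Xt i ω / αbar)
          ≤ (αbar / (k:ℝ)) * (2*A*(η*(k:ℝ)) + (L + (k:ℝ)*τ₁)) :=
            mul_le_mul_of_nonneg_left hsum (by positivity)
        _ = μ + ϑ := by rw [hτ₁def, hϑval]; exact hstage1 μ
    -- Stage 1, lower bound for μbar
    have hcontam1l : ∑ t ∈ Finset.Icc 1 k, -ψ (Xt t ω / αbar)
        ≤ (∑ t ∈ Finset.Icc 1 k, -ψ (X t ω / αbar)) + 2*A*(η*(k:ℝ)) :=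
      contam_sum (fun t => Xt t ω ≠ X t ω) _ _ A (η*(k:ℝ)) hA.le
        (fun t _ h => by rw [not_not] at h; rw [h])
        (fun t _ => by
          have h1 := abs_le.1 (hψA (Xt t ω / αbar))
          have h2 := abs_le.1 (hψA (X t ω / αbar))
          linarith)
        (hcontam₁ ω)
    have hψsum2 : ∑ t ∈ Finset.Icc 1 k, -ψ (X t ω / αbar)
        ≤ ∑ t ∈ Finset.Icc 1 k, Real.log (f₂ t ω) :=
      Finset.sum_le_sum (fun t _ => by
        simp only [hf₂def]
        have := hψlb (X t ω / αbar)
        linarith)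
    have hμbar_lb : μ - ϑ ≤ μbarη ω := by
      have hτ₂' : τ₂ = 1/αbar*(-μ) + 1/(2*αbar^2)*M := by rw [hτ₂def]; ring
      have hneg : -μbarη ω ≤ -μ + ϑ := by
        rw [hμbarη ω]
        have hrw : -((αbar/(k:ℝ)) * ∑ i ∈ Finset.Icc 1 k, ψ (Xt i ω / αbar))
            = (αbar/(k:ℝ)) * ∑ i ∈ Finset.Icc 1 k, -ψ (Xt i ω / αbar) := by
          rw [Finset.sum_neg_distrib]; ring
        rw [hrw]
        have hsum : ∑ i ∈ Finset.Icc 1 k, -ψ (Xt i ω / αbar)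
            ≤ 2*A*(η*(k:ℝ)) + (L + (k:ℝ)*τ₂) := by linarith
        calc (αbar / (k:ℝ)) * ∑ i ∈ Finset.Icc 1 k, -ψ (Xt i ω / αbar)
            ≤ (αbar / (k:ℝ)) * (2*A*(η*(k:ℝ)) + (L + (k:ℝ)*τ₂)) :=
              mul_le_mul_of_nonneg_left hsum (by positivity)
          _ = -μ + ϑ := by rw [hτ₂', hϑval]; exact hstage1 (-μ)
      linarith
    -- Stage 2
    set σω := (μbarη ω - μ) / α' with hσdef
    have hσ_le : σω ≤ θ := by
      rw [hσdef, hθdef]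
      exact div_le_div_of_nonneg_right (by linarith) hα'0.le
    have hσ_ge : -θ ≤ σω := by
      rw [hσdef, hθdef, ← neg_div]
      exact div_le_div_of_nonneg_right (by linarith) hα'0.le
    have hcard2 : (Finset.Icc (k+1) n).card = m := by rw [Nat.card_Icc]; omega
    have hmτ₃ : (m:ℝ)*τ₃ = (m:ℝ)*c' - (m:ℝ)*θ := by rw [hτ₃eq]; ring
    have hmτ₄ : (m:ℝ)*τ₄ = (m:ℝ)*c' - (m:ℝ)*θ := by rw [hτ₄eq]; ring
    -- upper bound
    have hcontam2u : ∑ t ∈ Finset.Icc (k+1) n, ψ ((Xt t ω - μbarη ω) / α')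
        ≤ (∑ t ∈ Finset.Icc (k+1) n, ψ ((X t ω - μbarη ω) / α')) + 2*A*(η*(m:ℝ)) :=
      contam_sum (fun t => Xt t ω ≠ X t ω) _ _ A (η*(m:ℝ)) hA.le
        (fun t _ h => by rw [not_not] at h; rw [h])
        (fun t _ => by
          have h1 := abs_le.1 (hψA ((Xt t ω - μbarη ω) / α'))
          have h2 := abs_le.1 (hψA ((X t ω - μbarη ω) / α'))
          linarith)
        (hcontam₂ ω)
    have hkey3 : ∀ t ∈ Finset.Icc (k+1) n,
        σω + ψ ((X t ω - μbarη ω) / α') ≤ θ + Real.log (f₃ t ω) := by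
      intro t _
      have hx : (X t ω - μbarη ω) / α' = (X t ω - μ) / α' - σω := by
        rw [hσdef]; field_simp; ring
      have h1 : ψ ((X t ω - μbarη ω) / α')
          ≤ Real.log (1 + ((X t ω - μ) / α' - σω) + ((X t ω - μ) / α' - σω) ^ 2 / 2) := by
        rw [hx]
        exact hψub _
      have h2 := shift_le ((X t ω - μ) / α') hσ_le
      simp only [hf₃def]
      linarith
    have hsum3 : (m:ℝ) * σω + ∑ t ∈ Finset.Icc (k+1) n, ψ ((X t ω - μbarη ω) / α')
        ≤ (m:ℝ) * θ + ∑ t ∈ Finset.Icc (k+1) n, Real.log (f₃ t ω) := by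
      have h := Finset.sum_le_sum hkey3
      rw [Finset.sum_add_distrib, Finset.sum_add_distrib, Finset.sum_const, Finset.sum_const,
        hcard2] at h
      simp only [nsmul_eq_mul] at h
      exact h
    have hTT : μhatη ω - μ = (α'/(m:ℝ))
        * ((∑ i ∈ Finset.Icc (k+1) n, ψ ((Xt i ω - μbarη ω) / α')) + (m:ℝ)*σω) := by
      rw [hμhatη ω, hμ'η ω, hσdef]
      field_simp
      ring
    have hub : μhatη ω - μ ≤ 2*α'*c' := by
      rw [hTT]
      have hsum_all : (∑ i ∈ Finset.Icc (k+1) n, ψ ((Xt i ω - μbarη ω) / α')) + (m:ℝ)*σω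
          ≤ 2*A*(η*(m:ℝ)) + (L + (m:ℝ)*c') := by linarith
      calc (α'/(m:ℝ)) * ((∑ i ∈ Finset.Icc (k+1) n, ψ ((Xt i ω - μbarη ω) / α')) + (m:ℝ)*σω)
          ≤ (α'/(m:ℝ)) * (2*A*(η*(m:ℝ)) + (L + (m:ℝ)*c')) :=
            mul_le_mul_of_nonneg_left hsum_all (by positivity)
        _ = 2*α'*c' := hstage2
    -- lower bound
    have hcontam2l : ∑ t ∈ Finset.Icc (k+1) n, -ψ ((Xt t ω - μbarη ω) / α')
        ≤ (∑ t ∈ Finset.Icc (k+1) n, -ψ ((X t ω - μbarη ω) / α')) + 2*A*(η*(m:ℝ)) :=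
      contam_sum (fun t => Xt t ω ≠ X t ω) _ _ A (η*(m:ℝ)) hA.le
        (fun t _ h => by rw [not_not] at h; rw [h])
        (fun t _ => by
          have h1 := abs_le.1 (hψA ((Xt t ω - μbarη ω) / α'))
          have h2 := abs_le.1 (hψA ((X t ω - μbarη ω) / α'))
          linarith)
        (hcontam₂ ω)
    have hkey4 : ∀ t ∈ Finset.Icc (k+1) n,
        -σω + -ψ ((X t ω - μbarη ω) / α') ≤ θ + Real.log (f₄ t ω) := by
      intro t _
      have hx : (X t ω - μbarη ω) / α' = (X t ω - μ) / α' - σω := by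
        rw [hσdef]; field_simp; ring
      have h1 : -ψ ((X t ω - μbarη ω) / α')
          ≤ Real.log (1 - (X t ω - μbarη ω) / α' + ((X t ω - μbarη ω) / α') ^ 2 / 2) := by
        have h := hψlb ((X t ω - μbarη ω) / α')
        linarith
      have e : (1:ℝ) - (X t ω - μbarη ω) / α' + ((X t ω - μbarη ω) / α') ^ 2 / 2
          = 1 + (-((X t ω - μ) / α') - -σω) + (-((X t ω - μ) / α') - -σω) ^ 2 / 2 := by
        rw [hx]; ring
      rw [e] at h1
      have h2 := shift_le (-((X t ω - μ) / α')) (show -σω ≤ θ by linarith)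
      simp only [hf₄def]
      linarith
    have hsum4 : (m:ℝ) * (-σω) + ∑ t ∈ Finset.Icc (k+1) n, -ψ ((X t ω - μbarη ω) / α')
        ≤ (m:ℝ) * θ + ∑ t ∈ Finset.Icc (k+1) n, Real.log (f₄ t ω) := by
      have h := Finset.sum_le_sum hkey4
      rw [Finset.sum_add_distrib, Finset.sum_add_distrib, Finset.sum_const, Finset.sum_const,
        hcard2] at h
      simp only [nsmul_eq_mul] at h
      exact h
    have hTT' : μ - μhatη ω = (α'/(m:ℝ))
        * ((∑ i ∈ Finset.Icc (k+1) n, -ψ ((Xt i ω - μbarη ω) / α')) + (m:ℝ)*(-σω)) := by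
      rw [hμhatη ω, hμ'η ω, hσdef, Finset.sum_neg_distrib]
      field_simp
      ring
    have hlb : μ - μhatη ω ≤ 2*α'*c' := by
      rw [hTT']
      have hsum_all : (∑ i ∈ Finset.Icc (k+1) n, -ψ ((Xt i ω - μbarη ω) / α')) + (m:ℝ)*(-σω)
          ≤ 2*A*(η*(m:ℝ)) + (L + (m:ℝ)*c') := by linarith
      calc (α'/(m:ℝ)) * ((∑ i ∈ Finset.Icc (k+1) n, -ψ ((Xt i ω - μbarη ω) / α')) + (m:ℝ)*(-σω))
          ≤ (α'/(m:ℝ)) * (2*A*(η*(m:ℝ)) + (L + (m:ℝ)*c')) :=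
            mul_le_mul_of_nonneg_left hsum_all (by positivity)
        _ = 2*α'*c' := hstage2
    show |μhatη ω - μ| ≤ Real.sqrt (2 * (V + ϑ ^ 2) * c')
    rw [hBval]
    exact abs_le.2 ⟨by linarith, hub⟩
  -- final measure arithmetic
  have hUm : MeasurableSet (S₁ ∪ S₂ ∪ S₃ ∪ S₄) := ((hS₁m.union hS₂m).union hS₃m).union hS₄m
  have hPU : P (S₁ ∪ S₂ ∪ S₃ ∪ S₄) ≤ ENNReal.ofReal δ := by
    calc P (S₁ ∪ S₂ ∪ S₃ ∪ S₄) ≤ P (S₁ ∪ S₂ ∪ S₃) + P S₄ := measure_union_le _ _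
      _ ≤ (P (S₁ ∪ S₂) + P S₃) + P S₄ :=
          add_le_add_left (measure_union_le _ _) _
      _ ≤ ((P S₁ + P S₂) + P S₃) + P S₄ :=
          add_le_add_left (add_le_add_left (measure_union_le _ _) _) _
      _ ≤ ((ENNReal.ofReal (δ/4) + ENNReal.ofReal (δ/4)) + ENNReal.ofReal (δ/4))
            + ENNReal.ofReal (δ/4) :=
          add_le_add (add_le_add (add_le_add hS1' hS2') hS3') hS4'
      _ = ENNReal.ofReal δ := by
          rw [← ENNReal.ofReal_add (by linarith) (by linarith),
            ← ENNReal.ofReal_add (by linarith) (by linarith),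
            ← ENNReal.ofReal_add (by linarith) (by linarith)]
          norm_num
          rw [show δ/4+δ/4+δ/4+δ/4 = δ by ring]
  have hcompl : ENNReal.ofReal (1 - δ) ≤ P ((S₁ ∪ S₂ ∪ S₃ ∪ S₄)ᶜ) := by
    rw [prob_compl_eq_one_sub hUm]
    have h1 : ENNReal.ofReal (1-δ) + ENNReal.ofReal δ ≤ 1 := by
      rw [← ENNReal.ofReal_add (by linarith) hδ0.le]
      norm_num
    calc ENNReal.ofReal (1-δ) ≤ 1 - ENNReal.ofReal δ :=
        ENNReal.le_sub_of_add_le_right ENNReal.ofReal_ne_top h1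
      _ ≤ 1 - P (S₁ ∪ S₂ ∪ S₃ ∪ S₄) := tsub_le_tsub le_rfl hPU
  exact hcompl.trans (measure_mono hincl)
end

section
/- Suppose there are no true change points (K = 0, i.e., μ_t is constant over t ∈ [n]). Under the same assumptions as in the consistency theorem for RC-Cat (threshold b = 2c₀·sqrt(M·η) and window w ≥ (B/(Aη))·log(4/δ) with δ = n^{−(c₁+1)}), there is a constant c₁ > 0 such that P( K̂ = 0 ) ≥ 1 − n^{−c₁}, where K̂ is the number of change points declared by RC-Cat. -/
open MeasureTheory Finset
open scoped Classical


/-- pointwise exponential bound, upper version -/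
private lemma rc_exp_ub (ψ : ℝ → ℝ) (hψub : ∀ x : ℝ, ψ x ≤ Real.log (1 + x + x ^ 2 / 2))
    (x : ℝ) : Real.exp (ψ x) ≤ 1 + x + x ^ 2 / 2 := by
  have hpos : 0 < 1 + x + x ^ 2 / 2 := by nlinarith [sq_nonneg (x + 1)]
  calc Real.exp (ψ x) ≤ Real.exp (Real.log (1 + x + x ^ 2 / 2)) :=
        Real.exp_le_exp.2 (hψub x)
    _ = 1 + x + x ^ 2 / 2 := Real.exp_log hpos

private lemma rc_exp_lb (ψ : ℝ → ℝ) (hψlb : ∀ x : ℝ, -Real.log (1 - x + x ^ 2 / 2) ≤ ψ x)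
    (x : ℝ) : Real.exp (-ψ x) ≤ 1 + (-1) * x + x ^ 2 / 2 := by
  have hpos : 0 < 1 - x + x ^ 2 / 2 := by nlinarith [sq_nonneg (x - 1)]
  have h : -ψ x ≤ Real.log (1 - x + x ^ 2 / 2) := by
    have := hψlb x; linarith
  calc Real.exp (-ψ x) ≤ Real.exp (Real.log (1 - x + x ^ 2 / 2)) := Real.exp_le_exp.2 h
    _ = 1 - x + x ^ 2 / 2 := Real.exp_log hpos
    _ = 1 + (-1) * x + x ^ 2 / 2 := by ring

/-- conditional MGF-type bound -/
private lemma rc_condexp_le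
    {Ω : Type*} {m0 : MeasurableSpace Ω} (P : Measure Ω) [IsProbabilityMeasure P]
    {m : MeasurableSpace Ω} (hm : m ≤ m0)
    (Xi : Ω → ℝ) (μ M α : ℝ) (hα : α ≠ 0) (hXm : Measurable[m0] Xi)
    (hint : Integrable Xi P) (hint2 : Integrable (fun ω => Xi ω ^ 2) P)
    (hc1 : P[Xi|m] =ᵐ[P] fun _ => μ)
    (hc2 : ∀ᵐ ω ∂P, (P[fun ω => Xi ω ^ 2|m]) ω ≤ M)
    (φ : ℝ → ℝ) (hφm : Measurable φ) (A : ℝ) (hφA : ∀ x, |φ x| ≤ A)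
    (ε : ℝ) (hptw : ∀ x : ℝ, Real.exp (φ x) ≤ 1 + ε * x + x ^ 2 / 2) :
    P[fun ω => Real.exp (φ (Xi ω / α))|m] ≤ᵐ[P]
      fun _ => 1 + ε * (μ / α) + M / (2 * α ^ 2) := by
  have hα2 : (0:ℝ) < α ^ 2 := by positivity
  set f : Ω → ℝ := fun ω => Real.exp (φ (Xi ω / α)) with hf
  set H : Ω → ℝ := (fun _ => (1:ℝ)) + (ε / α) • Xi + (1 / (2 * α ^ 2)) • (fun ω => Xi ω ^ 2)
    with hH
  have hHval : ∀ ω, H ω = 1 + ε * (Xi ω / α) + (Xi ω / α) ^ 2 / 2 := by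
    intro ω
    simp only [hH, Pi.add_apply, Pi.smul_apply, smul_eq_mul]
    field_simp
  have hfH : ∀ ω, f ω ≤ H ω := by
    intro ω; rw [hHval ω]; exact hptw _
  -- integrability
  have hf_meas : Measurable[m0] f := by
    exact (Real.measurable_exp.comp (hφm.comp (hXm.div_const α)))
  have hf_int : Integrable f P := by
    refine Integrable.mono' (integrable_const (Real.exp A)) (hf_meas.aestronglyMeasurable (μ := P))
      (ae_of_all _ fun ω => ?_)
    rw [Real.norm_eq_abs, abs_of_pos (Real.exp_pos _)]
    exact Real.exp_le_exp.2 ((le_abs_self _).trans (hφA _))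
  have hint1' : Integrable ((ε / α) • Xi) P := hint.smul _
  have hint2' : Integrable ((1 / (2 * α ^ 2)) • (fun ω => Xi ω ^ 2)) P := hint2.smul _
  have hH_int : Integrable H P := ((integrable_const (1:ℝ)).add hint1').add hint2'
  have hmono : P[f|m] ≤ᵐ[P] P[H|m] := condExp_mono hf_int hH_int (ae_of_all _ hfH)
  -- compute condexp of H
  have h1 : P[H|m] =ᵐ[P]
      P[(fun _ => (1:ℝ)) + (ε / α) • Xi|m] + P[(1 / (2 * α ^ 2)) • (fun ω => Xi ω ^ 2)|m] :=
    condExp_add ((integrable_const _).add hint1') hint2' m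
  have h2 : P[(fun _ => (1:ℝ)) + (ε / α) • Xi|m] =ᵐ[P]
      P[(fun _ => (1:ℝ))|m] + P[(ε / α) • Xi|m] := condExp_add (integrable_const _) hint1' m
  have h3 : P[(fun _ => (1:ℝ))|m] = fun _ => (1:ℝ) := condExp_const hm 1
  have h4 : P[(ε / α) • Xi|m] =ᵐ[P] (ε / α) • P[Xi|m] := condExp_smul _ _ m
  have h5 : P[(1 / (2 * α ^ 2)) • (fun ω => Xi ω ^ 2)|m] =ᵐ[P]
      (1 / (2 * α ^ 2)) • P[(fun ω => Xi ω ^ 2)|m] := condExp_smul _ _ m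
  filter_upwards [hmono, h1, h2, h4, h5, hc1, hc2] with ω w1 w2 w3 w4 w5 w6 w7
  have e1 : (P[H|m]) ω = 1 + (ε / α) * μ + (1 / (2 * α ^ 2)) * (P[(fun ω => Xi ω ^ 2)|m]) ω := by
    rw [w2]
    simp only [Pi.add_apply, w3, w4, w5, Pi.smul_apply, smul_eq_mul, h3, w6]
  have e2 : (1 / (2 * α ^ 2)) * (P[(fun ω => Xi ω ^ 2)|m]) ω ≤ (1 / (2 * α ^ 2)) * M :=
    mul_le_mul_of_nonneg_left w7 (by positivity)
  have e3 : (ε / α) * μ = ε * (μ / α) := by ring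
  have e4 : (1 / (2 * α ^ 2)) * M = M / (2 * α ^ 2) := by ring
  calc (P[f|m]) ω ≤ (P[H|m]) ω := w1
    _ ≤ 1 + ε * (μ / α) + M / (2 * α ^ 2) := by rw [e1]; linarith [e2, e3.symm ▸ le_refl ((ε/α)*μ)]


/-- Expectation of a product of adapted nonnegative bounded factors whose conditional
expectations are bounded by `q`. -/
private lemma rc_prod_le
    {Ω : Type*} {m0 : MeasurableSpace Ω} (P : Measure Ω) [IsProbabilityMeasure P]
    (ℱ : Filtration ℕ m0) (f : ℕ → Ω → ℝ) (C q : ℝ) (hq0 : 0 ≤ q) (hC : 0 ≤ C)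
    (hmeas : ∀ i, StronglyMeasurable[ℱ i] (f i))
    (hnn : ∀ i ω, 0 ≤ f i ω) (hbdd : ∀ i ω, f i ω ≤ C)
    (s : ℕ) :
    ∀ k : ℕ, (∀ i ∈ Finset.Icc (s + 1) (s + k), P[f i|ℱ (i - 1)] ≤ᵐ[P] fun _ => q) →
      ∫ ω, ∏ i ∈ Finset.Icc (s + 1) (s + k), f i ω ∂P ≤ q ^ k := by
  intro k
  induction k with
  | zero => intro _; simp
  | succ k ih =>
    intro hq
    have habs : ∀ i ω, ‖f i ω‖ ≤ C := fun i ω => by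
      rw [Real.norm_eq_abs, abs_of_nonneg (hnn i ω)]; exact hbdd i ω
    set g : Ω → ℝ := fun ω => ∏ i ∈ Finset.Icc (s + 1) (s + k), f i ω with hgdef
    set j : ℕ := s + k + 1 with hjdef
    have hsplit : ∀ ω, (∏ i ∈ Finset.Icc (s + 1) (s + (k + 1)), f i ω)
        = g ω * f j ω := by
      intro ω
      have : s + (k + 1) = (s + k) + 1 := by omega
      rw [this, Finset.prod_Icc_succ_top (by omega)]
    have hg_meas : StronglyMeasurable[ℱ (s + k)] g := by
      apply Finset.stronglyMeasurable_fun_prod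
      intro i hi
      rw [Finset.mem_Icc] at hi
      exact (hmeas i).mono (ℱ.mono (by omega))
    have hg_meas0 : StronglyMeasurable[m0] g := hg_meas.mono (ℱ.le _)
    have hg_nn : ∀ ω, 0 ≤ g ω := fun ω => Finset.prod_nonneg fun i _ => hnn i ω
    have hcard : (Finset.Icc (s + 1) (s + k)).card = k := by
      rw [Nat.card_Icc]; omega
    have hg_bdd : ∀ ω, ‖g ω‖ ≤ C ^ k := by
      intro ω
      rw [Real.norm_eq_abs, abs_of_nonneg (hg_nn ω), ← hcard, ← Finset.prod_const]
      exact Finset.prod_le_prod (fun i _ => hnn i ω) (fun i _ => hbdd i ω)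
    have hg_int : Integrable g P :=
      Integrable.mono' (integrable_const (C ^ k)) hg_meas0.aestronglyMeasurable
        (ae_of_all _ hg_bdd)
    have hfj_meas : StronglyMeasurable[m0] (f j) := (hmeas j).mono (ℱ.le _)
    have hfj_int : Integrable (f j) P :=
      Integrable.mono' (integrable_const C) hfj_meas.aestronglyMeasurable
        (ae_of_all _ (habs j))
    have hgf_int : Integrable (g * f j) P := by
      exact hfj_int.bdd_mul hg_meas0.aestronglyMeasurable (ae_of_all _ hg_bdd)
    have hm : ℱ (s + k) ≤ m0 := ℱ.le _
    have hpull : P[g * f j|ℱ (s + k)] =ᵐ[P] g * P[f j|ℱ (s + k)] :=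
      condExp_mul_of_stronglyMeasurable_left hg_meas hgf_int hfj_int
    have hqj : P[f j|ℱ (s + k)] ≤ᵐ[P] fun _ => q := by
      have h := hq j (by rw [Finset.mem_Icc]; omega)
      have : j - 1 = s + k := by omega
      rwa [this] at h
    have hce_int : Integrable (fun ω => g ω * (P[f j|ℱ (s + k)]) ω) P :=
      integrable_condExp.bdd_mul hg_meas0.aestronglyMeasurable (ae_of_all _ hg_bdd)
    calc ∫ ω, ∏ i ∈ Finset.Icc (s + 1) (s + (k + 1)), f i ω ∂P
        = ∫ ω, (g * f j) ω ∂P := by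
          refine integral_congr_ae (ae_of_all _ fun ω => ?_)
          simpa only [Pi.mul_apply] using hsplit ω
      _ = ∫ ω, (P[g * f j|ℱ (s + k)]) ω ∂P := (integral_condExp hm).symm
      _ = ∫ ω, g ω * (P[f j|ℱ (s + k)]) ω ∂P := by
          refine integral_congr_ae (hpull.mono fun ω hω => ?_)
          simpa only [Pi.mul_apply] using hω
      _ ≤ ∫ ω, g ω * q ∂P := by
          refine integral_mono_ae hce_int (hg_int.mul_const q) ?_
          filter_upwards [hqj] with ω hω
          exact mul_le_mul_of_nonneg_left hω (hg_nn ω)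
      _ = (∫ ω, g ω ∂P) * q := integral_mul_const q g
      _ ≤ q ^ k * q := by
          refine mul_le_mul_of_nonneg_right ?_ hq0
          exact ih fun i hi => hq i (by rw [Finset.mem_Icc] at hi ⊢; omega)
      _ = q ^ (k + 1) := by ring

/-- Exponential Markov tail bound for a sum. -/
private lemma rc_tail
    {Ω : Type*} {m0 : MeasurableSpace Ω} (P : Measure Ω) [IsProbabilityMeasure P]
    (ℱ : Filtration ℕ m0) (g : ℕ → Ω → ℝ) (A' q y L : ℝ)
    (hmeas : ∀ i, StronglyMeasurable[ℱ i] (g i))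
    (hbd : ∀ i ω, |g i ω| ≤ A')
    (s w : ℕ)
    (hq : ∀ i ∈ Finset.Icc (s + 1) (s + w),
      P[fun ω => Real.exp (g i ω)|ℱ (i - 1)] ≤ᵐ[P] fun _ => q)
    (hq0 : 0 ≤ q) (hqy : q ≤ Real.exp y) :
    P {ω | (w : ℝ) * y + L < ∑ i ∈ Finset.Icc (s + 1) (s + w), g i ω}
      ≤ ENNReal.ofReal (Real.exp (-L)) := by
  set f : ℕ → Ω → ℝ := fun i ω => Real.exp (g i ω) with hfdef
  have hf_meas : ∀ i, StronglyMeasurable[ℱ i] (f i) := fun i =>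
    Real.continuous_exp.comp_stronglyMeasurable (hmeas i)
  have hf_nn : ∀ i ω, 0 ≤ f i ω := fun i ω => (Real.exp_pos _).le
  have hf_bdd : ∀ i ω, f i ω ≤ Real.exp A' := fun i ω =>
    Real.exp_le_exp.2 ((le_abs_self _).trans (hbd i ω))
  have hE : ∫ ω, ∏ i ∈ Finset.Icc (s + 1) (s + w), f i ω ∂P ≤ q ^ w :=
    rc_prod_le P ℱ f (Real.exp A') q hq0 (Real.exp_pos _).le hf_meas hf_nn hf_bdd s w hq
  set F : Ω → ℝ := fun ω => ∏ i ∈ Finset.Icc (s + 1) (s + w), f i ω with hFdef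
  have hF_meas : StronglyMeasurable[m0] F := by
    apply Finset.stronglyMeasurable_fun_prod
    intro i _; exact (hf_meas i).mono (ℱ.le _)
  have hF_nn : ∀ ω, 0 ≤ F ω := fun ω => Finset.prod_nonneg fun i _ => hf_nn i ω
  have hcard : (Finset.Icc (s + 1) (s + w)).card = w := by rw [Nat.card_Icc]; omega
  have hF_bdd : ∀ ω, ‖F ω‖ ≤ Real.exp A' ^ w := fun ω => by
    rw [Real.norm_eq_abs, abs_of_nonneg (hF_nn ω), ← hcard, ← Finset.prod_const]
    exact Finset.prod_le_prod (fun i _ => hf_nn i ω) (fun i _ => hf_bdd i ω)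
  have hF_int : Integrable F P :=
    Integrable.mono' (integrable_const _) hF_meas.aestronglyMeasurable (ae_of_all _ hF_bdd)
  have hEy : ∫ ω, F ω ∂P ≤ Real.exp ((w : ℝ) * y) := by
    refine hE.trans ?_
    calc q ^ w ≤ Real.exp y ^ w := pow_le_pow_left₀ hq0 hqy w
      _ = Real.exp ((w : ℝ) * y) := by rw [← Real.exp_nat_mul]
  have hsubset : {ω | (w : ℝ) * y + L < ∑ i ∈ Finset.Icc (s + 1) (s + w), g i ω}
      ⊆ {ω | Real.exp ((w : ℝ) * y + L) ≤ F ω} := by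
    intro ω hω
    simp only [Set.mem_setOf_eq] at hω ⊢
    calc Real.exp ((w : ℝ) * y + L)
        ≤ Real.exp (∑ i ∈ Finset.Icc (s + 1) (s + w), g i ω) := Real.exp_le_exp.2 hω.le
      _ = F ω := Real.exp_sum _ _
  have hmark := mul_meas_ge_le_integral_of_nonneg (μ := P)
    (ae_of_all _ hF_nn) hF_int (Real.exp ((w : ℝ) * y + L))
  have htr : (P {ω | Real.exp ((w : ℝ) * y + L) ≤ F ω}).toReal ≤ Real.exp (-L) := by
    have hpos : (0:ℝ) < Real.exp ((w : ℝ) * y + L) := Real.exp_pos _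
    have h1 : (P {ω | Real.exp ((w : ℝ) * y + L) ≤ F ω}).toReal
        ≤ Real.exp ((w : ℝ) * y) / Real.exp ((w : ℝ) * y + L) := by
      rw [le_div_iff₀ hpos]
      calc (P {ω | Real.exp ((w : ℝ) * y + L) ≤ F ω}).toReal * Real.exp ((w : ℝ) * y + L)
          = Real.exp ((w : ℝ) * y + L) * (P {ω | Real.exp ((w : ℝ) * y + L) ≤ F ω}).toReal := by
            ring
        _ ≤ ∫ ω, F ω ∂P := hmark.trans_eq rfl
        _ ≤ Real.exp ((w : ℝ) * y) := hEy
    refine h1.trans ?_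
    rw [← Real.exp_sub]
    apply le_of_eq
    congr 1
    ring
  calc P {ω | (w : ℝ) * y + L < ∑ i ∈ Finset.Icc (s + 1) (s + w), g i ω}
      ≤ P {ω | Real.exp ((w : ℝ) * y + L) ≤ F ω} := measure_mono hsubset
    _ = ENNReal.ofReal ((P {ω | Real.exp ((w : ℝ) * y + L) ≤ F ω}).toReal) :=
        (ENNReal.ofReal_toReal (measure_ne_top P _)).symm
    _ ≤ ENNReal.ofReal (Real.exp (-L)) := ENNReal.ofReal_le_ofReal htr



set_option maxHeartbeats 2000000

/-- **Corollary (no false alarms when there are no change points).** If the conditional mean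
is constant over `t ∈ [n]` (no true change points, `K = 0`), then under the same assumptions
as in the consistency theorem for RC-Cat (threshold `b = 2 c₀ sqrt(Mη)`, window
`w ≥ (B/(Aη)) log(4/δ)` with `δ = n^{−(c₁+1)}`, `c₁ > 0`), the algorithm declares no change
points with probability at least `1 − n^{−c₁}`. -/
theorem rc_cat_no_false_alarm
    {Ω : Type*} {m0 : MeasurableSpace Ω} (P : Measure Ω) [IsProbabilityMeasure P]
    (ℱ : Filtration ℕ m0) (n : ℕ) (hn : 0 < n)
    (X Xt : ℕ → Ω → ℝ) (μ : ℝ) (M : ℝ) (hM : 0 < M)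
    (hAdapted : ∀ t, StronglyMeasurable[ℱ t] (X t))
    (hInt : ∀ t ∈ Finset.Icc 1 n, Integrable (X t) P)
    (hInt2 : ∀ t ∈ Finset.Icc 1 n, Integrable (fun ω => (X t ω) ^ 2) P)
    -- C1 with constant conditional mean (no change points) and C2
    (hC1 : ∀ t ∈ Finset.Icc 1 n, P[X t|ℱ (t - 1)] =ᵐ[P] fun _ => μ)
    (hC2 : ∀ t ∈ Finset.Icc 1 n,
      ∀ᵐ ω ∂P, (P[fun ω => (X t ω) ^ 2|ℱ (t - 1)]) ω ≤ M)
    -- influence function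
    (ψ : ℝ → ℝ) (hψmono : Monotone ψ)
    (hψlb : ∀ x : ℝ, -Real.log (1 - x + x ^ 2 / 2) ≤ ψ x)
    (hψub : ∀ x : ℝ, ψ x ≤ Real.log (1 + x + x ^ 2 / 2))
    (A : ℝ) (hA : 0 < A) (hψA : ∀ x : ℝ, |ψ x| ≤ A)
    -- contamination model: in any window of length k ≥ k₀ at most ηk corruptions
    (η : ℝ) (hη : η ∈ Set.Ioo (0 : ℝ) 1) (k₀ : ℕ)
    (hcontam : ∀ ω : Ω, ∀ k : ℕ, k₀ ≤ k → ∀ i : ℕ, i + k ≤ n →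
      (((Finset.Icc (i + 1) (i + k)).filter (fun t => Xt t ω ≠ X t ω)).card : ℝ) ≤ η * k)
    -- window and local-search radius
    (w : ℕ) (hwpos : 0 < w) (hwk₀ : k₀ ≤ w) (lam : ℕ) (hlam : 2 ≤ lam)
    -- threshold and constants
    (B : ℝ) (hB : 1 < B)
    (c₀ : ℝ) (hc₀pos : 0 ≤ c₀) (hc₀ : c₀ ^ 2 = 2 * A * (1 / B + 2))
    (b : ℝ) (hb : b = 2 * c₀ * Real.sqrt (M * η))
    -- confidence level δ = n^{−(c₁+1)}, c₁ > 0, and window-length condition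
    (c₁ : ℝ) (hc₁ : 0 < c₁)
    (δ : ℝ) (hδ : δ = (n : ℝ) ^ (-(c₁ + 1)))
    (hw : (B / (A * η)) * Real.log (4 / δ) ≤ (w : ℝ))
    -- scale parameter and scan statistic
    (α : ℝ) (hα : α = Real.sqrt (M / (2 * (Real.log (2 / δ) / w + 2 * A * η))))
    (S : ℕ → Ω → ℝ)
    (hS : ∀ j ω, S j ω =
      |(α / w) * ∑ i ∈ Finset.Icc (j + 1) (j + w), ψ (Xt i ω / α) -
       (α / w) * ∑ i ∈ Finset.Icc (j - w) (j - 1), ψ (Xt i ω / α)|)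
    -- declared change points: λw-local maximizers of S exceeding the threshold b
    (G : Ω → Finset ℕ)
    (hG : ∀ ω, G ω = (Finset.Icc (lam * w + 1) (n - lam * w)).filter
      (fun j => (∀ i ∈ Finset.Ioo (j - lam * w) (j + lam * w), S i ω ≤ S j ω) ∧
        b < S j ω)) :
    ENNReal.ofReal (1 - (n : ℝ) ^ (-c₁)) ≤ P {ω | (G ω).card = 0} := by
  classical
  obtain ⟨hη0, hη1⟩ := hη
  have hn0 : (0:ℝ) < (n:ℝ) := by exact_mod_cast hn
  have hwR : (0:ℝ) < (w:ℝ) := by exact_mod_cast hwpos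
  have hδpos : 0 < δ := by rw [hδ]; positivity
  have hδ1 : δ ≤ 1 := by
    rw [hδ]
    exact Real.rpow_le_one_of_one_le_of_nonpos (by exact_mod_cast hn) (by linarith)
  set L : ℝ := Real.log (2 / δ) with hLdef
  have hLpos : 0 < L := Real.log_pos (by rw [lt_div_iff₀ hδpos]; linarith)
  set r : ℝ := L / w + 2 * A * η with hrdef
  have hrpos : 0 < r := by
    have : 0 < L / (w:ℝ) := div_pos hLpos hwR
    have h2 : 0 < 2 * A * η := by positivity
    rw [hrdef]; linarith
  have hαpos : 0 < α := by rw [hα]; exact Real.sqrt_pos.2 (by positivity)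
  have hα2 : α ^ 2 = M / (2 * r) := by rw [hα, Real.sq_sqrt (by positivity)]
  have hMα : M / (2 * α ^ 2) = r := by rw [hα2]; field_simp
  -- L/w ≤ A*η/B
  have hBpos : (0:ℝ) < B := by linarith
  have hL4 : L ≤ Real.log (4 / δ) := by
    apply Real.log_le_log (by positivity)
    gcongr
    norm_num
  have hLw : L / (w:ℝ) ≤ A * η / B := by
    have h2 : (B / (A * η)) * L ≤ (B / (A * η)) * Real.log (4 / δ) :=
      mul_le_mul_of_nonneg_left hL4 (by positivity)
    have h3 : (B / (A * η)) * L ≤ (w:ℝ) := h2.trans hw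
    have h4 : L ≤ (w:ℝ) * (A * η / B) := by
      calc L = ((B / (A * η)) * L) * (A * η / B) := by field_simp
        _ ≤ (w:ℝ) * (A * η / B) := mul_le_mul_of_nonneg_right h3 (by positivity)
    rw [div_le_iff₀ hwR]
    calc L ≤ (w:ℝ) * (A * η / B) := h4
      _ = A * η / B * (w:ℝ) := by ring
  have hrB : r ≤ A * η * (1 / B + 2) := by
    have : A * η / B + 2 * A * η = A * η * (1 / B + 2) := by ring
    rw [hrdef]; linarith [hLw]
  -- threshold bound
  have h4rb : 4 * r * α ≤ b := by
    have hbnn : 0 ≤ b := by rw [hb]; positivity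
    have h1 : (4 * r * α) ^ 2 = 8 * M * r := by
      have e : (4 * r * α) ^ 2 = 16 * r ^ 2 * α ^ 2 := by ring
      rw [e, hα2]; field_simp; ring
    have h2 : b ^ 2 = 4 * (M * η) * c₀ ^ 2 := by
      rw [hb, mul_pow, mul_pow, Real.sq_sqrt (by positivity)]; ring
    have h3 : (4 * r * α) ^ 2 ≤ b ^ 2 := by
      rw [h1, h2, hc₀]
      nlinarith [hrB, hM.le]
    calc 4 * r * α = Real.sqrt ((4 * r * α) ^ 2) := (Real.sqrt_sq (by positivity)).symm
      _ ≤ Real.sqrt (b ^ 2) := Real.sqrt_le_sqrt h3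
      _ = b := Real.sqrt_sq hbnn
  have hexpL : Real.exp (-L) = δ / 2 := by
    rw [hLdef, Real.exp_neg, Real.exp_log (by positivity), inv_div]
  -- measurability basics
  have hXm : ∀ i, Measurable[m0] (X i) := fun i => ((hAdapted i).mono (ℱ.le i)).measurable
  have hψm : Measurable ψ := hψmono.measurable
  have hψnegA : ∀ x : ℝ, |(-ψ x)| ≤ A := fun x => by rw [abs_neg]; exact hψA x
  set m : ℕ := lam * w with hmdef
  have hm2w : 2 * w ≤ m := by rw [hmdef]; exact Nat.mul_le_mul_right w hlam
  -- events
  set bad1 : ℕ → Set Ω :=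
    fun s => {ω | (w:ℝ) * (μ / α + r) + L < ∑ i ∈ Finset.Icc (s + 1) (s + w), ψ (X i ω / α)}
    with hbad1
  set bad2 : ℕ → Set Ω :=
    fun s => {ω | (w:ℝ) * (-(μ / α) + r) + L < ∑ i ∈ Finset.Icc (s + 1) (s + w), -ψ (X i ω / α)}
    with hbad2
  have hbad1_meas : ∀ s, MeasurableSet (bad1 s) := by
    intro s
    rw [hbad1]
    exact measurableSet_lt measurable_const
      (Finset.measurable_sum _ fun i _ => hψm.comp ((hXm i).div_const α))
  have hbad2_meas : ∀ s, MeasurableSet (bad2 s) := by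
    intro s
    rw [hbad2]
    exact measurableSet_lt measurable_const
      (Finset.measurable_sum _ fun i _ => (hψm.comp ((hXm i).div_const α)).neg)
  -- probability of bad events
  have hbadP : ∀ s : ℕ, 1 ≤ s → s + w ≤ n → P (bad1 s ∪ bad2 s) ≤ ENNReal.ofReal δ := by
    intro s hs1 hsn
    have hIcc : ∀ i ∈ Finset.Icc (s + 1) (s + w), i ∈ Finset.Icc 1 n := fun i hi => by
      rw [Finset.mem_Icc] at hi ⊢; omega
    have hPne : P ≠ 0 := IsProbabilityMeasure.ne_zero P
    haveI : (MeasureTheory.ae P).NeBot := MeasureTheory.ae_neBot.2 hPne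
    -- upper tail
    have hcond1 : ∀ i ∈ Finset.Icc (s + 1) (s + w),
        P[fun ω => Real.exp (ψ (X i ω / α))|ℱ (i - 1)] ≤ᵐ[P]
          fun _ => 1 + 1 * (μ / α) + M / (2 * α ^ 2) := by
      intro i hi
      exact rc_condexp_le P (ℱ.le (i - 1)) (X i) μ M α hαpos.ne' (hXm i)
        (hInt i (hIcc i hi)) (hInt2 i (hIcc i hi)) (hC1 i (hIcc i hi)) (hC2 i (hIcc i hi))
        ψ hψm A hψA 1 (fun x => by simpa using rc_exp_ub ψ hψub x)
    have hcond2 : ∀ i ∈ Finset.Icc (s + 1) (s + w),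
        P[fun ω => Real.exp (-ψ (X i ω / α))|ℱ (i - 1)] ≤ᵐ[P]
          fun _ => 1 + (-1) * (μ / α) + M / (2 * α ^ 2) := by
      intro i hi
      exact rc_condexp_le P (ℱ.le (i - 1)) (X i) μ M α hαpos.ne' (hXm i)
        (hInt i (hIcc i hi)) (hInt2 i (hIcc i hi)) (hC1 i (hIcc i hi)) (hC2 i (hIcc i hi))
        (fun x => -ψ x) hψm.neg A hψnegA (-1) (fun x => rc_exp_lb ψ hψlb x)
    -- nonnegativity of the bounds
    have hq0aux : ∀ q' : ℝ, ∀ f' : Ω → ℝ, (∀ ω, 0 ≤ f' ω) →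
        P[f'|ℱ s] ≤ᵐ[P] (fun _ => q') → 0 ≤ q' := by
      intro q' f' hf' hle
      have h0 : 0 ≤ᵐ[P] P[f'|ℱ s] := condExp_nonneg (ae_of_all _ hf')
      obtain ⟨ω₀, h₀, h₁⟩ := (h0.and hle).exists
      exact le_trans h₀ h₁
    have hs1mem : s + 1 ∈ Finset.Icc (s + 1) (s + w) := by
      rw [Finset.mem_Icc]; omega
    have hsub1 : s + 1 - 1 = s := by omega
    have hq01 : 0 ≤ 1 + 1 * (μ / α) + M / (2 * α ^ 2) := by
      refine hq0aux _ (fun ω => Real.exp (ψ (X (s + 1) ω / α))) (fun ω => (Real.exp_pos _).le) ?_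
      have := hcond1 (s + 1) hs1mem
      rwa [hsub1] at this
    have hq02 : 0 ≤ 1 + (-1) * (μ / α) + M / (2 * α ^ 2) := by
      refine hq0aux _ (fun ω => Real.exp (-ψ (X (s + 1) ω / α))) (fun ω => (Real.exp_pos _).le) ?_
      have := hcond2 (s + 1) hs1mem
      rwa [hsub1] at this
    have hP1 : P (bad1 s) ≤ ENNReal.ofReal (δ / 2) := by
      rw [hbad1, ← hexpL]
      exact rc_tail P ℱ (fun i ω => ψ (X i ω / α)) A _ (μ / α + r)
        L (fun i => (hψm.comp (((hAdapted i).measurable).div_const α)).stronglyMeasurable)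
        (fun i ω => hψA _) s w hcond1 hq01
        (by rw [hMα]; have := Real.add_one_le_exp (μ / α + r); linarith)
    have hP2 : P (bad2 s) ≤ ENNReal.ofReal (δ / 2) := by
      rw [hbad2, ← hexpL]
      exact rc_tail P ℱ (fun i ω => -ψ (X i ω / α)) A _ (-(μ / α) + r)
        L (fun i => ((hψm.comp (((hAdapted i).measurable).div_const α)).neg).stronglyMeasurable)
        (fun i ω => hψnegA _) s w hcond2 hq02
        (by rw [hMα]; have := Real.add_one_le_exp (-(μ / α) + r); linarith)
    calc P (bad1 s ∪ bad2 s) ≤ P (bad1 s) + P (bad2 s) := measure_union_le _ _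
      _ ≤ ENNReal.ofReal (δ / 2) + ENNReal.ofReal (δ / 2) := add_le_add hP1 hP2
      _ = ENNReal.ofReal (δ / 2 + δ / 2) := (ENNReal.ofReal_add (by positivity) (by positivity)).symm
      _ = ENNReal.ofReal δ := by rw [show δ / 2 + δ / 2 = δ by ring]
  -- index set for the union bound
  set Sset : Finset ℕ := Finset.Icc (m - w) (n - m) with hSset
  have hSmem : ∀ s ∈ Sset, 1 ≤ s ∧ s + w ≤ n := by
    intro s hs
    rw [hSset, Finset.mem_Icc] at hs
    omega
  have hcard : Sset.card ≤ n := by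
    rw [hSset, Nat.card_Icc]
    omega
  set U : Set Ω := ⋃ s ∈ Sset, (bad1 s ∪ bad2 s) with hU
  have hUmeas : MeasurableSet U := by
    rw [hU]
    exact Finset.measurableSet_biUnion _ fun s _ => (hbad1_meas s).union (hbad2_meas s)
  have hUP : P U ≤ ENNReal.ofReal ((n:ℝ) ^ (-c₁)) := by
    have hmain : P U ≤ (n : ENNReal) * ENNReal.ofReal δ := by
      calc P U ≤ ∑ s ∈ Sset, P (bad1 s ∪ bad2 s) := by
            rw [hU]; exact measure_biUnion_finset_le _ _
        _ ≤ ∑ _s ∈ Sset, ENNReal.ofReal δ :=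
            Finset.sum_le_sum fun s hs => hbadP s (hSmem s hs).1 (hSmem s hs).2
        _ = Sset.card • ENNReal.ofReal δ := Finset.sum_const _
        _ = (Sset.card : ENNReal) * ENNReal.ofReal δ := nsmul_eq_mul _ _
        _ ≤ (n : ENNReal) * ENNReal.ofReal δ := by
            exact mul_le_mul_left (by exact_mod_cast hcard) _
    refine hmain.trans ?_
    have e1 : (n : ENNReal) * ENNReal.ofReal δ = ENNReal.ofReal ((n:ℝ) * δ) := by
      rw [ENNReal.ofReal_mul (by positivity), ENNReal.ofReal_natCast]
    rw [e1]
    apply ENNReal.ofReal_le_ofReal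
    rw [hδ]
    have e2 : (n:ℝ) * (n:ℝ) ^ (-(c₁ + 1)) = (n:ℝ) ^ ((1:ℝ) + -(c₁ + 1)) := by
      rw [Real.rpow_add hn0, Real.rpow_one]
    rw [e2]
    apply le_of_eq
    congr 1
    ring
  -- on the complement of U there are no declared change points
  have hside : ∀ ω : Ω, ∀ s : ℕ, 1 ≤ s → s + w ≤ n → ω ∉ bad1 s → ω ∉ bad2 s →
      |(α / (w:ℝ)) * (∑ i ∈ Finset.Icc (s + 1) (s + w), ψ (Xt i ω / α)) - μ| ≤ 2 * r * α := by
    intro ω s hs1 hsn h1 h2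
    rw [hbad1] at h1
    rw [hbad2] at h2
    simp only [Set.mem_setOf_eq, not_lt] at h1 h2
    rw [Finset.sum_neg_distrib] at h2
    set SX : ℝ := ∑ i ∈ Finset.Icc (s + 1) (s + w), ψ (X i ω / α) with hSX
    set SXt : ℝ := ∑ i ∈ Finset.Icc (s + 1) (s + w), ψ (Xt i ω / α) with hSXt
    -- contamination bound
    have hfil := hcontam ω w hwk₀ s hsn
    have hdiff : |SXt - SX| ≤ 2 * A * (η * (w:ℝ)) := by
      rw [hSXt, hSX, ← Finset.sum_sub_distrib]
      have step1 : |∑ i ∈ Finset.Icc (s + 1) (s + w), (ψ (Xt i ω / α) - ψ (X i ω / α))|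
          ≤ ∑ i ∈ Finset.Icc (s + 1) (s + w), |ψ (Xt i ω / α) - ψ (X i ω / α)| :=
        Finset.abs_sum_le_sum_abs _ _
      have step2 : ∑ i ∈ Finset.Icc (s + 1) (s + w), |ψ (Xt i ω / α) - ψ (X i ω / α)|
          ≤ ∑ i ∈ Finset.Icc (s + 1) (s + w),
              (if Xt i ω ≠ X i ω then 2 * A else 0) := by
        refine Finset.sum_le_sum fun i _ => ?_
        by_cases hc : Xt i ω = X i ω
        · simp [hc]
        · rw [if_pos hc]
          have ha := abs_le.1 (hψA (Xt i ω / α))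
          have hb' := abs_le.1 (hψA (X i ω / α))
          rw [abs_le]; constructor <;> linarith [ha.1, ha.2, hb'.1, hb'.2]
      have step3 : ∑ i ∈ Finset.Icc (s + 1) (s + w), (if Xt i ω ≠ X i ω then 2 * A else 0)
          = 2 * A * (((Finset.Icc (s + 1) (s + w)).filter
              (fun t => Xt t ω ≠ X t ω)).card : ℝ) := by
        rw [← Finset.sum_filter, Finset.sum_const, nsmul_eq_mul]
        ring
      have step4 : 2 * A * (((Finset.Icc (s + 1) (s + w)).filter
            (fun t => Xt t ω ≠ X t ω)).card : ℝ) ≤ 2 * A * (η * (w:ℝ)) :=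
        mul_le_mul_of_nonneg_left hfil (by positivity)
      calc |∑ i ∈ Finset.Icc (s + 1) (s + w), (ψ (Xt i ω / α) - ψ (X i ω / α))|
          ≤ ∑ i ∈ Finset.Icc (s + 1) (s + w), |ψ (Xt i ω / α) - ψ (X i ω / α)| := step1
        _ ≤ _ := step2
        _ = _ := step3
        _ ≤ _ := step4
    -- concentration bound on the clean sum
    have hclean : |SX - (w:ℝ) * (μ / α)| ≤ (w:ℝ) * r + L := by
      rw [abs_le]; constructor <;> [linarith [h2]; linarith [h1]]
    -- combine
    have haw : (0:ℝ) < α / (w:ℝ) := by positivity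
    have key : |(α / (w:ℝ)) * SXt - μ|
        ≤ (α / (w:ℝ)) * |SXt - SX| + (α / (w:ℝ)) * |SX - (w:ℝ) * (μ / α)| := by
      have e0 : (α / (w:ℝ)) * SXt - μ
          = (α / (w:ℝ)) * (SXt - SX) + (α / (w:ℝ)) * (SX - (w:ℝ) * (μ / α)) := by
        field_simp
        ring
      rw [e0]
      calc |(α / (w:ℝ)) * (SXt - SX) + (α / (w:ℝ)) * (SX - (w:ℝ) * (μ / α))|
          ≤ |(α / (w:ℝ)) * (SXt - SX)| + |(α / (w:ℝ)) * (SX - (w:ℝ) * (μ / α))| :=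
            abs_add_le _ _
        _ = (α / (w:ℝ)) * |SXt - SX| + (α / (w:ℝ)) * |SX - (w:ℝ) * (μ / α)| := by
            rw [abs_mul, abs_mul, abs_of_pos haw]
    have e1 : (α / (w:ℝ)) * (2 * A * (η * (w:ℝ))) = 2 * A * α * η := by
      field_simp
    have e2 : (α / (w:ℝ)) * ((w:ℝ) * r + L) = α * r + α * (L / (w:ℝ)) := by
      field_simp
    have e3 : α * (L / (w:ℝ)) + 2 * A * α * η = α * r := by rw [hrdef]; ring
    have b1 : (α / (w:ℝ)) * |SXt - SX| ≤ 2 * A * α * η := by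
      rw [← e1]; exact mul_le_mul_of_nonneg_left hdiff haw.le
    have b2 : (α / (w:ℝ)) * |SX - (w:ℝ) * (μ / α)| ≤ α * r + α * (L / (w:ℝ)) := by
      rw [← e2]; exact mul_le_mul_of_nonneg_left hclean haw.le
    calc |(α / (w:ℝ)) * SXt - μ| ≤ _ := key
      _ ≤ 2 * A * α * η + (α * r + α * (L / (w:ℝ))) := add_le_add b1 b2
      _ = 2 * r * α := by linarith [e3]
  have hsub : Uᶜ ⊆ {ω | (G ω).card = 0} := by
    intro ω hω
    have hω' : ∀ s ∈ Sset, ω ∉ bad1 s ∧ ω ∉ bad2 s := by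
      intro s hs
      rw [hU] at hω
      simp only [Set.compl_iUnion, Set.mem_iInter, Set.mem_compl_iff, Set.mem_union] at hω
      have := hω s hs
      push_neg at this
      exact this
    simp only [Set.mem_setOf_eq]
    rw [hG ω, Finset.card_eq_zero, Finset.filter_eq_empty_iff]
    intro j hj
    rw [Finset.mem_Icc] at hj
    rintro ⟨-, hSb⟩
    refine absurd hSb (not_lt.2 ?_)
    -- show S j ω ≤ b
    have hjfacts : m + 1 ≤ j ∧ j ≤ n - m := hj
    obtain ⟨hj1, hj2⟩ := hjfacts
    have hjn : j + m ≤ n := by omega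
    -- right window: s = j
    have hjS : j ∈ Sset := by rw [hSset, Finset.mem_Icc]; omega
    have hjL : j - w - 1 ∈ Sset := by rw [hSset, Finset.mem_Icc]; omega
    obtain ⟨hR1, hR2⟩ := hω' j hjS
    obtain ⟨hL1, hL2⟩ := hω' (j - w - 1) hjL
    have hsR : 1 ≤ j ∧ j + w ≤ n := by omega
    have hsL : 1 ≤ j - w - 1 ∧ (j - w - 1) + w ≤ n := by omega
    have hRbound := hside ω j hsR.1 hsR.2 hR1 hR2
    have hLbound := hside ω (j - w - 1) hsL.1 hsL.2 hL1 hL2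
    have hIccL : Finset.Icc (j - w) (j - 1) = Finset.Icc ((j - w - 1) + 1) ((j - w - 1) + w) := by
      congr 1 <;> omega
    rw [hS j ω, hIccL]
    set RR : ℝ := (α / (w:ℝ)) * ∑ i ∈ Finset.Icc (j + 1) (j + w), ψ (Xt i ω / α) with hRR
    set LL : ℝ := (α / (w:ℝ)) * ∑ i ∈ Finset.Icc ((j - w - 1) + 1) ((j - w - 1) + w),
      ψ (Xt i ω / α) with hLL
    have htri : |RR - LL| ≤ |RR - μ| + |μ - LL| := abs_sub_le RR μ LL
    have hcomm : |μ - LL| = |LL - μ| := abs_sub_comm μ LL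
    have : |RR - LL| ≤ 2 * r * α + 2 * r * α := by
      rw [hcomm] at htri
      have hR' : |RR - μ| ≤ 2 * r * α := by rw [hRR]; exact hRbound
      have hL' : |LL - μ| ≤ 2 * r * α := by rw [hLL]; exact hLbound
      linarith
    calc |RR - LL| ≤ 2 * r * α + 2 * r * α := this
      _ = 4 * r * α := by ring
      _ ≤ b := h4rb
  -- conclude
  have hx0 : 0 ≤ (n:ℝ) ^ (-c₁) := Real.rpow_nonneg hn0.le _
  calc ENNReal.ofReal (1 - (n : ℝ) ^ (-c₁))
      = 1 - ENNReal.ofReal ((n:ℝ) ^ (-c₁)) := by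
        rw [ENNReal.ofReal_sub _ hx0, ENNReal.ofReal_one]
    _ ≤ 1 - P U := tsub_le_tsub_left hUP 1
    _ = P Uᶜ := (prob_compl_eq_one_sub hUmeas).symm
    _ ≤ P {ω | (G ω).card = 0} := measure_mono hsub
end

section
/- Let the random variables {X_t}_{t∈[n]} satisfy conditions C1 and C2. For any α > 0 and δ ∈ (0,1), the uncontaminated soft-truncation estimator μ̂ = (α/n)·Σ_{i=1}^n ψ(X_i/α) satisfies |μ̂ − μ| ≤ M/(2α) + α·log(2/δ)/n with probability at least 1 − δ. -/
open MeasureTheory Finset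



lemma catoni_aux_pull {Ω : Type*} {m0 : MeasurableSpace Ω} (P : Measure Ω)
    [IsProbabilityMeasure P] {m : MeasurableSpace Ω} (hm : m ≤ m0) {G Y : Ω → ℝ}
    (hG : StronglyMeasurable[m] G) (hGnn : ∀ ω, 0 ≤ G ω)
    (hY : Integrable Y P) (hYnn : ∀ ω, 0 ≤ Y ω) {c : ℝ} (hc : 0 ≤ c)
    (hcond : ∀ᵐ ω ∂P, (P[Y|m]) ω ≤ c) :
    ∫⁻ ω, ENNReal.ofReal (G ω * Y ω) ∂P ≤
      ENNReal.ofReal c * ∫⁻ ω, ENNReal.ofReal (G ω) ∂P := by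
  set g : ℕ → Ω → ℝ := fun k ω => min (G ω) k with hg
  have hgnn : ∀ k ω, 0 ≤ g k ω := fun k ω => le_min (hGnn ω) (Nat.cast_nonneg k)
  have hg_measm : ∀ k, StronglyMeasurable[m] (g k) := fun k =>
    hG.measurable.min (@measurable_const ℝ Ω _ m _) |>.stronglyMeasurable
  have hg_meas : ∀ k, StronglyMeasurable[m0] (g k) := fun k => (hg_measm k).mono hm
  have hg_bdd : ∀ k ω, ‖g k ω‖ ≤ (k : ℝ) := by
    intro k ω
    rw [Real.norm_eq_abs, abs_of_nonneg (hgnn k ω)]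
    exact min_le_right _ _
  have hg_int : ∀ k, Integrable (g k) P := by
    intro k
    exact (integrable_const (k : ℝ)).mono' ((hg_meas k).aestronglyMeasurable)
      (Filter.Eventually.of_forall (hg_bdd k))
  have hgY_int : ∀ k, Integrable (fun ω => g k ω * Y ω) P := by
    intro k
    exact hY.bdd_mul ((hg_meas k).aestronglyMeasurable) (Filter.Eventually.of_forall (hg_bdd k))
  have step1 : ∀ k, ∫⁻ ω, ENNReal.ofReal (g k ω * Y ω) ∂P ≤
      ENNReal.ofReal c * ∫⁻ ω, ENNReal.ofReal (G ω) ∂P := by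
    intro k
    have hpull : P[(fun ω => g k ω * Y ω)|m] =ᵐ[P] fun ω => g k ω * (P[Y|m]) ω :=
      condExp_stronglyMeasurable_mul_of_bound hm (hg_measm k) hY (k : ℝ)
        (Filter.Eventually.of_forall (hg_bdd k))
    have hle : ∫ ω, g k ω * Y ω ∂P ≤ c * ∫ ω, g k ω ∂P := by
      rw [← integral_condExp hm (f := fun ω => g k ω * Y ω)]
      rw [integral_congr_ae hpull]
      have hint1 : Integrable (fun ω => g k ω * (P[Y|m]) ω) P :=
        (integrable_condExp (f := fun ω => g k ω * Y ω)).congr hpull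
      calc ∫ ω, g k ω * (P[Y|m]) ω ∂P ≤ ∫ ω, c * g k ω ∂P := by
            refine integral_mono_ae hint1 ((hg_int k).const_mul c) ?_
            filter_upwards [hcond] with ω hω
            calc g k ω * (P[Y|m]) ω ≤ g k ω * c :=
                  mul_le_mul_of_nonneg_left hω (hgnn k ω)
              _ = c * g k ω := mul_comm _ _
        _ = c * ∫ ω, g k ω ∂P := integral_const_mul c _
    have h1 : ∫⁻ ω, ENNReal.ofReal (g k ω * Y ω) ∂P = ENNReal.ofReal (∫ ω, g k ω * Y ω ∂P) :=
      (MeasureTheory.ofReal_integral_eq_lintegral_ofReal (hgY_int k)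
        (Filter.Eventually.of_forall fun ω => mul_nonneg (hgnn k ω) (hYnn ω))).symm
    have h2 : ENNReal.ofReal (∫ ω, g k ω ∂P) = ∫⁻ ω, ENNReal.ofReal (g k ω) ∂P :=
      MeasureTheory.ofReal_integral_eq_lintegral_ofReal (hg_int k)
        (Filter.Eventually.of_forall (hgnn k))
    rw [h1]
    calc ENNReal.ofReal (∫ ω, g k ω * Y ω ∂P) ≤ ENNReal.ofReal (c * ∫ ω, g k ω ∂P) :=
          ENNReal.ofReal_le_ofReal hle
      _ = ENNReal.ofReal c * ENNReal.ofReal (∫ ω, g k ω ∂P) :=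
          ENNReal.ofReal_mul hc
      _ = ENNReal.ofReal c * ∫⁻ ω, ENNReal.ofReal (g k ω) ∂P := by rw [h2]
      _ ≤ ENNReal.ofReal c * ∫⁻ ω, ENNReal.ofReal (G ω) ∂P := by
          gcongr with ω
          exact min_le_left _ _
  have hmono : ∀ ω, Monotone fun k : ℕ => ENNReal.ofReal (g k ω * Y ω) := by
    intro ω k l hkl
    exact ENNReal.ofReal_le_ofReal (mul_le_mul_of_nonneg_right
      (min_le_min le_rfl (Nat.cast_le.mpr hkl)) (hYnn ω))
  have hsup : ∀ ω, (⨆ k : ℕ, ENNReal.ofReal (g k ω * Y ω)) = ENNReal.ofReal (G ω * Y ω) := by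
    intro ω
    apply le_antisymm
    · exact iSup_le fun k => ENNReal.ofReal_le_ofReal
        (mul_le_mul_of_nonneg_right (min_le_left _ _) (hYnn ω))
    · have h : g (Nat.ceil (G ω)) ω = G ω := min_eq_left (Nat.le_ceil _)
      calc ENNReal.ofReal (G ω * Y ω) = ENNReal.ofReal (g (Nat.ceil (G ω)) ω * Y ω) := by
            rw [h]
        _ ≤ ⨆ k : ℕ, ENNReal.ofReal (g k ω * Y ω) :=
            le_iSup (fun k : ℕ => ENNReal.ofReal (g k ω * Y ω)) _
  have hMCT : ∫⁻ ω, ENNReal.ofReal (G ω * Y ω) ∂P =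
      ⨆ k : ℕ, ∫⁻ ω, ENNReal.ofReal (g k ω * Y ω) ∂P := by
    calc ∫⁻ ω, ENNReal.ofReal (G ω * Y ω) ∂P
        = ∫⁻ ω, ⨆ k : ℕ, ENNReal.ofReal (g k ω * Y ω) ∂P :=
          lintegral_congr fun ω => (hsup ω).symm
      _ = ⨆ k : ℕ, ∫⁻ ω, ENNReal.ofReal (g k ω * Y ω) ∂P :=
          lintegral_iSup' (fun k => ((hg_meas k).measurable.aemeasurable.mul
            hY.1.aemeasurable).ennreal_ofReal) (Filter.Eventually.of_forall hmono)
  rw [hMCT]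
  exact iSup_le step1

lemma catoni_aux_prod {Ω : Type*} {m0 : MeasurableSpace Ω} (P : Measure Ω)
    [IsProbabilityMeasure P] (ℱ : Filtration ℕ m0) (Y : ℕ → Ω → ℝ) (c : ℕ → ℝ)
    (hYadp : ∀ t, StronglyMeasurable[ℱ t] (Y t)) (hYnn : ∀ t ω, 0 ≤ Y t ω)
    (hc : ∀ t, 0 ≤ c t) :
    ∀ n : ℕ, (∀ t ∈ Finset.Icc 1 n, Integrable (Y t) P) →
    (∀ t ∈ Finset.Icc 1 n, ∀ᵐ ω ∂P, (P[Y t|ℱ (t - 1)]) ω ≤ c t) →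
    ∫⁻ ω, ENNReal.ofReal (∏ t ∈ Finset.Icc 1 n, Y t ω) ∂P ≤
      ∏ t ∈ Finset.Icc 1 n, ENNReal.ofReal (c t) := by
  intro n
  induction n with
  | zero =>
    intro _ _
    simp
  | succ n ih =>
    intro hint hcond
    have hsub : Finset.Icc 1 n ⊆ Finset.Icc 1 (n + 1) :=
      Finset.Icc_subset_Icc le_rfl (Nat.le_succ n)
    have ih' := ih (fun t ht => hint t (hsub ht)) (fun t ht => hcond t (hsub ht))
    have hprod : ∀ ω, (∏ t ∈ Finset.Icc 1 (n + 1), Y t ω) =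
        (∏ t ∈ Finset.Icc 1 n, Y t ω) * Y (n + 1) ω := fun ω =>
      Finset.prod_Icc_succ_top (Nat.one_le_iff_ne_zero.mpr (Nat.succ_ne_zero n)) _
    have hG : StronglyMeasurable[ℱ n] (fun ω => ∏ t ∈ Finset.Icc 1 n, Y t ω) := by
      apply Finset.stronglyMeasurable_fun_prod
      intro t ht
      exact (hYadp t).mono (ℱ.mono (Finset.mem_Icc.mp ht).2)
    have hGnn : ∀ ω, 0 ≤ ∏ t ∈ Finset.Icc 1 n, Y t ω := fun ω =>
      Finset.prod_nonneg fun t _ => hYnn t ω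
    have hmem : n + 1 ∈ Finset.Icc 1 (n + 1) := by
      simp [Nat.one_le_iff_ne_zero]
    have hcond' : ∀ᵐ ω ∂P, (P[Y (n + 1)|ℱ n]) ω ≤ c (n + 1) := by
      have := hcond (n + 1) hmem
      simpa using this
    have key := catoni_aux_pull P (ℱ.le n) hG hGnn (hint (n + 1) hmem)
      (hYnn (n + 1)) (hc (n + 1)) hcond'
    calc ∫⁻ ω, ENNReal.ofReal (∏ t ∈ Finset.Icc 1 (n + 1), Y t ω) ∂P
        = ∫⁻ ω, ENNReal.ofReal ((∏ t ∈ Finset.Icc 1 n, Y t ω) * Y (n + 1) ω) ∂P := by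
          exact lintegral_congr fun ω => by rw [hprod ω]
      _ ≤ ENNReal.ofReal (c (n + 1)) * ∫⁻ ω, ENNReal.ofReal (∏ t ∈ Finset.Icc 1 n, Y t ω) ∂P :=
          key
      _ ≤ ENNReal.ofReal (c (n + 1)) * ∏ t ∈ Finset.Icc 1 n, ENNReal.ofReal (c t) := by
          gcongr
      _ = ∏ t ∈ Finset.Icc 1 (n + 1), ENNReal.ofReal (c t) := by
          rw [Finset.prod_Icc_succ_top (Nat.one_le_iff_ne_zero.mpr (Nat.succ_ne_zero n))]
          ring


lemma catoni_aux_sign {Ω : Type*} {m0 : MeasurableSpace Ω} (P : Measure Ω)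
    [IsProbabilityMeasure P] (ℱ : Filtration ℕ m0) (n : ℕ)
    (X : ℕ → Ω → ℝ) (μt : ℕ → ℝ) (M : ℝ)
    (hAdapted : ∀ t, StronglyMeasurable[ℱ t] (X t))
    (hInt : ∀ t ∈ Finset.Icc 1 n, Integrable (X t) P)
    (hInt2 : ∀ t ∈ Finset.Icc 1 n, Integrable (fun ω => (X t ω) ^ 2) P)
    (hC1 : ∀ t ∈ Finset.Icc 1 n, P[X t|ℱ (t - 1)] =ᵐ[P] fun _ => μt t)
    (hC2 : ∀ t ∈ Finset.Icc 1 n,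
      ∀ᵐ ω ∂P, (P[fun ω => (X t ω) ^ 2|ℱ (t - 1)]) ω ≤ M)
    (ψ : ℝ → ℝ) (hψm : Measurable ψ)
    (s : ℝ) (hs : ∀ x : ℝ, Real.exp (s * ψ x) ≤ 1 + s * x + x ^ 2 / 2)
    (α : ℝ) (hα : 0 < α) (d : ℝ) (hd : 0 < d) :
    P {ω | (∑ t ∈ Finset.Icc 1 n, s * μt t) / α + n * M / (2 * α ^ 2) + Real.log d ≤
        ∑ t ∈ Finset.Icc 1 n, s * ψ (X t ω / α)} ≤ ENNReal.ofReal (1 / d) := by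
  set Y : ℕ → Ω → ℝ := fun t ω => Real.exp (s * ψ (X t ω / α)) with hY
  set c : ℕ → ℝ := fun t => Real.exp (s * μt t / α + M / (2 * α ^ 2)) with hc
  have hYadp : ∀ t, StronglyMeasurable[ℱ t] (Y t) := by
    intro t
    exact (Real.measurable_exp.comp ((measurable_const.mul
      (hψm.comp ((hAdapted t).measurable.div_const α))))).stronglyMeasurable
  have hYnn : ∀ t ω, 0 ≤ Y t ω := fun t ω => (Real.exp_pos _).le
  have hcnn : ∀ t, 0 ≤ c t := fun t => (Real.exp_pos _).le
  -- pointwise bound by B t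
  set B : ℕ → Ω → ℝ := fun t ω => 1 + (s / α) * X t ω + (1 / (2 * α ^ 2)) * (X t ω) ^ 2 with hB
  have hYB : ∀ t ω, Y t ω ≤ B t ω := by
    intro t ω
    have := hs (X t ω / α)
    have heq : 1 + s * (X t ω / α) + (X t ω / α) ^ 2 / 2 = B t ω := by
      simp only [hB]
      field_simp
    rw [hY]; dsimp only
    rw [← heq]
    exact this
  have hBint : ∀ t ∈ Finset.Icc 1 n, Integrable (B t) P := by
    intro t ht
    exact ((integrable_const (1 : ℝ)).add ((hInt t ht).const_mul (s / α))).add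
      ((hInt2 t ht).const_mul (1 / (2 * α ^ 2)))
  have hYint : ∀ t ∈ Finset.Icc 1 n, Integrable (Y t) P := by
    intro t ht
    refine (hBint t ht).mono' ((hYadp t).mono (ℱ.le t)).aestronglyMeasurable ?_
    refine Filter.Eventually.of_forall fun ω => ?_
    rw [Real.norm_eq_abs, abs_of_nonneg (hYnn t ω)]
    exact hYB t ω
  -- conditional bound
  have hcond : ∀ t ∈ Finset.Icc 1 n, ∀ᵐ ω ∂P, (P[Y t|ℱ (t - 1)]) ω ≤ c t := by
    intro t ht
    have hmono : P[Y t|ℱ (t - 1)] ≤ᵐ[P] P[B t|ℱ (t - 1)] :=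
      condExp_mono (hYint t ht) (hBint t ht)
        (Filter.Eventually.of_forall fun ω => hYB t ω)
    have hBeq : B t = (fun _ => (1 : ℝ)) + ((s / α) • X t +
        (1 / (2 * α ^ 2)) • fun ω => (X t ω) ^ 2) := by
      funext ω
      simp only [hB, Pi.add_apply, Pi.smul_apply, smul_eq_mul]
      ring
    have hcB : P[B t|ℱ (t - 1)] =ᵐ[P] fun ω => 1 + (s / α) * μt t +
        (1 / (2 * α ^ 2)) * (P[fun ω => (X t ω) ^ 2|ℱ (t - 1)]) ω := by
      rw [hBeq]
      have h1 := condExp_add (μ := P) (m := ℱ (t - 1))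
        (integrable_const (1 : ℝ))
        (((hInt t ht).smul (s / α)).add ((hInt2 t ht).smul (1 / (2 * α ^ 2))))
      have h2 := condExp_add (μ := P) (m := ℱ (t - 1))
        ((hInt t ht).smul (s / α)) ((hInt2 t ht).smul (1 / (2 * α ^ 2)))
      have h3 := condExp_smul (μ := P) (m := ℱ (t - 1)) (s / α) (X t)
      have h4 := condExp_smul (μ := P) (m := ℱ (t - 1)) (1 / (2 * α ^ 2))
        (fun ω => (X t ω) ^ 2)
      have h5 := hC1 t ht
      filter_upwards [h1, h2, h3, h4, h5] with ω e1 e2 e3 e4 e5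
      simp only [Pi.add_apply] at e1 e2 ⊢
      rw [e1, e2, condExp_const (ℱ.le (t - 1))]
      simp only [Pi.smul_apply, smul_eq_mul] at e3 e4 ⊢
      rw [e3, e4, e5]
      ring
    filter_upwards [hmono, hcB, hC2 t ht] with ω h₁ h₂ h₃
    have hstep : (P[B t|ℱ (t-1)]) ω ≤ 1 + (s / α) * μt t + (1 / (2 * α ^ 2)) * M := by
      rw [h₂]
      have h2α : 0 < 1 / (2 * α ^ 2) := by positivity
      nlinarith [h₃]
    have hexp : 1 + (s / α) * μt t + (1 / (2 * α ^ 2)) * M ≤ c t := by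
      have := Real.add_one_le_exp (s * μt t / α + M / (2 * α ^ 2))
      simp only [hc]
      have e1 : (s / α) * μt t = s * μt t / α := by ring
      have e2 : (1 / (2 * α ^ 2)) * M = M / (2 * α ^ 2) := by ring
      rw [e1, e2]
      linarith
    exact le_trans h₁ (le_trans hstep hexp)
  have hprod := catoni_aux_prod P ℱ Y c hYadp hYnn hcnn n hYint hcond
  -- rewrite the product of exponentials
  have hcard : (Finset.Icc 1 n).card = n := by
    rw [Nat.card_Icc]; omega
  have hsum : ∑ t ∈ Finset.Icc 1 n, (s * μt t / α + M / (2 * α ^ 2)) =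
      (∑ t ∈ Finset.Icc 1 n, s * μt t) / α + n * M / (2 * α ^ 2) := by
    rw [Finset.sum_add_distrib, Finset.sum_const, hcard, ← Finset.sum_div]
    push_cast
    ring
  have hprodc : ∏ t ∈ Finset.Icc 1 n, ENNReal.ofReal (c t) =
      ENNReal.ofReal (Real.exp ((∑ t ∈ Finset.Icc 1 n, s * μt t) / α +
        n * M / (2 * α ^ 2))) := by
    rw [← ENNReal.ofReal_prod_of_nonneg (fun t _ => hcnn t)]
    congr 1
    rw [← Real.exp_sum, hsum]
  -- Markov
  set b : ℝ := (∑ t ∈ Finset.Icc 1 n, s * μt t) / α + n * M / (2 * α ^ 2) + Real.log d with hb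
  have hprodY : ∀ ω, (∏ t ∈ Finset.Icc 1 n, Y t ω) =
      Real.exp (∑ t ∈ Finset.Icc 1 n, s * ψ (X t ω / α)) := by
    intro ω
    rw [Real.exp_sum]
  have hmeasf : AEMeasurable (fun ω => ENNReal.ofReal (∏ t ∈ Finset.Icc 1 n, Y t ω)) P := by
    refine Measurable.aemeasurable ?_
    refine Measurable.ennreal_ofReal ?_
    exact Finset.measurable_prod _ fun t _ => ((hYadp t).mono (ℱ.le t)).measurable
  have hsubset : {ω | b ≤ ∑ t ∈ Finset.Icc 1 n, s * ψ (X t ω / α)} ⊆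
      {ω | ENNReal.ofReal (Real.exp b) ≤
        ENNReal.ofReal (∏ t ∈ Finset.Icc 1 n, Y t ω)} := by
    intro ω hω
    rw [Set.mem_setOf_eq, hprodY ω]
    exact ENNReal.ofReal_le_ofReal (Real.exp_le_exp.mpr hω)
  have hmarkov := mul_meas_ge_le_lintegral₀ hmeasf (ENNReal.ofReal (Real.exp b))
  have hkey : ENNReal.ofReal (Real.exp b) *
      P {ω | b ≤ ∑ t ∈ Finset.Icc 1 n, s * ψ (X t ω / α)} ≤
      ENNReal.ofReal (Real.exp ((∑ t ∈ Finset.Icc 1 n, s * μt t) / α +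
        n * M / (2 * α ^ 2))) := by
    calc ENNReal.ofReal (Real.exp b) *
        P {ω | b ≤ ∑ t ∈ Finset.Icc 1 n, s * ψ (X t ω / α)}
        ≤ ENNReal.ofReal (Real.exp b) *
          P {ω | ENNReal.ofReal (Real.exp b) ≤
            ENNReal.ofReal (∏ t ∈ Finset.Icc 1 n, Y t ω)} := by
          exact mul_le_mul_right (measure_mono hsubset) _
      _ ≤ ∫⁻ ω, ENNReal.ofReal (∏ t ∈ Finset.Icc 1 n, Y t ω) ∂P := hmarkov
      _ ≤ _ := by rw [← hprodc]; exact hprod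
  have hne0 : ENNReal.ofReal (Real.exp b) ≠ 0 :=
    (ENNReal.ofReal_pos.mpr (Real.exp_pos b)).ne'
  have hnetop : ENNReal.ofReal (Real.exp b) ≠ ⊤ := ENNReal.ofReal_ne_top
  have hfinal : P {ω | b ≤ ∑ t ∈ Finset.Icc 1 n, s * ψ (X t ω / α)} ≤
      ENNReal.ofReal (Real.exp ((∑ t ∈ Finset.Icc 1 n, s * μt t) / α +
        n * M / (2 * α ^ 2))) / ENNReal.ofReal (Real.exp b) := by
    rw [ENNReal.le_div_iff_mul_le (Or.inl hne0) (Or.inl hnetop), mul_comm]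
    exact hkey
  refine le_trans hfinal ?_
  rw [← ENNReal.ofReal_div_of_pos (Real.exp_pos b)]
  apply ENNReal.ofReal_le_ofReal
  rw [← Real.exp_sub]
  have : (∑ t ∈ Finset.Icc 1 n, s * μt t) / α + n * M / (2 * α ^ 2) - b = -Real.log d := by
    rw [hb]; ring
  rw [this, Real.exp_neg, Real.exp_log hd]
  rw [one_div]

/-- **Lemma 1 (deviation bound without contamination).** Under C1 and C2, for any `α > 0`
and `δ ∈ (0,1)`, the soft-truncation estimator `μ̂ = (α/n) ∑ ψ(X_i/α)` satisfies
`|μ̂ − μ| ≤ M/(2α) + α log(2/δ)/n` with probability at least `1 − δ`. -/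
theorem catoni_uncontaminated_deviation_bound
    {Ω : Type*} {m0 : MeasurableSpace Ω} (P : Measure Ω) [IsProbabilityMeasure P]
    (ℱ : Filtration ℕ m0) (n : ℕ) (hn : 0 < n)
    (X : ℕ → Ω → ℝ) (μt : ℕ → ℝ) (M : ℝ) (hM : 0 < M)
    (hAdapted : ∀ t, StronglyMeasurable[ℱ t] (X t))
    (hInt : ∀ t ∈ Finset.Icc 1 n, Integrable (X t) P)
    (hInt2 : ∀ t ∈ Finset.Icc 1 n, Integrable (fun ω => (X t ω) ^ 2) P)
    -- C1 : conditional mean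
    (hC1 : ∀ t ∈ Finset.Icc 1 n, P[X t|ℱ (t - 1)] =ᵐ[P] fun _ => μt t)
    -- C2 : conditional second moment bound
    (hC2 : ∀ t ∈ Finset.Icc 1 n,
      ∀ᵐ ω ∂P, (P[fun ω => (X t ω) ^ 2|ℱ (t - 1)]) ω ≤ M)
    -- influence function
    (ψ : ℝ → ℝ) (hψmono : Monotone ψ)
    (hψlb : ∀ x : ℝ, -Real.log (1 - x + x ^ 2 / 2) ≤ ψ x)
    (hψub : ∀ x : ℝ, ψ x ≤ Real.log (1 + x + x ^ 2 / 2))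
    (α : ℝ) (hα : 0 < α) (δ : ℝ) (hδ : δ ∈ Set.Ioo (0 : ℝ) 1)
    (μbar : ℝ) (hμbar : μbar = (1 / n) * ∑ t ∈ Finset.Icc 1 n, μt t) :
    ENNReal.ofReal (1 - δ) ≤
      P {ω | |(α / n) * ∑ i ∈ Finset.Icc 1 n, ψ (X i ω / α) - μbar| ≤
        M / (2 * α) + α * Real.log (2 / δ) / n} := by
  obtain ⟨hδ0, hδ1⟩ := hδ
  have hψm : Measurable ψ := hψmono.measurable
  have hd : (0 : ℝ) < 2 / δ := by positivity
  have hn' : (0 : ℝ) < n := by exact_mod_cast hn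
  -- pointwise exponential bounds
  have hs1 : ∀ x : ℝ, Real.exp ((1 : ℝ) * ψ x) ≤ 1 + 1 * x + x ^ 2 / 2 := by
    intro x
    have hpos : (0 : ℝ) < 1 + x + x ^ 2 / 2 := by nlinarith [sq_nonneg (x + 1)]
    have := Real.exp_le_exp.mpr (hψub x)
    rw [Real.exp_log hpos] at this
    calc Real.exp (1 * ψ x) = Real.exp (ψ x) := by rw [one_mul]
      _ ≤ 1 + x + x ^ 2 / 2 := this
      _ = 1 + 1 * x + x ^ 2 / 2 := by ring
  have hs2 : ∀ x : ℝ, Real.exp ((-1 : ℝ) * ψ x) ≤ 1 + (-1) * x + x ^ 2 / 2 := by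
    intro x
    have hpos : (0 : ℝ) < 1 - x + x ^ 2 / 2 := by nlinarith [sq_nonneg (x - 1)]
    have h1 : -ψ x ≤ Real.log (1 - x + x ^ 2 / 2) := by linarith [hψlb x]
    have := Real.exp_le_exp.mpr h1
    rw [Real.exp_log hpos] at this
    calc Real.exp ((-1) * ψ x) = Real.exp (-ψ x) := by rw [neg_one_mul]
      _ ≤ 1 - x + x ^ 2 / 2 := this
      _ = 1 + (-1) * x + x ^ 2 / 2 := by ring
  have hA1 := catoni_aux_sign P ℱ n X μt M hAdapted hInt hInt2 hC1 hC2 ψ hψm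
    1 hs1 α hα (2 / δ) hd
  have hA2 := catoni_aux_sign P ℱ n X μt M hAdapted hInt hInt2 hC1 hC2 ψ hψm
    (-1) hs2 α hα (2 / δ) hd
  set L : ℝ := Real.log (2 / δ) with hL
  set R : ℝ := M / (2 * α) + α * L / n with hR
  set E : Set Ω := {ω | |(α / n) * ∑ i ∈ Finset.Icc 1 n, ψ (X i ω / α) - μbar| ≤ R} with hE
  set A₁ : Set Ω := {ω | (∑ t ∈ Finset.Icc 1 n, (1 : ℝ) * μt t) / α + n * M / (2 * α ^ 2) + L ≤
    ∑ t ∈ Finset.Icc 1 n, (1 : ℝ) * ψ (X t ω / α)} with hA₁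
  set A₂ : Set Ω := {ω | (∑ t ∈ Finset.Icc 1 n, (-1 : ℝ) * μt t) / α + n * M / (2 * α ^ 2) + L ≤
    ∑ t ∈ Finset.Icc 1 n, (-1 : ℝ) * ψ (X t ω / α)} with hA₂
  -- complement inclusion
  have hsub : Eᶜ ⊆ A₁ ∪ A₂ := by
    intro ω hω
    simp only [hE, Set.mem_compl_iff, Set.mem_setOf_eq, not_le] at hω
    set S : ℝ := ∑ i ∈ Finset.Icc 1 n, ψ (X i ω / α) with hS
    have habs := lt_abs.mp hω
    have hμeq : (n / α) * μbar = (∑ t ∈ Finset.Icc 1 n, μt t) / α := by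
      rw [hμbar]
      field_simp
    have hReq : (n / α) * R = n * M / (2 * α ^ 2) + L := by
      rw [hR]
      field_simp
    rcases habs with h | h
    · left
      simp only [hA₁, Set.mem_setOf_eq, one_mul]
      have h' : μbar + R < (α / n) * S := by linarith
      have hlt := mul_lt_mul_of_pos_left h' (by positivity : (0 : ℝ) < n / α)
      have heq : ((n : ℝ) / α) * ((α / n) * S) = S := by field_simp
      rw [mul_add, hμeq, hReq, heq] at hlt
      linarith
    · right
      simp only [hA₂, Set.mem_setOf_eq, neg_one_mul]
      have hsumψ : ∑ x ∈ Finset.Icc 1 n, -ψ (X x ω / α) = -S := by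
        rw [hS, Finset.sum_neg_distrib]
      have hsumμ : ∑ x ∈ Finset.Icc 1 n, -μt x = -(∑ t ∈ Finset.Icc 1 n, μt t) :=
        Finset.sum_neg_distrib _
      rw [hsumψ, hsumμ]
      have h' : (α / n) * S < μbar - R := by linarith
      have hlt := mul_lt_mul_of_pos_left h' (by positivity : (0 : ℝ) < n / α)
      have heq : ((n : ℝ) / α) * ((α / n) * S) = S := by field_simp
      rw [mul_sub, hμeq, hReq, heq] at hlt
      have hdiv : -(∑ t ∈ Finset.Icc 1 n, μt t) / α = -((∑ t ∈ Finset.Icc 1 n, μt t) / α) := by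
        ring
      rw [hdiv]
      linarith
  -- measurability of E
  have hmeasS : Measurable fun ω => |(α / n) * ∑ i ∈ Finset.Icc 1 n, ψ (X i ω / α) - μbar| := by
    apply Measurable.abs
    apply Measurable.sub_const
    apply Measurable.const_mul
    exact Finset.measurable_sum _ fun i _ => hψm.comp
      (((hAdapted i).mono (ℱ.le i)).measurable.div_const α)
  have hEmeas : MeasurableSet E := hmeasS measurableSet_Iic
  -- combine
  have hhalf : ENNReal.ofReal (1 / (2 / δ)) = ENNReal.ofReal (δ / 2) := by
    rw [one_div_div]
  have hcompl : P Eᶜ ≤ ENNReal.ofReal δ := by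
    calc P Eᶜ ≤ P (A₁ ∪ A₂) := measure_mono hsub
      _ ≤ P A₁ + P A₂ := measure_union_le _ _
      _ ≤ ENNReal.ofReal (δ / 2) + ENNReal.ofReal (δ / 2) := by
          rw [← hhalf]
          exact add_le_add hA1 hA2
      _ = ENNReal.ofReal δ := by
          rw [← ENNReal.ofReal_add (by positivity) (by positivity)]
          norm_num
  have hadd : P E + P Eᶜ = 1 := by
    rw [measure_add_measure_compl hEmeas, measure_univ]
  have h1le : 1 ≤ P E + ENNReal.ofReal δ := by
    rw [← hadd]
    exact add_le_add_right hcompl _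
  calc ENNReal.ofReal (1 - δ) = 1 - ENNReal.ofReal δ := by
        rw [ENNReal.ofReal_sub 1 hδ0.le, ENNReal.ofReal_one]
    _ ≤ P E := tsub_le_iff_right.mpr h1le
end

section
/- Let x be an index such that there is no true change point in the interval [x − w, x + w] (so the conditional mean μ_x is constant on this interval). Let the threshold be b = 2c₀·sqrt(M·η) with c₀² := 2A·(1/B + 2), B > 1, and suppose w ≥ (B/(Aη))·log(4/δ). Then the scan statistic satisfies P( S_w(x) ≤ b ) ≥ 1 − δ, i.e., with probability at least 1 − δ, |Ψ({X̃_i}_{i=x−w}^{x−1}) − Ψ({X̃_i}_{i=x+1}^{x+w})| ≤ 2c₀·sqrt(M·η). -/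
open MeasureTheory Finset

/-- One-sided Catoni-type tail bound for one window of a martingale-difference-like sequence. -/
lemma catoni_window_tail
    {Ω : Type*} {m0 : MeasurableSpace Ω} (P : Measure Ω) [IsProbabilityMeasure P]
    (ℱ : Filtration ℕ m0)
    (X : ℕ → Ω → ℝ) (μx M A α L : ℝ) (hα : 0 < α)
    (ψ : ℝ → ℝ) (hψmeas : Measurable ψ) (hψA : ∀ y : ℝ, |ψ y| ≤ A)
    (hψub : ∀ y : ℝ, ψ y ≤ Real.log (1 + y + y ^ 2 / 2))
    (j w : ℕ)
    (hAdapted : ∀ t, StronglyMeasurable[ℱ t] (X t))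
    (hInt : ∀ t ∈ Finset.Icc (j+1) (j+w), Integrable (X t) P)
    (hInt2 : ∀ t ∈ Finset.Icc (j+1) (j+w), Integrable (fun ω => (X t ω) ^ 2) P)
    (hC1 : ∀ t ∈ Finset.Icc (j+1) (j+w), P[X t|ℱ (t-1)] =ᵐ[P] fun _ => μx)
    (hC2 : ∀ t ∈ Finset.Icc (j+1) (j+w),
      ∀ᵐ ω ∂P, (P[fun ω => (X t ω) ^ 2|ℱ (t-1)]) ω ≤ M) :
    P {ω | (w : ℝ) * (μx / α + M / (2 * α ^ 2)) + L
        ≤ ∑ i ∈ Finset.Icc (j+1) (j+w), ψ (X i ω / α)}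
      ≤ ENNReal.ofReal (Real.exp (-L)) := by
  set c : ℝ := μx / α + M / (2 * α ^ 2) with hc
  -- measurability of the partial products
  have hterm_meas : ∀ t s : ℕ, t ≤ s →
      StronglyMeasurable[ℱ s] (fun ω => Real.exp (ψ (X t ω / α))) := by
    intro t s hts
    have hX : Measurable[ℱ s] (X t) := ((hAdapted t).mono (ℱ.mono hts)).measurable
    exact (Real.measurable_exp.comp (hψmeas.comp (hX.div_const α))).stronglyMeasurable
  have hprod_meas : ∀ k, StronglyMeasurable[ℱ (j+k)]
      (fun ω => ∏ t ∈ Finset.Icc (j+1) (j+k), Real.exp (ψ (X t ω / α))) := by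
    intro k
    have : Measurable[ℱ (j+k)]
        (fun ω => ∏ t ∈ Finset.Icc (j+1) (j+k), Real.exp (ψ (X t ω / α))) := by
      refine Finset.measurable_prod _ (fun t ht => ?_)
      exact (hterm_meas t (j+k) (Finset.mem_Icc.1 ht).2).measurable
    exact this.stronglyMeasurable
  have hprod_nonneg : ∀ k (ω : Ω),
      (0:ℝ) ≤ ∏ t ∈ Finset.Icc (j+1) (j+k), Real.exp (ψ (X t ω / α)) :=
    fun k ω => Finset.prod_nonneg fun t _ => (Real.exp_pos _).le
  have hprod_le : ∀ k (ω : Ω),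
      ∏ t ∈ Finset.Icc (j+1) (j+k), Real.exp (ψ (X t ω / α)) ≤ Real.exp A ^ k := by
    intro k ω
    calc ∏ t ∈ Finset.Icc (j+1) (j+k), Real.exp (ψ (X t ω / α))
        ≤ ∏ _t ∈ Finset.Icc (j+1) (j+k), Real.exp A := by
          refine Finset.prod_le_prod (fun t _ => (Real.exp_pos _).le) (fun t _ => ?_)
          exact Real.exp_le_exp.2 ((le_abs_self _).trans (hψA _))
      _ = Real.exp A ^ (Finset.Icc (j+1) (j+k)).card := Finset.prod_const _
      _ ≤ Real.exp A ^ k := by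
          have hA0 : (0:ℝ) ≤ A := le_trans (abs_nonneg _) (hψA 0)
          refine pow_le_pow_right₀ (Real.one_le_exp hA0) ?_
          simp [Nat.card_Icc]
  have hexpA1 : (1:ℝ) ≤ Real.exp A ^ (0:ℕ) := by norm_num
  have hint_prod : ∀ k, Integrable
      (fun ω => ∏ t ∈ Finset.Icc (j+1) (j+k), Real.exp (ψ (X t ω / α))) P := by
    intro k
    refine (integrable_const ((Real.exp A) ^ k)).mono'
      (((hprod_meas k).mono (ℱ.le _)).aestronglyMeasurable) ?_
    refine ae_of_all _ fun ω => ?_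
    rw [Real.norm_eq_abs, abs_of_nonneg (hprod_nonneg k ω)]
    exact hprod_le k ω
  -- the inductive integral bound
  have hZ : ∀ k, k ≤ w →
      ∫ ω, ∏ t ∈ Finset.Icc (j+1) (j+k), Real.exp (ψ (X t ω / α)) ∂P
        ≤ Real.exp ((k : ℝ) * c) := by
    intro k
    induction k with
    | zero => intro _; simp
    | succ k ih =>
      intro hk
      have hk' : k ≤ w := Nat.le_of_succ_le hk
      have ihk := ih hk'
      have htmem : j + k + 1 ∈ Finset.Icc (j+1) (j+w) := by
        rw [Finset.mem_Icc]; omega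
      have hm : ℱ (j+k) ≤ m0 := ℱ.le _
      set g : Ω → ℝ := fun ω => Real.exp (ψ (X (j+k+1) ω / α)) with hgdef
      have hgint : Integrable g P := by
        refine (integrable_const (Real.exp A)).mono'
          (((hterm_meas (j+k+1) (j+k+1) le_rfl).mono (ℱ.le _)).aestronglyMeasurable) ?_
        refine ae_of_all _ fun ω => ?_
        rw [Real.norm_eq_abs, abs_of_nonneg (Real.exp_pos _).le]
        exact Real.exp_le_exp.2 ((le_abs_self _).trans (hψA _))
      -- conditional bound on the new factor
      have hkey : P[g | ℱ (j+k)] ≤ᵐ[P] fun _ => Real.exp c := by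
        have hC1t := hC1 _ htmem
        have hC2t := hC2 _ htmem
        rw [show j + k + 1 - 1 = j + k from rfl] at hC1t hC2t
        have hXint := hInt _ htmem
        have hX2int := hInt2 _ htmem
        set G : Ω → ℝ :=
          (fun _ => (1:ℝ)) + ((1/α) • X (j+k+1) + (1/(2*α^2)) • fun ω => (X (j+k+1) ω)^2)
          with hGdef
        have hGint : Integrable G P :=
          (integrable_const 1).add ((hXint.smul _).add (hX2int.smul _))
        have hle1 : g ≤ᵐ[P] G := by
          refine ae_of_all _ fun ω => ?_
          have hy := hψub (X (j+k+1) ω / α)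
          have hpos : (0:ℝ) < 1 + X (j+k+1) ω / α + (X (j+k+1) ω / α)^2 / 2 := by
            nlinarith [sq_nonneg (X (j+k+1) ω / α + 1)]
          have hexp := Real.exp_le_exp.2 hy
          rw [Real.exp_log hpos] at hexp
          have heq : G ω = 1 + X (j+k+1) ω / α + (X (j+k+1) ω / α)^2 / 2 := by
            simp only [hGdef, Pi.add_apply, Pi.smul_apply, smul_eq_mul]
            field_simp
            ring
          rw [hgdef]
          dsimp only
          rw [heq]
          exact hexp
        have hmono := condExp_mono (m := ℱ (j+k)) hgint hGint hle1
        have he1 := condExp_add (m := ℱ (j+k)) (μ := P) (integrable_const (1:ℝ))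
          ((hXint.smul (1/α)).add (hX2int.smul (1/(2*α^2))))
        have he2 := condExp_add (m := ℱ (j+k)) (μ := P) (hXint.smul (1/α))
          (hX2int.smul (1/(2*α^2)))
        have he3 := condExp_smul (m := ℱ (j+k)) (μ := P) (1/α) (X (j+k+1))
        have he4 := condExp_smul (m := ℱ (j+k)) (μ := P) (1/(2*α^2))
          (fun ω => (X (j+k+1) ω)^2)
        have hcst := condExp_const (μ := P) hm (1:ℝ)
        filter_upwards [hmono, he1, he2, he3, he4, hC1t, hC2t] with ω h0 h1 h2 h3 h4 h5 h6
        have hG1 : (P[G|ℱ (j+k)]) ω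
            = (P[(fun _ => (1:ℝ))|ℱ (j+k)]) ω
              + (P[((1/α) • X (j+k+1) + (1/(2*α^2)) • fun ω => (X (j+k+1) ω)^2)|ℱ (j+k)]) ω := by
          rw [hGdef]; exact h1
        have hG2 := h2
        have h3' : (P[(1/α) • X (j+k+1)|ℱ (j+k)]) ω = (1/α) * (P[X (j+k+1)|ℱ (j+k)]) ω := by
          simpa [smul_eq_mul] using h3
        have h4' : (P[(1/(2*α^2)) • fun ω => (X (j+k+1) ω)^2|ℱ (j+k)]) ω
            = (1/(2*α^2)) * (P[fun ω => (X (j+k+1) ω)^2|ℱ (j+k)]) ω := by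
          simpa [smul_eq_mul] using h4
        have hconst : (P[(fun _ => (1:ℝ))|ℱ (j+k)]) ω = 1 := by rw [hcst]
        have hval : (P[G|ℱ (j+k)]) ω
            = 1 + (1/α) * μx + (1/(2*α^2)) * (P[fun ω => (X (j+k+1) ω)^2|ℱ (j+k)]) ω := by
          rw [hG1, hconst]
          rw [Pi.add_apply] at hG2
          rw [hG2, h3', h4', h5]
          ring
        have hsq : (1/(2*α^2)) * (P[fun ω => (X (j+k+1) ω)^2|ℱ (j+k)]) ω
            ≤ (1/(2*α^2)) * M := by
          have : (0:ℝ) ≤ 1/(2*α^2) := by positivity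
          exact mul_le_mul_of_nonneg_left h6 this
        have hub : (P[g|ℱ (j+k)]) ω ≤ 1 + c := by
          rw [hc]
          have : (1:ℝ) + (1/α) * μx + (1/(2*α^2)) * M = 1 + (μx / α + M / (2*α^2)) := by
            field_simp; ring
          calc (P[g|ℱ (j+k)]) ω ≤ (P[G|ℱ (j+k)]) ω := h0
            _ ≤ 1 + (1/α) * μx + (1/(2*α^2)) * M := by rw [hval]; linarith
            _ = 1 + (μx / α + M / (2*α^2)) := this
        calc (P[g|ℱ (j+k)]) ω ≤ 1 + c := hub
          _ ≤ Real.exp c := by linarith [Real.add_one_le_exp c]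
      -- splitting the product
      have hsplit : (fun ω => ∏ i ∈ Finset.Icc (j+1) (j+(k+1)), Real.exp (ψ (X i ω / α)))
          = fun ω => (∏ i ∈ Finset.Icc (j+1) (j+k), Real.exp (ψ (X i ω / α))) * g ω := by
        funext ω
        rw [show j + (k+1) = (j + k) + 1 from by omega,
          Finset.prod_Icc_succ_top (by omega : j + 1 ≤ (j + k) + 1)]
      set f : Ω → ℝ := fun ω => ∏ i ∈ Finset.Icc (j+1) (j+k), Real.exp (ψ (X i ω / α))
        with hfdef
      have hf := hprod_meas k
      have hfint := hint_prod k
      have hfg_int : Integrable (f * g) P := by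
        refine (integrable_const ((Real.exp A) ^ k * Real.exp A)).mono' ?_ ?_
        · exact ((((hf.mono (ℱ.le _))).mul
            ((hterm_meas (j+k+1) (j+k+1) le_rfl).mono (ℱ.le _)))).aestronglyMeasurable
        · refine ae_of_all _ fun ω => ?_
          rw [Pi.mul_apply, Real.norm_eq_abs,
            abs_of_nonneg (mul_nonneg (hprod_nonneg k ω) (Real.exp_pos _).le)]
          refine mul_le_mul (hprod_le k ω) ?_ (Real.exp_pos _).le (by positivity)
          exact Real.exp_le_exp.2 ((le_abs_self _).trans (hψA _))
      have hpull := condExp_mul_of_stronglyMeasurable_left (μ := P) hf hfg_int hgint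
      have hmul_int : Integrable (f * P[g|ℱ (j+k)]) P := integrable_condExp.congr hpull
      have hstep : ∫ ω, f ω * g ω ∂P ≤ Real.exp ((k:ℝ) * c) * Real.exp c := by
        have h1 : ∫ ω, f ω * g ω ∂P = ∫ ω, (P[f * g|ℱ (j+k)]) ω ∂P :=
          (integral_condExp hm).symm
        have h2 : ∫ ω, (P[f * g|ℱ (j+k)]) ω ∂P = ∫ ω, f ω * (P[g|ℱ (j+k)]) ω ∂P :=
          integral_congr_ae hpull
        have h3 : ∫ ω, f ω * (P[g|ℱ (j+k)]) ω ∂P ≤ ∫ ω, f ω * Real.exp c ∂P := by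
          refine integral_mono_ae hmul_int (hfint.mul_const _) ?_
          filter_upwards [hkey] with ω hω
          exact mul_le_mul_of_nonneg_left hω (hprod_nonneg k ω)
        have h4 : ∫ ω, f ω * Real.exp c ∂P = (∫ ω, f ω ∂P) * Real.exp c :=
          integral_mul_const _ _
        calc ∫ ω, f ω * g ω ∂P = ∫ ω, f ω * (P[g|ℱ (j+k)]) ω ∂P := by rw [h1, h2]
          _ ≤ (∫ ω, f ω ∂P) * Real.exp c := by rw [← h4]; exact h3
          _ ≤ Real.exp ((k:ℝ) * c) * Real.exp c :=
            mul_le_mul_of_nonneg_right ihk (Real.exp_pos _).le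
      calc ∫ ω, ∏ i ∈ Finset.Icc (j+1) (j+(k+1)), Real.exp (ψ (X i ω / α)) ∂P
          = ∫ ω, f ω * g ω ∂P := by rw [hsplit]
        _ ≤ Real.exp ((k:ℝ) * c) * Real.exp c := hstep
        _ = Real.exp (((k+1 : ℕ) : ℝ) * c) := by
            rw [← Real.exp_add]; congr 1; push_cast; ring
  -- Markov
  have hZw := hZ w le_rfl
  have hseteq : {ω | (w:ℝ) * c + L ≤ ∑ i ∈ Finset.Icc (j+1) (j+w), ψ (X i ω / α)}
      = {ω | Real.exp ((w:ℝ)*c + L)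
          ≤ ∏ i ∈ Finset.Icc (j+1) (j+w), Real.exp (ψ (X i ω / α))} := by
    ext ω
    simp only [Set.mem_setOf_eq, ← Real.exp_sum, Real.exp_le_exp]
  have hmark := mul_meas_ge_le_integral_of_nonneg (μ := P)
    (f := fun ω => ∏ i ∈ Finset.Icc (j+1) (j+w), Real.exp (ψ (X i ω / α)))
    (ae_of_all _ fun ω => hprod_nonneg w ω) (hint_prod w) (Real.exp ((w:ℝ)*c + L))
  have hε : (0:ℝ) < Real.exp ((w:ℝ)*c + L) := Real.exp_pos _
  have htoReal : (P {ω | (w:ℝ) * c + L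
      ≤ ∑ i ∈ Finset.Icc (j+1) (j+w), ψ (X i ω / α)}).toReal ≤ Real.exp (-L) := by
    rw [hseteq]
    have h1 : Real.exp ((w:ℝ)*c + L) * (P {ω | Real.exp ((w:ℝ)*c + L)
        ≤ ∏ i ∈ Finset.Icc (j+1) (j+w), Real.exp (ψ (X i ω / α))}).toReal
        ≤ Real.exp ((w:ℝ)*c) := le_trans hmark hZw
    have h2 : Real.exp ((w:ℝ)*c) / Real.exp ((w:ℝ)*c + L) = Real.exp (-L) := by
      rw [← Real.exp_sub]; congr 1; ring
    rw [← h2]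
    rw [le_div_iff₀ hε]
    calc (P _).toReal * Real.exp ((w:ℝ)*c + L)
        = Real.exp ((w:ℝ)*c + L) * (P _).toReal := by ring
      _ ≤ Real.exp ((w:ℝ)*c) := h1
  calc P {ω | (w:ℝ) * c + L ≤ ∑ i ∈ Finset.Icc (j+1) (j+w), ψ (X i ω / α)}
      = ENNReal.ofReal ((P {ω | (w:ℝ) * c + L
          ≤ ∑ i ∈ Finset.Icc (j+1) (j+w), ψ (X i ω / α)}).toReal) :=
        (ENNReal.ofReal_toReal (measure_ne_top P _)).symm
    _ ≤ ENNReal.ofReal (Real.exp (-L)) := ENNReal.ofReal_le_ofReal htoReal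

/-- **Lemma (no false alarm away from change points).** If there is no change point in
`[x − w, x + w]` (the conditional mean is a constant `μx` there), the threshold is
`b = 2 c₀ sqrt(Mη)` with `c₀² = 2A(1/B + 2)`, `B > 1`, and `w ≥ (B/(Aη)) log(4/δ)`, then the
scan statistic satisfies `P(S_w(x) ≤ b) ≥ 1 − δ`. -/
theorem scan_statistic_no_false_alarm
    {Ω : Type*} {m0 : MeasurableSpace Ω} (P : Measure Ω) [IsProbabilityMeasure P]
    (ℱ : Filtration ℕ m0) (n : ℕ) (hn : 0 < n)
    (X Xt : ℕ → Ω → ℝ) (μt : ℕ → ℝ) (M : ℝ) (hM : 0 < M)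
    (hAdapted : ∀ t, StronglyMeasurable[ℱ t] (X t))
    (hInt : ∀ t ∈ Finset.Icc 1 n, Integrable (X t) P)
    (hInt2 : ∀ t ∈ Finset.Icc 1 n, Integrable (fun ω => (X t ω) ^ 2) P)
    -- C1 and C2
    (hC1 : ∀ t ∈ Finset.Icc 1 n, P[X t|ℱ (t - 1)] =ᵐ[P] fun _ => μt t)
    (hC2 : ∀ t ∈ Finset.Icc 1 n,
      ∀ᵐ ω ∂P, (P[fun ω => (X t ω) ^ 2|ℱ (t - 1)]) ω ≤ M)
    -- influence function
    (ψ : ℝ → ℝ) (hψmono : Monotone ψ)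
    (hψlb : ∀ x : ℝ, -Real.log (1 - x + x ^ 2 / 2) ≤ ψ x)
    (hψub : ∀ x : ℝ, ψ x ≤ Real.log (1 + x + x ^ 2 / 2))
    (A : ℝ) (hA : 0 < A) (hψA : ∀ x : ℝ, |ψ x| ≤ A)
    -- window and contamination: within any window of length w at most ηw corruptions
    (η : ℝ) (hη : η ∈ Set.Ioo (0 : ℝ) 1) (w : ℕ) (hwpos : 0 < w)
    (hcontam : ∀ ω : Ω, ∀ i : ℕ, i + w ≤ n →
      (((Finset.Icc (i + 1) (i + w)).filter (fun t => Xt t ω ≠ X t ω)).card : ℝ) ≤ η * w)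
    -- the index x: no change point in [x − w, x + w]
    (x : ℕ) (hxl : w < x) (hxr : x + w ≤ n)
    (μx : ℝ) (hA1 : ∀ t ∈ Finset.Icc (x - w) (x + w), μt t = μx)
    -- threshold, constants, window-length condition, and scale parameter
    (δ : ℝ) (hδ : δ ∈ Set.Ioo (0 : ℝ) 1)
    (B : ℝ) (hB : 1 < B)
    (c₀ : ℝ) (hc₀pos : 0 ≤ c₀) (hc₀ : c₀ ^ 2 = 2 * A * (1 / B + 2))
    (b : ℝ) (hb : b = 2 * c₀ * Real.sqrt (M * η))
    (hw : (B / (A * η)) * Real.log (4 / δ) ≤ (w : ℝ))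
    (α : ℝ) (hα : α = Real.sqrt (M / (2 * (Real.log (4 / δ) / w + 2 * A * η)))) :
    ENNReal.ofReal (1 - δ) ≤
      P {ω | |(α / w) * ∑ i ∈ Finset.Icc (x + 1) (x + w), ψ (Xt i ω / α) -
             (α / w) * ∑ i ∈ Finset.Icc (x - w) (x - 1), ψ (Xt i ω / α)| ≤ b} := by
  obtain ⟨hδ0, hδ1⟩ := hδ
  obtain ⟨hη0, hη1⟩ := hη
  set L : ℝ := Real.log (4 / δ) with hLdef
  have hL0 : 0 < L := Real.log_pos (by rw [lt_div_iff₀ hδ0]; linarith)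
  have hW0 : (0:ℝ) < (w:ℝ) := by exact_mod_cast hwpos
  set D : ℝ := L / (w:ℝ) + 2 * A * η with hDdef
  have hD0 : 0 < D := by
    have h1 : 0 < L / (w:ℝ) := div_pos hL0 hW0
    have h2 : 0 < 2 * A * η := by positivity
    rw [hDdef]; linarith
  have hα0 : 0 < α := by rw [hα]; exact Real.sqrt_pos.2 (div_pos hM (by linarith))
  have hα2 : α ^ 2 = M / (2 * D) := by
    rw [hα]; exact Real.sq_sqrt (le_of_lt (div_pos hM (by linarith)))
  have hM2 : M = 2 * D * α ^ 2 := by rw [hα2]; field_simp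
  -- numeric bound
  have hbnn : 0 ≤ b := by rw [hb]; positivity
  have hfin : 4 * D * α ≤ b := by
    have hb2 : b ^ 2 = 8 * M * (A * η * (1/B + 2)) := by
      rw [hb, mul_pow, mul_pow, Real.sq_sqrt (by positivity : (0:ℝ) ≤ M * η), hc₀]; ring
    have hB0 : (0:ℝ) < B := by linarith
    have hDle : D ≤ A * η * (1/B + 2) := by
      have hLw : L / (w:ℝ) ≤ A * η / B := by
        rw [div_le_div_iff₀ hW0 hB0]
        have hAη : (0:ℝ) < A * η := by positivity
        rw [div_mul_eq_mul_div, div_le_iff₀ hAη] at hw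
        linarith
      rw [hDdef]
      have : A * η * (1/B + 2) = A * η / B + 2 * A * η := by field_simp
      linarith
    have hsq : (4 * D * α) ^ 2 ≤ b ^ 2 := by
      have h8 : (4 * D * α) ^ 2 = 8 * M * D := by
        rw [mul_pow, mul_pow, hα2]; field_simp; ring
      rw [h8, hb2]
      have : 8 * M * D ≤ 8 * M * (A * η * (1/B + 2)) := by
        refine mul_le_mul_of_nonneg_left hDle (by positivity)
      linarith
    calc 4 * D * α = Real.sqrt ((4 * D * α) ^ 2) := (Real.sqrt_sq (by positivity)).symm
      _ ≤ Real.sqrt (b ^ 2) := Real.sqrt_le_sqrt hsq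
      _ = b := Real.sqrt_sq hbnn
  have hnum : (α / (w:ℝ)) * (2*(2*A*(η*(w:ℝ))) + 2*((w:ℝ)*(M/(2*α^2)) + L)) ≤ b := by
    have hLHS : (α / (w:ℝ)) * (2*(2*A*(η*(w:ℝ))) + 2*((w:ℝ)*(M/(2*α^2)) + L)) = 4 * D * α := by
      rw [hM2, hDdef]
      field_simp
      ring
    rw [hLHS]; exact hfin
  -- window membership facts
  have hIccL : Finset.Icc (x - w - 1 + 1) (x - w - 1 + w) = Finset.Icc (x - w) (x - 1) := by
    congr 1 <;> omega
  have hmemRn : ∀ t ∈ Finset.Icc (x+1) (x+w), t ∈ Finset.Icc 1 n := by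
    intro t ht; rw [Finset.mem_Icc] at *; omega
  have hmemRx : ∀ t ∈ Finset.Icc (x+1) (x+w), t ∈ Finset.Icc (x-w) (x+w) := by
    intro t ht; rw [Finset.mem_Icc] at *; omega
  have hmemLn : ∀ t ∈ Finset.Icc (x-w) (x-1), t ∈ Finset.Icc 1 n := by
    intro t ht; rw [Finset.mem_Icc] at *; omega
  have hmemLx : ∀ t ∈ Finset.Icc (x-w) (x-1), t ∈ Finset.Icc (x-w) (x+w) := by
    intro t ht; rw [Finset.mem_Icc] at *; omega
  -- hypotheses for the two windows
  have hC1R : ∀ t ∈ Finset.Icc (x+1) (x+w), P[X t|ℱ (t-1)] =ᵐ[P] fun _ => μx := by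
    intro t ht
    have := hC1 t (hmemRn t ht)
    rwa [hA1 t (hmemRx t ht)] at this
  have hC1L : ∀ t ∈ Finset.Icc (x-w) (x-1), P[X t|ℱ (t-1)] =ᵐ[P] fun _ => μx := by
    intro t ht
    have := hC1 t (hmemLn t ht)
    rwa [hA1 t (hmemLx t ht)] at this
  -- the negated process and influence function
  set ψ' : ℝ → ℝ := fun y => -ψ (-y) with hψ'def
  have hψ'meas : Measurable ψ' := (hψmono.measurable.comp measurable_neg).neg
  have hψ'A : ∀ y : ℝ, |ψ' y| ≤ A := fun y => by rw [hψ'def]; simpa [abs_neg] using hψA (-y)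
  have hψ'ub : ∀ y : ℝ, ψ' y ≤ Real.log (1 + y + y ^ 2 / 2) := by
    intro y
    have h1 := hψlb (-y)
    have heq : (1:ℝ) - (-y) + (-y) ^ 2 / 2 = 1 + y + y ^ 2 / 2 := by ring
    rw [heq] at h1
    rw [hψ'def]
    simp only
    linarith
  have hAdneg : ∀ t, StronglyMeasurable[ℱ t] (fun ω => -X t ω) := fun t => (hAdapted t).neg
  have hsqneg : ∀ t : ℕ, (fun ω => (-X t ω) ^ 2) = fun ω => (X t ω) ^ 2 := by
    intro t; funext ω; ring
  have hC1neg : ∀ (t : ℕ), (P[X t|ℱ (t-1)] =ᵐ[P] fun _ => μx) →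
      P[(fun ω => -X t ω)|ℱ (t-1)] =ᵐ[P] fun _ => -μx := by
    intro t h
    have h1 : P[(fun ω => -X t ω)|ℱ (t-1)] =ᵐ[P] -(P[X t|ℱ (t-1)]) := condExp_neg (X t) _
    filter_upwards [h1, h] with ω hω1 hω2
    rw [hω1, Pi.neg_apply, hω2]
  -- the four tail bounds
  have hexpL : Real.exp (-L) = δ / 4 := by
    rw [hLdef, Real.exp_neg, Real.exp_log (by positivity), inv_div]
  have hT1 : P {ω | (w:ℝ) * (μx / α + M / (2 * α ^ 2)) + L
      ≤ ∑ i ∈ Finset.Icc (x+1) (x+w), ψ (X i ω / α)} ≤ ENNReal.ofReal (δ/4) := by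
    have h := catoni_window_tail P ℱ X μx M A α L hα0 ψ hψmono.measurable hψA hψub x w
      hAdapted (fun t ht => hInt t (hmemRn t ht)) (fun t ht => hInt2 t (hmemRn t ht))
      hC1R (fun t ht => hC2 t (hmemRn t ht))
    rwa [hexpL] at h
  have hT2 : P {ω | (w:ℝ) * (-μx / α + M / (2 * α ^ 2)) + L
      ≤ ∑ i ∈ Finset.Icc (x+1) (x+w), ψ' (-X i ω / α)} ≤ ENNReal.ofReal (δ/4) := by
    have h := catoni_window_tail P ℱ (fun t ω => -X t ω) (-μx) M A α L hα0 ψ'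
      hψ'meas hψ'A hψ'ub x w hAdneg
      (fun t ht => (hInt t (hmemRn t ht)).neg)
      (fun t ht => by rw [hsqneg t]; exact hInt2 t (hmemRn t ht))
      (fun t ht => hC1neg t (hC1R t ht))
      (fun t ht => by rw [hsqneg t]; exact hC2 t (hmemRn t ht))
    rwa [hexpL] at h
  have hT3 : P {ω | (w:ℝ) * (μx / α + M / (2 * α ^ 2)) + L
      ≤ ∑ i ∈ Finset.Icc (x-w) (x-1), ψ (X i ω / α)} ≤ ENNReal.ofReal (δ/4) := by
    have h := catoni_window_tail P ℱ X μx M A α L hα0 ψ hψmono.measurable hψA hψub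
      (x - w - 1) w hAdapted
      (fun t ht => hInt t (hmemLn t (hIccL ▸ ht)))
      (fun t ht => hInt2 t (hmemLn t (hIccL ▸ ht)))
      (fun t ht => hC1L t (hIccL ▸ ht))
      (fun t ht => hC2 t (hmemLn t (hIccL ▸ ht)))
    rw [hexpL] at h
    simpa only [hIccL] using h
  have hT4 : P {ω | (w:ℝ) * (-μx / α + M / (2 * α ^ 2)) + L
      ≤ ∑ i ∈ Finset.Icc (x-w) (x-1), ψ' (-X i ω / α)} ≤ ENNReal.ofReal (δ/4) := by
    have h := catoni_window_tail P ℱ (fun t ω => -X t ω) (-μx) M A α L hα0 ψ'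
      hψ'meas hψ'A hψ'ub (x - w - 1) w hAdneg
      (fun t ht => (hInt t (hmemLn t (hIccL ▸ ht))).neg)
      (fun t ht => by rw [hsqneg t]; exact hInt2 t (hmemLn t (hIccL ▸ ht)))
      (fun t ht => hC1neg t (hC1L t (hIccL ▸ ht)))
      (fun t ht => by rw [hsqneg t]; exact hC2 t (hmemLn t (hIccL ▸ ht)))
    rw [hexpL] at h
    simpa only [hIccL] using h
  -- names for the bad events
  set S1 : Set Ω := {ω | (w:ℝ) * (μx / α + M / (2 * α ^ 2)) + L
      ≤ ∑ i ∈ Finset.Icc (x+1) (x+w), ψ (X i ω / α)} with hS1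
  set S2 : Set Ω := {ω | (w:ℝ) * (-μx / α + M / (2 * α ^ 2)) + L
      ≤ ∑ i ∈ Finset.Icc (x+1) (x+w), ψ' (-X i ω / α)} with hS2
  set S3 : Set Ω := {ω | (w:ℝ) * (μx / α + M / (2 * α ^ 2)) + L
      ≤ ∑ i ∈ Finset.Icc (x-w) (x-1), ψ (X i ω / α)} with hS3
  set S4 : Set Ω := {ω | (w:ℝ) * (-μx / α + M / (2 * α ^ 2)) + L
      ≤ ∑ i ∈ Finset.Icc (x-w) (x-1), ψ' (-X i ω / α)} with hS4
  -- the deterministic implication on the good event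
  have hgood : ∀ ω : Ω, ω ∉ S1 → ω ∉ S2 → ω ∉ S3 → ω ∉ S4 →
      |(α / (w:ℝ)) * ∑ i ∈ Finset.Icc (x + 1) (x + w), ψ (Xt i ω / α) -
       (α / (w:ℝ)) * ∑ i ∈ Finset.Icc (x - w) (x - 1), ψ (Xt i ω / α)| ≤ b := by
    intro ω h1 h2 h3 h4
    simp only [hS1, hS2, hS3, hS4, Set.mem_setOf_eq, not_le] at h1 h2 h3 h4
    have hneg : ∀ W : Finset ℕ,
        ∑ i ∈ W, ψ' (-X i ω / α) = -∑ i ∈ W, ψ (X i ω / α) := by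
      intro W
      rw [← Finset.sum_neg_distrib]
      refine Finset.sum_congr rfl fun i _ => ?_
      rw [hψ'def]
      simp only
      rw [neg_div, neg_neg]
    rw [hneg] at h2 h4
    -- contamination bound
    have hdiff : ∀ (W : Finset ℕ),
        ((W.filter (fun t => Xt t ω ≠ X t ω)).card : ℝ) ≤ η * w →
        |∑ i ∈ W, ψ (Xt i ω / α) - ∑ i ∈ W, ψ (X i ω / α)| ≤ 2*A*(η*(w:ℝ)) := by
      intro W hcard
      rw [← Finset.sum_sub_distrib]
      calc |∑ i ∈ W, (ψ (Xt i ω / α) - ψ (X i ω / α))|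
          ≤ ∑ i ∈ W, |ψ (Xt i ω / α) - ψ (X i ω / α)| := Finset.abs_sum_le_sum_abs _ _
        _ = ∑ i ∈ W.filter (fun t => Xt t ω ≠ X t ω),
              |ψ (Xt i ω / α) - ψ (X i ω / α)| := by
            refine (Finset.sum_filter_of_ne ?_).symm
            intro i _ hfne
            by_contra hcon
            exact hfne (by rw [hcon, sub_self, abs_zero])
        _ ≤ ∑ _i ∈ W.filter (fun t => Xt t ω ≠ X t ω), (2*A) := by
            refine Finset.sum_le_sum fun i _ => ?_
            calc |ψ (Xt i ω / α) - ψ (X i ω / α)|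
                ≤ |ψ (Xt i ω / α)| + |ψ (X i ω / α)| := abs_sub _ _
              _ ≤ A + A := add_le_add (hψA _) (hψA _)
              _ = 2*A := by ring
        _ = ((W.filter (fun t => Xt t ω ≠ X t ω)).card : ℝ) * (2*A) := by
            rw [Finset.sum_const, nsmul_eq_mul]
        _ ≤ η * (w:ℝ) * (2*A) := mul_le_mul_of_nonneg_right hcard (by positivity)
        _ = 2*A*(η*(w:ℝ)) := by ring
    have hcardL : ((Finset.Icc (x-w) (x-1)).filter
        (fun t => Xt t ω ≠ X t ω)).card ≤ (η * w : ℝ) := by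
      have h := hcontam ω (x - w - 1) (by omega)
      rwa [hIccL] at h
    have hRd := hdiff _ (hcontam ω x hxr)
    have hLd := hdiff _ hcardL
    have e1 := abs_le.1 hRd
    have e2 := abs_le.1 hLd
    have hexpand : ((w:ℝ)) * (μx / α + M / (2 * α ^ 2))
        = (w:ℝ) * μx / α + (w:ℝ) * (M / (2 * α ^ 2)) := by ring
    have hexpand2 : ((w:ℝ)) * (-μx / α + M / (2 * α ^ 2))
        = -((w:ℝ) * μx / α) + (w:ℝ) * (M / (2 * α ^ 2)) := by ring
    rw [hexpand] at h1 h3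
    rw [hexpand2] at h2 h4
    rw [← mul_sub, abs_mul, abs_of_nonneg (by positivity : (0:ℝ) ≤ α / (w:ℝ))]
    set SR := ∑ i ∈ Finset.Icc (x + 1) (x + w), ψ (X i ω / α) with hSRd
    set SL := ∑ i ∈ Finset.Icc (x - w) (x - 1), ψ (X i ω / α) with hSLd
    set TR := ∑ i ∈ Finset.Icc (x + 1) (x + w), ψ (Xt i ω / α) with hTRd
    set TL := ∑ i ∈ Finset.Icc (x - w) (x - 1), ψ (Xt i ω / α) with hTLd
    set K := 2*A*(η*(w:ℝ)) with hKd
    set m2 := (w:ℝ) * (M / (2 * α ^ 2)) with hm2d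
    set wμ := (w:ℝ) * μx / α with hwμd
    have hTRL : |TR - TL| ≤ 2*K + 2*(m2 + L) := by
      rw [abs_le]
      constructor
      · linarith [e1.1, e1.2, e2.1, e2.2, h1, h2, h3, h4]
      · linarith [e1.1, e1.2, e2.1, e2.2, h1, h2, h3, h4]
    calc (α / (w:ℝ)) * |TR - TL|
        ≤ (α / (w:ℝ)) * (2*K + 2*(m2 + L)) :=
          mul_le_mul_of_nonneg_left hTRL (by positivity)
      _ ≤ b := by rw [hKd, hm2d]; exact hnum
  -- assemble the probabilities
  have hbad : P (S1 ∪ S2 ∪ S3 ∪ S4) ≤ ENNReal.ofReal δ := by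
    calc P (S1 ∪ S2 ∪ S3 ∪ S4) ≤ P (S1 ∪ S2 ∪ S3) + P S4 := measure_union_le _ _
      _ ≤ (P (S1 ∪ S2) + P S3) + P S4 := add_le_add_left (measure_union_le _ _) _
      _ ≤ ((P S1 + P S2) + P S3) + P S4 := by
          exact add_le_add_left (add_le_add_left (measure_union_le _ _) _) _
      _ ≤ ((ENNReal.ofReal (δ/4) + ENNReal.ofReal (δ/4)) + ENNReal.ofReal (δ/4))
            + ENNReal.ofReal (δ/4) := by
          exact add_le_add (add_le_add (add_le_add hT1 hT2) hT3) hT4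
      _ = ENNReal.ofReal δ := by
          rw [← ENNReal.ofReal_add (by positivity) (by positivity),
            ← ENNReal.ofReal_add (by positivity) (by positivity),
            ← ENNReal.ofReal_add (by positivity) (by positivity)]
          congr 1
          ring
  have hcover : (Set.univ : Set Ω) ⊆
      {ω | |(α / (w:ℝ)) * ∑ i ∈ Finset.Icc (x + 1) (x + w), ψ (Xt i ω / α) -
            (α / (w:ℝ)) * ∑ i ∈ Finset.Icc (x - w) (x - 1), ψ (Xt i ω / α)| ≤ b}
        ∪ (S1 ∪ S2 ∪ S3 ∪ S4) := by
    intro ω _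
    simp only [Set.mem_union]
    by_cases h1 : ω ∈ S1
    · tauto
    by_cases h2 : ω ∈ S2
    · tauto
    by_cases h3 : ω ∈ S3
    · tauto
    by_cases h4 : ω ∈ S4
    · tauto
    left
    exact hgood ω h1 h2 h3 h4
  have h1le : (1 : ENNReal) ≤
      P {ω | |(α / (w:ℝ)) * ∑ i ∈ Finset.Icc (x + 1) (x + w), ψ (Xt i ω / α) -
            (α / (w:ℝ)) * ∑ i ∈ Finset.Icc (x - w) (x - 1), ψ (Xt i ω / α)| ≤ b}
        + P (S1 ∪ S2 ∪ S3 ∪ S4) := by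
    calc (1 : ENNReal) = P Set.univ := (measure_univ (μ := P)).symm
      _ ≤ P ({ω | |(α / (w:ℝ)) * ∑ i ∈ Finset.Icc (x + 1) (x + w), ψ (Xt i ω / α) -
            (α / (w:ℝ)) * ∑ i ∈ Finset.Icc (x - w) (x - 1), ψ (Xt i ω / α)| ≤ b}
          ∪ (S1 ∪ S2 ∪ S3 ∪ S4)) := measure_mono hcover
      _ ≤ _ := measure_union_le _ _
  calc ENNReal.ofReal (1 - δ) = 1 - ENNReal.ofReal δ := by
        rw [ENNReal.ofReal_sub _ hδ0.le, ENNReal.ofReal_one]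
    _ ≤ P {ω | |(α / (w:ℝ)) * ∑ i ∈ Finset.Icc (x + 1) (x + w), ψ (Xt i ω / α) -
            (α / (w:ℝ)) * ∑ i ∈ Finset.Icc (x - w) (x - 1), ψ (Xt i ω / α)| ≤ b} := by
        rw [tsub_le_iff_right]
        exact h1le.trans (add_le_add_right hbad _)
end

section
/- Let X_t satisfy E[X_t | F_{t−1}] = μ_t and E[X_t² | F_{t−1}] ≤ M almost surely, and let ψ satisfy ψ(x) ≤ log(1 + x + x²/2) for all x ∈ ℝ. Then for any α > 0, almost surely E[ exp(ψ(X_t/α)) | F_{t−1} ] ≤ exp( μ_t/α + M/(2α²) ). -/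
open MeasureTheory

/-- **Conditional mgf upper bound.** If `E[X_t | ℱ_{t-1}] = μ_t`, `E[X_t² | ℱ_{t-1}] ≤ M` a.s.,
and `ψ(x) ≤ log(1 + x + x²/2)`, then for any `α > 0`, almost surely
`E[exp(ψ(X_t/α)) | ℱ_{t-1}] ≤ exp(μ_t/α + M/(2α²))`. -/
theorem catoni_conditional_mgf_upper_bound
    {Ω : Type*} {m0 : MeasurableSpace Ω} (P : Measure Ω) [IsProbabilityMeasure P]
    (ℱ : Filtration ℕ m0) (t : ℕ)
    (X : ℕ → Ω → ℝ) (μt : ℕ → ℝ) (M : ℝ) (hM : 0 < M)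
    (hAdapted : ∀ s, StronglyMeasurable[ℱ s] (X s))
    (hInt : Integrable (X t) P)
    (hInt2 : Integrable (fun ω => (X t ω) ^ 2) P)
    (hC1 : P[X t|ℱ (t - 1)] =ᵐ[P] fun _ => μt t)
    (hC2 : ∀ᵐ ω ∂P, (P[fun ω => (X t ω) ^ 2|ℱ (t - 1)]) ω ≤ M)
    (ψ : ℝ → ℝ) (hψmeas : Measurable ψ)
    (hψub : ∀ x : ℝ, ψ x ≤ Real.log (1 + x + x ^ 2 / 2))
    (α : ℝ) (hα : 0 < α) :
    ∀ᵐ ω ∂P, (P[fun ω => Real.exp (ψ (X t ω / α))|ℱ (t - 1)]) ω ≤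
      Real.exp (μt t / α + M / (2 * α ^ 2)) := by
  have hXm : Measurable (X t) := ((hAdapted t).mono (ℱ.le t)).measurable
  set f : Ω → ℝ := fun ω => Real.exp (ψ (X t ω / α)) with hf_def
  set g : Ω → ℝ := fun ω => 1 + X t ω / α + (X t ω) ^ 2 / (2 * α ^ 2) with hg_def
  have hpos : ∀ y : ℝ, 0 < 1 + y + y ^ 2 / 2 := by
    intro y; nlinarith [sq_nonneg (y + 1)]
  have hfg : ∀ ω, f ω ≤ g ω := by
    intro ω
    have h1 : f ω ≤ 1 + (X t ω / α) + (X t ω / α) ^ 2 / 2 := by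
      calc f ω ≤ Real.exp (Real.log (1 + X t ω / α + (X t ω / α) ^ 2 / 2)) :=
            Real.exp_le_exp.mpr (hψub _)
        _ = 1 + X t ω / α + (X t ω / α) ^ 2 / 2 := Real.exp_log (hpos _)
    have h2 : (X t ω / α) ^ 2 / 2 = (X t ω) ^ 2 / (2 * α ^ 2) := by
      rw [div_pow]; ring
    simpa [hg_def, h2] using h1
  have hg_int : Integrable g P :=
    ((integrable_const 1).add (hInt.div_const α)).add (hInt2.div_const _)
  have hf_meas : AEStronglyMeasurable f P :=
    (Real.measurable_exp.comp (hψmeas.comp (hXm.div_const α))).aestronglyMeasurable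
  have hf_int : Integrable f P := by
    refine hg_int.mono' hf_meas (Filter.Eventually.of_forall fun ω => ?_)
    rw [Real.norm_eq_abs, abs_of_pos (Real.exp_pos _)]
    exact hfg ω
  have hmono := condExp_mono (m := ℱ (t - 1)) hf_int hg_int
    (Filter.Eventually.of_forall hfg)
  -- compute condexp of g
  have hg_eq : g = (fun _ => (1 : ℝ)) + (α⁻¹ • X t) +
      ((2 * α ^ 2)⁻¹ • fun ω => (X t ω) ^ 2) := by
    funext ω
    simp [hg_def, div_eq_inv_mul, Pi.add_apply, Pi.smul_apply, smul_eq_mul]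
  have hcg : P[g|ℱ (t - 1)] =ᵐ[P]
      fun ω => 1 + α⁻¹ * μt t + (2 * α ^ 2)⁻¹ * (P[fun ω => (X t ω) ^ 2|ℱ (t - 1)]) ω := by
    rw [hg_eq]
    have h1 : P[(fun _ => (1 : ℝ)) + (α⁻¹ • X t)|ℱ (t - 1)] =ᵐ[P]
        P[(fun _ => (1 : ℝ))|ℱ (t - 1)] + P[(α⁻¹ • X t)|ℱ (t - 1)] :=
      condExp_add (integrable_const 1) (hInt.smul α⁻¹) _
    have h2 : P[(fun _ => (1 : ℝ)) + (α⁻¹ • X t) +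
        ((2 * α ^ 2)⁻¹ • fun ω => (X t ω) ^ 2)|ℱ (t - 1)] =ᵐ[P]
        P[(fun _ => (1 : ℝ)) + (α⁻¹ • X t)|ℱ (t - 1)] +
        P[((2 * α ^ 2)⁻¹ • fun ω => (X t ω) ^ 2)|ℱ (t - 1)] :=
      condExp_add ((integrable_const 1).add (hInt.smul α⁻¹)) (hInt2.smul _) _
    have h3 : P[(α⁻¹ • X t)|ℱ (t - 1)] =ᵐ[P] α⁻¹ • P[X t|ℱ (t - 1)] :=
      condExp_smul α⁻¹ (X t) _
    have h4 : P[((2 * α ^ 2)⁻¹ • fun ω => (X t ω) ^ 2)|ℱ (t - 1)] =ᵐ[P]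
        (2 * α ^ 2)⁻¹ • P[fun ω => (X t ω) ^ 2|ℱ (t - 1)] :=
      condExp_smul _ _ _
    have hc : P[(fun _ => (1 : ℝ))|ℱ (t - 1)] = fun _ => (1 : ℝ) :=
      condExp_const (ℱ.le _) 1
    filter_upwards [h1, h2, hC1, h3, h4] with ω e1 e2 e3 e5 e6
    simp only [Pi.add_apply] at e1 e2 ⊢
    rw [e2, e1, e5, e6, hc]
    simp [e3, smul_eq_mul]
  filter_upwards [hmono, hcg, hC2] with ω h1 h2 h3
  have hbound : (P[g|ℱ (t - 1)]) ω ≤ 1 + α⁻¹ * μt t + (2 * α ^ 2)⁻¹ * M := by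
    rw [h2]
    have : 0 ≤ (2 * α ^ 2)⁻¹ := by positivity
    nlinarith
  have hfinal : 1 + α⁻¹ * μt t + (2 * α ^ 2)⁻¹ * M ≤
      Real.exp (μt t / α + M / (2 * α ^ 2)) := by
    have e : μt t / α + M / (2 * α ^ 2) = α⁻¹ * μt t + (2 * α ^ 2)⁻¹ * M := by
      rw [div_eq_inv_mul, div_eq_inv_mul]
    rw [e]
    linarith [Real.add_one_le_exp (α⁻¹ * μt t + (2 * α ^ 2)⁻¹ * M)]
  exact le_trans (le_trans h1 hbound) hfinal
end

section
/- Let X_t satisfy E[X_t | F_{t−1}] = μ_t and E[X_t² | F_{t−1}] ≤ M almost surely, and let ψ satisfy −log(1 − x + x²/2) ≤ ψ(x) for all x ∈ ℝ. Then for any α > 0, almost surely E[ exp(−ψ(X_t/α)) | F_{t−1} ] ≤ exp( −μ_t/α + M/(2α²) ). -/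
open MeasureTheory

/-- **Conditional mgf lower-tail bound.** If `E[X_t | ℱ_{t-1}] = μ_t`, `E[X_t² | ℱ_{t-1}] ≤ M`
a.s., and `−log(1 − x + x²/2) ≤ ψ(x)`, then for any `α > 0`, almost surely
`E[exp(−ψ(X_t/α)) | ℱ_{t-1}] ≤ exp(−μ_t/α + M/(2α²))`. -/
theorem catoni_conditional_mgf_lower_bound
    {Ω : Type*} {m0 : MeasurableSpace Ω} (P : Measure Ω) [IsProbabilityMeasure P]
    (ℱ : Filtration ℕ m0) (t : ℕ)
    (X : ℕ → Ω → ℝ) (μt : ℕ → ℝ) (M : ℝ) (hM : 0 < M)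
    (hAdapted : ∀ s, StronglyMeasurable[ℱ s] (X s))
    (hInt : Integrable (X t) P)
    (hInt2 : Integrable (fun ω => (X t ω) ^ 2) P)
    (hC1 : P[X t|ℱ (t - 1)] =ᵐ[P] fun _ => μt t)
    (hC2 : ∀ᵐ ω ∂P, (P[fun ω => (X t ω) ^ 2|ℱ (t - 1)]) ω ≤ M)
    (ψ : ℝ → ℝ) (hψmeas : Measurable ψ)
    (hψlb : ∀ x : ℝ, -Real.log (1 - x + x ^ 2 / 2) ≤ ψ x)
    (α : ℝ) (hα : 0 < α) :
    ∀ᵐ ω ∂P, (P[fun ω => Real.exp (-ψ (X t ω / α))|ℱ (t - 1)]) ω ≤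
      Real.exp (-(μt t / α) + M / (2 * α ^ 2)) := by
  have hXmeas : Measurable (X t) := ((hAdapted t).mono (ℱ.le t)).measurable
  set f : Ω → ℝ := fun ω => Real.exp (-ψ (X t ω / α)) with hfdef
  set g : Ω → ℝ := fun ω => 1 - (1 / α) * X t ω + (1 / (2 * α ^ 2)) * (X t ω) ^ 2
    with hgdef
  -- pointwise bound f ≤ g
  have hpt : ∀ ω, f ω ≤ g ω := by
    intro ω
    set x : ℝ := X t ω / α with hx
    have hu : (0 : ℝ) < 1 - x + x ^ 2 / 2 := by nlinarith [sq_nonneg (x - 1)]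
    have hle : -ψ x ≤ Real.log (1 - x + x ^ 2 / 2) := by linarith [hψlb x]
    have : f ω ≤ 1 - x + x ^ 2 / 2 := by
      calc f ω ≤ Real.exp (Real.log (1 - x + x ^ 2 / 2)) := Real.exp_le_exp.2 hle
        _ = 1 - x + x ^ 2 / 2 := Real.exp_log hu
    have hxeq : x = X t ω / α := rfl
    have : f ω ≤ 1 - X t ω / α + (X t ω / α) ^ 2 / 2 := by rwa [hxeq] at this
    have heq : (1 : ℝ) - X t ω / α + (X t ω / α) ^ 2 / 2 = g ω := by
      simp only [hgdef]; field_simp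
    linarith [heq ▸ this]
  -- integrability
  have hgInt : Integrable g P := by
    apply Integrable.add
    · exact (integrable_const 1).sub (hInt.const_mul _)
    · exact hInt2.const_mul _
  have hfmeas : AEStronglyMeasurable f P := by
    apply Measurable.aestronglyMeasurable
    exact Real.measurable_exp.comp ((hψmeas.comp (hXmeas.div_const α)).neg)
  have hfInt : Integrable f P := by
    refine hgInt.mono' hfmeas (Filter.Eventually.of_forall fun ω => ?_)
    rw [Real.norm_eq_abs, abs_of_pos (Real.exp_pos _)]
    exact hpt ω
  -- condexp comparison
  have hmono : P[f|ℱ (t - 1)] ≤ᵐ[P] P[g|ℱ (t - 1)] :=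
    condExp_mono hfInt hgInt (Filter.Eventually.of_forall hpt)
  -- compute condexp of g
  have hgsum : g = (fun ω => 1 - (1 / α) * X t ω) + fun ω => (1 / (2 * α ^ 2)) * (X t ω) ^ 2 :=
    rfl
  have h1 : P[g|ℱ (t - 1)] =ᵐ[P]
      P[fun ω => 1 - (1 / α) * X t ω|ℱ (t - 1)] +
        P[fun ω => (1 / (2 * α ^ 2)) * (X t ω) ^ 2|ℱ (t - 1)] := by
    rw [hgsum]
    exact condExp_add ((integrable_const 1).sub (hInt.const_mul _)) (hInt2.const_mul _) (ℱ (t - 1))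
  have h2 : P[fun ω => 1 - (1 / α) * X t ω|ℱ (t - 1)] =ᵐ[P]
      fun _ => 1 - (1 / α) * μt t := by
    have hfun : (fun ω => 1 - (1 / α) * X t ω) = (fun _ : Ω => (1 : ℝ)) - (1 / α) • X t := by
      funext ω; simp [Pi.sub_apply, Pi.smul_apply, smul_eq_mul]
    rw [hfun]
    have hsub := condExp_sub (m := ℱ (t - 1)) (μ := P) (integrable_const (1 : ℝ))
      (hInt.smul (1 / α))
    refine hsub.trans ?_
    have hc : P[fun _ : Ω => (1 : ℝ)|ℱ (t - 1)] = fun _ => (1 : ℝ) :=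
      condExp_const (ℱ.le (t - 1)) 1
    have hs := condExp_smul (μ := P) (m := ℱ (t - 1)) (1 / α) (X t)
    filter_upwards [hs, hC1] with ω hb hc1
    simp only [Pi.sub_apply, hc, hb, Pi.smul_apply, smul_eq_mul, hc1]
  have h3 : P[fun ω => (1 / (2 * α ^ 2)) * (X t ω) ^ 2|ℱ (t - 1)] =ᵐ[P]
      fun ω => (1 / (2 * α ^ 2)) * (P[fun ω => (X t ω) ^ 2|ℱ (t - 1)]) ω := by
    have hfun3 : (fun ω => (1 / (2 * α ^ 2)) * (X t ω) ^ 2)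
        = (1 / (2 * α ^ 2)) • fun ω => (X t ω) ^ 2 := by
      funext ω; simp [Pi.smul_apply, smul_eq_mul]
    rw [hfun3]
    have hs := condExp_smul (μ := P) (m := ℱ (t - 1)) (1 / (2 * α ^ 2))
      (fun ω => (X t ω) ^ 2)
    refine hs.trans (Filter.Eventually.of_forall fun ω => ?_)
    simp [Pi.smul_apply, smul_eq_mul]
  filter_upwards [hmono, h1, h2, h3, hC2] with ω hmono h1 h2 h3 hC2
  have hα2 : (0 : ℝ) < 2 * α ^ 2 := by positivity
  have hgω : (P[g|ℱ (t - 1)]) ω ≤ 1 - μt t / α + M / (2 * α ^ 2) := by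
    rw [h1]
    simp only [Pi.add_apply, h2, h3]
    have hnn : (0 : ℝ) ≤ 1 / (2 * α ^ 2) := by positivity
    have hmul : (1 / (2 * α ^ 2)) * (P[fun ω => (X t ω) ^ 2|ℱ (t - 1)]) ω
        ≤ (1 / (2 * α ^ 2)) * M := mul_le_mul_of_nonneg_left hC2 hnn
    have hMeq : (1 / (2 * α ^ 2)) * M = M / (2 * α ^ 2) := by ring
    have h1a : 1 - (1 / α) * μt t = 1 - μt t / α := by ring
    linarith
  have hfinal : 1 - μt t / α + M / (2 * α ^ 2) ≤
      Real.exp (-(μt t / α) + M / (2 * α ^ 2)) := by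
    have := Real.add_one_le_exp (-(μt t / α) + M / (2 * α ^ 2))
    linarith
  linarith [hmono]
end
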